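/- arXiv:0905.1248 — 5 statements merged into one kernel-verified Lean document; each statement's English description precedes it below -/
import Mathlib

section
/- For a unary dpda in normal form with n states and m stack symbols, the sequence (m_t)_{t≥0} of modes reached at each computation step is ultimately periodic with preperiod μ and period λ satisfying μ + λ ≤ 2^{nm}. -/
/-- A move of a unary pushdown automaton in normal form: read `a` (stack
unchanged), read nothing / ε state change (stack unchanged), pop the top
symbol, or push one symbol. -/
inductive PMove (Q Γ : Type*) where
  | readA (p : Q)
  | readE (p : Q)
  | pop (p : Q)
  | push (p : Q) (B : Γ)

/-- A unary pushdown automaton in normal form over the one-letter alphabet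
`{a}`, accepting by final states. Nondeterminism is allowed (`δ` is
set-valued); determinism is the predicate `UPDA.Deterministic`. -/
structure UPDA (Q Γ : Type*) where
  start : Q
  Z0 : Γ
  final : Set Q
  δ : Q → Γ → Set (PMove Q Γ)

namespace UPDA

variable {Q Γ : Type*}

/-- Configurations are `(state, number of input symbols consumed so far, stack)`
with the stack top leftmost. One computation step. -/
inductive Step (M : UPDA Q Γ) : Q × ℕ × List Γ → Q × ℕ × List Γ → Prop
  | readA {q n A γ p} : PMove.readA p ∈ M.δ q A →
      Step M (q, n, A :: γ) (p, n + 1, A :: γ)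
  | readE {q n A γ p} : PMove.readE p ∈ M.δ q A →
      Step M (q, n, A :: γ) (p, n, A :: γ)
  | pop {q n A γ p} : PMove.pop p ∈ M.δ q A →
      Step M (q, n, A :: γ) (p, n, γ)
  | push {q n A γ p B} : PMove.push p B ∈ M.δ q A →
      Step M (q, n, A :: γ) (p, n, B :: A :: γ)

/-- Reachability in zero or more steps; `M.Reaches (q, 0, γ) (p, k, γ')` means
`(q, a^k, γ) ⊢* (p, ε, γ')` in the notation of the paper. -/
def Reaches (M : UPDA Q Γ) : Q × ℕ × List Γ → Q × ℕ × List Γ → Prop :=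
  Relation.ReflTransGen M.Step

/-- Determinism: at most one move from each mode (for a unary alphabet this is
equivalent to the usual two dpda conditions). -/
def Deterministic (M : UPDA Q Γ) : Prop :=
  ∀ q A m₁ m₂, m₁ ∈ M.δ q A → m₂ ∈ M.δ q A → m₁ = m₂

/-- Remaining normal form conditions: `Z0` is never pushed nor popped. -/
def NormalForm (M : UPDA Q Γ) : Prop :=
  (∀ q A p, PMove.push p M.Z0 ∉ M.δ q A) ∧ (∀ q p, PMove.pop p ∉ M.δ q M.Z0)

/-- Acceptance by final states: `a^n` is accepted iff some configuration with
all `n` symbols consumed and a final state is reachable. -/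
def Accepts (M : UPDA Q Γ) (n : ℕ) : Prop :=
  ∃ p γ, M.Reaches (M.start, 0, [M.Z0]) (p, n, γ) ∧ p ∈ M.final

/-- The order `≤` on modes `[qA]` of the paper. -/
def ModeLE (M : UPDA Q Γ) (x y : Q × Γ) : Prop :=
  ∃ (k h : ℕ) (α β : List Γ),
    M.Reaches (M.start, 0, [M.Z0]) (x.1, k, x.2 :: α) ∧
    M.Reaches (x.1, 0, [x.2]) (y.1, h, y.2 :: β) ∧
    ∀ (k' : ℕ) (β' : List Γ), k' < k →
      M.Reaches (M.start, 0, [M.Z0]) (y.1, k', y.2 :: β') →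
      ∃ (k'' : ℕ) (p' : Q), k' + k'' < k ∧
        M.Reaches (y.1, 0, [y.2]) (p', k'', ([] : List Γ))

/-- `c` is the (unique, by determinism) computation of `M` from the initial
configuration, followed for at least `t` steps. -/
def TraceUpTo (M : UPDA Q Γ) (c : ℕ → Q × ℕ × List Γ) (t : ℕ) : Prop :=
  c 0 = (M.start, 0, [M.Z0]) ∧ ∀ j < t, M.Step (c j) (c (j + 1))

end UPDA

/-- `ms` is the history at time `t` of the computation `c`, written
bottom-first: `ms[i]` is the mode (state, top stack symbol) of the last
configuration up to time `t` whose stack height is `i + 1`, and the length of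
`ms` is the current stack height. -/
def HistoryAt {Q Γ : Type*} (c : ℕ → Q × ℕ × List Γ) (t : ℕ)
    (ms : List (Q × Γ)) : Prop :=
  ms.length = (c t).2.2.length ∧
  ∀ i (hi : i < ms.length), ∃ j, j ≤ t ∧ (c j).2.2.length = i + 1 ∧
    (∀ j', j < j' → j' ≤ t → (c j').2.2.length ≠ i + 1) ∧
    (c j).1 = (ms.get ⟨i, hi⟩).1 ∧ (c j).2.2.head? = some (ms.get ⟨i, hi⟩).2

namespace Stmt13
open UPDA

variable {Q Γ : Type*}

def stk (c : ℕ → Q × ℕ × List Γ) (j : ℕ) : List Γ := (c j).2.2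
def hgt (c : ℕ → Q × ℕ × List Γ) (j : ℕ) : ℕ := (stk c j).length
def md (Z : Γ) (c : ℕ → Q × ℕ × List Γ) (j : ℕ) : Q × Γ :=
  ((c j).1, (stk c j).headD Z)

def applyMove (mv : PMove Q Γ) (n : ℕ) (A : Γ) (γ : List Γ) : Q × ℕ × List Γ :=
  match mv with
  | .readA p => (p, n+1, A::γ)
  | .readE p => (p, n, A::γ)
  | .pop p => (p, n, γ)
  | .push p B => (p, n, B::A::γ)


lemma cfg_shape {c : ℕ → Q × ℕ × List Γ} {j : ℕ} {γ : List Γ} (e : stk c j = γ) :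
    c j = ((c j).1, (c j).2.1, γ) := by rw [← e]; rfl

lemma step_iff {M : UPDA Q Γ} {q n A γ x} :
    M.Step (q, n, A::γ) x ↔ ∃ mv ∈ M.δ q A, x = applyMove mv n A γ := by
  constructor
  · intro h
    cases h with
    | readA h => exact ⟨_, h, rfl⟩
    | readE h => exact ⟨_, h, rfl⟩
    | pop h => exact ⟨_, h, rfl⟩
    | push h => exact ⟨_, h, rfl⟩
  · rintro ⟨mv, hmv, rfl⟩
    cases mv with
    | readA p => exact .readA hmv
    | readE p => exact .readE hmv
    | pop p => exact .pop hmv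
    | push p B => exact .push hmv

lemma step_unique {M : UPDA Q Γ} (hdet : M.Deterministic) {x y z : Q × ℕ × List Γ}
    (h1 : M.Step x y) (h2 : M.Step x z) : y = z := by
  obtain ⟨q, n, γ⟩ := x
  cases γ with
  | nil => exact absurd h1 (by intro h; cases h)
  | cons A γt =>
    rw [step_iff] at h1 h2
    obtain ⟨mv, hm, rfl⟩ := h1
    obtain ⟨mv', hm', rfl⟩ := h2
    rw [hdet q A mv mv' hm hm']

lemma trace_agree {M : UPDA Q Γ} (hdet : M.Deterministic)
    {c c' : ℕ → Q × ℕ × List Γ} {T T' : ℕ}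
    (h : M.TraceUpTo c T) (h' : M.TraceUpTo c' T') :
    ∀ j, j ≤ T → j ≤ T' → c j = c' j := by
  intro j
  induction j with
  | zero => intro _ _; rw [h.1, h'.1]
  | succ j ih =>
    intro hT hT'
    have e := ih (by omega) (by omega)
    have s1 := h.2 j (by omega)
    have s2 := h'.2 j (by omega)
    rw [e] at s1
    exact step_unique hdet s1 s2

lemma stack_bottom {M : UPDA Q Γ} (hnf : M.NormalForm)
    {c : ℕ → Q × ℕ × List Γ} {T : ℕ} (h : M.TraceUpTo c T) :
    ∀ j ≤ T, ∃ γ', stk c j = γ' ++ [M.Z0] := by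
  intro j
  induction j with
  | zero => intro _; exact ⟨[], by simp [stk, h.1]⟩
  | succ j ih =>
    intro hj
    obtain ⟨γ', hγ'⟩ := ih (by omega)
    have s := h.2 j (by omega)
    cases γ' with
    | nil =>
      have e : c j = ((c j).1, (c j).2.1, ([] : List Γ) ++ [M.Z0]) := cfg_shape hγ'
      rw [e] at s
      simp only [List.nil_append] at s
      rw [step_iff] at s
      obtain ⟨mv, hm, hx⟩ := s
      cases mv with
      | readA p => exact ⟨[], by simp [stk, hx, applyMove]⟩
      | readE p => exact ⟨[], by simp [stk, hx, applyMove]⟩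
      | pop p => exact absurd hm (hnf.2 _ _)
      | push p B => exact ⟨[B], by simp [stk, hx, applyMove]⟩
    | cons A γt =>
      have e : c j = ((c j).1, (c j).2.1, A :: γt ++ [M.Z0]) := cfg_shape hγ'
      rw [e] at s
      simp only [List.cons_append] at s
      rw [step_iff] at s
      obtain ⟨mv, hm, hx⟩ := s
      cases mv with
      | readA p => exact ⟨A :: γt, by simp [stk, hx, applyMove]⟩
      | readE p => exact ⟨A :: γt, by simp [stk, hx, applyMove]⟩
      | pop p => exact ⟨γt, by simp [stk, hx, applyMove]⟩
      | push p B => exact ⟨B :: A :: γt, by simp [stk, hx, applyMove]⟩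

lemma stk_ne_nil {M : UPDA Q Γ} (hnf : M.NormalForm)
    {c : ℕ → Q × ℕ × List Γ} {T : ℕ} (h : M.TraceUpTo c T) {j : ℕ} (hj : j ≤ T) :
    stk c j ≠ [] := by
  obtain ⟨γ', hγ'⟩ := stack_bottom hnf h j hj
  simp [hγ']

lemma hgt_pos {M : UPDA Q Γ} (hnf : M.NormalForm)
    {c : ℕ → Q × ℕ × List Γ} {T : ℕ} (h : M.TraceUpTo c T) {j : ℕ} (hj : j ≤ T) :
    1 ≤ hgt c j := by
  have := stk_ne_nil hnf h hj
  have : stk c j ≠ [] := this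
  unfold hgt
  cases e : stk c j with
  | nil => exact absurd e this
  | cons a l => simp [e]

lemma hgt_zero {M : UPDA Q Γ} {c : ℕ → Q × ℕ × List Γ} {T : ℕ}
    (h : M.TraceUpTo c T) : hgt c 0 = 1 := by
  simp [hgt, stk, h.1]

lemma hgt_step {M : UPDA Q Γ} {c : ℕ → Q × ℕ × List Γ} {T : ℕ}
    (h : M.TraceUpTo c T) {j : ℕ} (hj : j < T) :
    hgt c (j+1) ≤ hgt c j + 1 ∧ hgt c j ≤ hgt c (j+1) + 1 := by
  have s := h.2 j hj
  cases e : stk c j with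
  | nil =>
    exfalso
    have e' : c j = ((c j).1, (c j).2.1, ([] : List Γ)) := cfg_shape e
    rw [e'] at s
    cases s
  | cons A γt =>
    have e' : c j = ((c j).1, (c j).2.1, A :: γt) := cfg_shape e
    rw [e'] at s
    rw [step_iff] at s
    obtain ⟨mv, hm, hx⟩ := s
    have hj1 : stk c (j+1) = (applyMove mv (c j).2.1 A γt).2.2 := by rw [stk, hx]
    cases mv <;> simp [applyMove] at hj1 <;> simp [hgt, hj1, e] <;> omega

lemma ivt {M : UPDA Q Γ} {c : ℕ → Q × ℕ × List Γ} {T : ℕ}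
    (h : M.TraceUpTo c T) {j1 j2 ℓ : ℕ} (hj1 : j1 ≤ j2) :
    j2 ≤ T → hgt c j1 ≤ ℓ → ℓ ≤ hgt c j2 →
    ∃ j, j1 ≤ j ∧ j ≤ j2 ∧ hgt c j = ℓ := by
  induction j2, hj1 using Nat.le_induction with
  | base => exact fun _ h1 h2 => ⟨j1, le_rfl, le_rfl, le_antisymm h1 h2⟩
  | succ j2 hj12 ih =>
    intro hT h1 h2
    by_cases hc : ℓ ≤ hgt c j2
    · obtain ⟨j, a, b, d⟩ := ih (by omega) h1 hc
      exact ⟨j, a, by omega, d⟩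
    · have hs := hgt_step h (show j2 < T by omega)
      exact ⟨j2+1, by omega, le_rfl, by omega⟩

section LV

/-- last visit to level ℓ up to time t -/
def lv (c : ℕ → Q × ℕ × List Γ) (t ℓ : ℕ) : ℕ :=
  Nat.findGreatest (fun j => hgt c j = ℓ) t

/-- history entry at position i (level i+1) at time t -/
def ent (Z : Γ) (c : ℕ → Q × ℕ × List Γ) (t i : ℕ) : Q × Γ :=
  md Z c (lv c t (i+1))

variable {M : UPDA Q Γ} {c : ℕ → Q × ℕ × List Γ} {T : ℕ}

lemma lv_exists (h : M.TraceUpTo c T) {t ℓ : ℕ} (ht : t ≤ T)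
    (h1 : 1 ≤ ℓ) (h2 : ℓ ≤ hgt c t) : ∃ j, j ≤ t ∧ hgt c j = ℓ := by
  obtain ⟨j, _, hj2, hj3⟩ := ivt h (Nat.zero_le t) ht (by rw [hgt_zero h]; exact h1) h2
  exact ⟨j, hj2, hj3⟩

lemma lv_le {t ℓ : ℕ} : lv c t ℓ ≤ t := Nat.findGreatest_le t

lemma lv_spec (h : M.TraceUpTo c T) {t ℓ : ℕ} (ht : t ≤ T)
    (h1 : 1 ≤ ℓ) (h2 : ℓ ≤ hgt c t) : hgt c (lv c t ℓ) = ℓ := by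
  obtain ⟨j, hj1, hj2⟩ := lv_exists h ht h1 h2
  exact Nat.findGreatest_spec (P := fun j => hgt c j = ℓ) hj1 hj2

lemma le_lv {t ℓ j : ℕ} (hj : j ≤ t) (he : hgt c j = ℓ) : j ≤ lv c t ℓ :=
  Nat.le_findGreatest (P := fun j => hgt c j = ℓ) hj he

lemma lv_last {t ℓ j : ℕ} (hj : lv c t ℓ < j) (hjt : j ≤ t) : hgt c j ≠ ℓ :=
  Nat.findGreatest_is_greatest (P := fun j => hgt c j = ℓ) hj hjt

/-- heights stay ≥ ℓ after the last visit to level ℓ -/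
lemma hgt_ge_after_lv (h : M.TraceUpTo c T) {t ℓ : ℕ} (ht : t ≤ T)
    (h1 : 1 ≤ ℓ) (h2 : ℓ ≤ hgt c t) :
    ∀ w, lv c t ℓ ≤ w → w ≤ t → ℓ ≤ hgt c w := by
  intro w hw1 hw2
  by_contra hlt
  push_neg at hlt
  obtain ⟨j, hj1, hj2, hj3⟩ := ivt h hw2 ht (by omega) h2
  have hlv : hgt c (lv c t ℓ) = ℓ := lv_spec h ht h1 h2
  have : lv c t ℓ < j := by
    rcases Nat.lt_or_ge (lv c t ℓ) j with hc | hc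
    · exact hc
    · exfalso
      have : w ≠ lv c t ℓ := fun e => by rw [e, hlv] at hlt; omega
      have : lv c t ℓ < w := by omega
      omega
  exact lv_last this hj2 hj3

/-- lv is strictly monotone in the level -/
lemma lv_mono (h : M.TraceUpTo c T) {t ℓ ℓ' : ℕ} (ht : t ≤ T)
    (h1 : 1 ≤ ℓ) (hll : ℓ < ℓ') (h2 : ℓ' ≤ hgt c t) :
    lv c t ℓ < lv c t ℓ' := by
  have hu : hgt c (lv c t ℓ) = ℓ := lv_spec h ht h1 (by omega)
  have hu' : hgt c (lv c t ℓ') = ℓ' := lv_spec h ht (by omega) h2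
  have hne : lv c t ℓ ≠ lv c t ℓ' := fun e => by rw [e, hu'] at hu; omega
  rcases Nat.lt_or_ge (lv c t ℓ) (lv c t ℓ') with hc | hc
  · exact hc
  · exfalso
    obtain ⟨j, hj1, hj2, hj3⟩ := ivt h (lv_le (c := c) (t := t) (ℓ := ℓ)) ht (by omega) h2
    have : lv c t ℓ' < j := by
      have : j ≠ lv c t ℓ := fun e => by rw [e, hu] at hj3; omega
      omega
    exact lv_last this hj2 hj3

lemma lv_top (h : M.TraceUpTo c T) {t : ℕ} : lv c t (hgt c t) = t :=
  le_antisymm lv_le (le_lv le_rfl rfl)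

/-- stability: if level ℓ is not visited in (t1, t2], last visits agree -/
lemma lv_stable (h : M.TraceUpTo c T) {t1 t2 ℓ : ℕ} (h12 : t1 ≤ t2) (ht2 : t2 ≤ T)
    (h1 : 1 ≤ ℓ) (h2 : ℓ ≤ hgt c t1)
    (hnv : ∀ w, t1 < w → w ≤ t2 → hgt c w ≠ ℓ) :
    lv c t2 ℓ = lv c t1 ℓ := by
  have ht1 : t1 ≤ T := le_trans h12 ht2
  have hs2 : hgt c (lv c t2 ℓ) = ℓ := by
    obtain ⟨j, hj1, hj2⟩ := lv_exists h ht1 h1 h2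
    exact Nat.findGreatest_spec (P := fun j => hgt c j = ℓ) (le_trans hj1 h12) hj2
  have hle : lv c t2 ℓ ≤ t1 := by
    by_contra hgt'
    push_neg at hgt'
    exact hnv _ hgt' lv_le hs2
  apply le_antisymm
  · exact le_lv hle hs2
  · exact le_lv (le_trans lv_le h12) (lv_spec h ht1 h1 h2)

lemma ent_eq (h : M.TraceUpTo c T) {t1 t2 i : ℕ} (h12 : t1 ≤ t2) (ht2 : t2 ≤ T)
    (h2 : i + 1 ≤ hgt c t1)
    (hnv : ∀ w, t1 < w → w ≤ t2 → hgt c w ≠ i + 1) {Z : Γ} :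
    ent Z c t2 i = ent Z c t1 i := by
  unfold ent
  rw [lv_stable h h12 ht2 (by omega) h2 hnv]

end LV

section SIM

variable {M : UPDA Q Γ}

/-- simulation: runs from two configurations with the same state and the same
stack up to different (untouched) suffixes evolve identically -/
lemma sim (hdet : M.Deterministic) {c : ℕ → Q × ℕ × List Γ} {N : ℕ}
    (hst : ∀ j < N, M.Step (c j) (c (j+1)))
    {x y : ℕ} {ρ ρ' : List Γ}
    (hq : (c x).1 = (c y).1)
    {γ0 : List Γ} (hγ0 : γ0 ≠ [])
    (hx : stk c x = γ0 ++ ρ) (hy : stk c y = γ0 ++ ρ') :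
    ∀ s, x + s ≤ N → y + s ≤ N → (∀ s', s' ≤ s → ρ.length < hgt c (x + s')) →
      (c (x+s)).1 = (c (y+s)).1 ∧
      ∃ γ, γ ≠ [] ∧ stk c (x+s) = γ ++ ρ ∧ stk c (y+s) = γ ++ ρ' := by
  intro s
  induction s with
  | zero => exact fun _ _ _ => ⟨hq, γ0, hγ0, hx, hy⟩
  | succ s ih =>
    intro hxN hyN hh
    rw [show x + (s+1) = x + s + 1 by omega, show y + (s+1) = y + s + 1 by omega]
    obtain ⟨hq', γ, hγ, hx', hy'⟩ := ih (by omega) (by omega) (fun s' h' => hh s' (by omega))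
    obtain ⟨A, γt, rfl⟩ := List.exists_cons_of_ne_nil hγ
    have s1 := hst (x+s) (by omega)
    have s2 := hst (y+s) (by omega)
    rw [cfg_shape hx'] at s1
    rw [cfg_shape hy'] at s2
    simp only [List.cons_append] at s1 s2
    rw [step_iff] at s1 s2
    obtain ⟨mv1, hm1, e1⟩ := s1
    obtain ⟨mv2, hm2, e2⟩ := s2
    rw [← hq'] at hm2
    have hmm : mv1 = mv2 := hdet _ _ _ _ hm1 hm2
    subst hmm
    have hlen : ρ.length < hgt c (x + s + 1) := by
      have := hh (s+1) le_rfl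
      rw [show x + (s+1) = x + s + 1 by omega] at this
      exact this
    cases mv1 with
    | readA p =>
      exact ⟨by simp [e1, e2, applyMove], A :: γt, by simp,
        by simp [stk, e1, applyMove], by simp [stk, e2, applyMove]⟩
    | readE p =>
      exact ⟨by simp [e1, e2, applyMove], A :: γt, by simp,
        by simp [stk, e1, applyMove], by simp [stk, e2, applyMove]⟩
    | pop p =>
      have hst1 : stk c (x + s + 1) = γt ++ ρ := by simp [stk, e1, applyMove]
      have hγt : γt ≠ [] := by
        intro hnil
        rw [hgt, hst1, hnil] at hlen
        simp at hlen
      exact ⟨by simp [e1, e2, applyMove], γt, hγt, hst1,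
        by simp [stk, e2, applyMove]⟩
    | push p B =>
      exact ⟨by simp [e1, e2, applyMove], B :: A :: γt, by simp,
        by simp [stk, e1, applyMove], by simp [stk, e2, applyMove]⟩

/-- from a good pair, heights never drop below hgt u again -/
lemma height_ge (hdet : M.Deterministic) {c : ℕ → Q × ℕ × List Γ} {N : ℕ}
    (hst : ∀ j < N, M.Step (c j) (c (j+1)))
    {u v : ℕ} {Z : Γ} (huv : u < v) (hvN : v ≤ N)
    (hm : md Z c u = md Z c v)
    (hneu : stk c u ≠ []) (hnev : stk c v ≠ [])
    (hts : ∀ w, u ≤ w → w ≤ v → hgt c u ≤ hgt c w) :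
    ∀ w, u ≤ w → w ≤ N → hgt c u ≤ hgt c w := by
  obtain ⟨A, ρ, hu⟩ : ∃ A ρ, stk c u = A :: ρ := by
    cases e : stk c u with
    | nil => exact absurd e hneu
    | cons a l => exact ⟨a, l, rfl⟩
  obtain ⟨A', ρ', hv⟩ : ∃ A' ρ', stk c v = A' :: ρ' := by
    cases e : stk c v with
    | nil => exact absurd e hnev
    | cons a l => exact ⟨a, l, rfl⟩
  have hA : A' = A := by
    have h2 := congrArg Prod.snd hm
    simp only [md] at h2
    rw [hu, hv] at h2
    exact h2.symm
  rw [hA] at hv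
  have hqeq : (c u).1 = (c v).1 := by
    have h1 := congrArg Prod.fst hm
    simp only [md] at h1
    exact h1
  have hgu : hgt c u = ρ.length + 1 := by rw [hgt, hu]; rfl
  have hgv : hgt c v = ρ'.length + 1 := by rw [hgt, hv]; rfl
  intro w
  induction w using Nat.strong_induction_on with
  | _ w ih =>
    intro hw1 hw2
    by_cases hwv : w ≤ v
    · exact hts w hw1 hwv
    · push_neg at hwv
      have hsim := sim hdet hst hqeq (γ0 := [A]) (by simp)
        (by rw [hu]; rfl) (by rw [hv]; rfl) (w - v) (by omega) (by omega)
        (fun s' hs' => by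
          have h1 : hgt c u ≤ hgt c (u + s') :=
            ih (u + s') (by omega) (by omega) (by omega)
          omega)
      obtain ⟨-, γ, hγ, -, hyy⟩ := hsim
      rw [show v + (w - v) = w by omega] at hyy
      have hlw : hgt c w = γ.length + ρ'.length := by rw [hgt, hyy]; simp
      have hγl : 1 ≤ γ.length := by
        cases γ with
        | nil => exact absurd rfl hγ
        | cons a l => simp
      have hvu : hgt c u ≤ hgt c v := hts v (by omega) le_rfl
      omega

end SIM

section GoodPair

variable [DecidableEq Q] [DecidableEq Γ]

/-- the set of modes in the history at time t -/
def hset (Z : Γ) (c : ℕ → Q × ℕ × List Γ) (t : ℕ) : Finset (Q × Γ) :=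
  (Finset.range (hgt c t)).image (ent Z c t)

lemma mem_hset {Z : Γ} {c : ℕ → Q × ℕ × List Γ} {t : ℕ} {a : Q × Γ} :
    a ∈ hset Z c t ↔ ∃ i, i < hgt c t ∧ ent Z c t i = a := by
  simp [hset, Finset.mem_image, Finset.mem_range]

lemma good_pair {M : UPDA Q Γ} [Fintype Q] [Fintype Γ]
    (hdet : M.Deterministic) (hnf : M.NormalForm) {c : ℕ → Q × ℕ × List Γ} {T : ℕ}
    (h : M.TraceUpTo c T) (hT : T = 2 ^ (Fintype.card Q * Fintype.card Γ)) :
    ∃ u v, u < v ∧ v ≤ T ∧ md M.Z0 c u = md M.Z0 c v ∧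
      ∀ w, u ≤ w → w ≤ v → hgt c u ≤ hgt c w := by
  set Z := M.Z0 with hZ
  by_cases hrep : ∃ t, t ≤ T ∧ ∃ i i', i < i' ∧ i' + 1 ≤ hgt c t ∧
      ent Z c t i = ent Z c t i'
  · -- a history has a repeated mode
    obtain ⟨t, ht, i, i', hii, hi', hee⟩ := hrep
    set u := lv c t (i+1) with hu'
    set v := lv c t (i'+1) with hv'
    have hu : hgt c u = i + 1 := lv_spec h ht (by omega) (by omega)
    have huv : u < v := lv_mono h ht (by omega) (by omega) hi'
    refine ⟨u, v, huv, le_trans lv_le ht, hee, ?_⟩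
    intro w hw1 hw2
    rw [hu]
    exact hgt_ge_after_lv h ht (by omega) (by omega) w hw1 (le_trans hw2 lv_le)
  · -- all histories up to time T are repetition-free
    push_neg at hrep
    have hno : ∀ t, t ≤ T → ∀ i i', i < i' → i' + 1 ≤ hgt c t →
        ent Z c t i ≠ ent Z c t i' := fun t ht i i' h1 h2 => hrep t ht i i' h1 h2
    -- the history mode sets determine a pigeonhole
    have hcard : ∀ t, t ≤ T → (hset Z c t).card = hgt c t := by
      intro t ht
      rw [hset, Finset.card_image_of_injOn, Finset.card_range]
      intro i hi i' hi' he
      simp only [Finset.coe_range, Set.mem_Iio] at hi hi'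
      by_contra hne
      rcases Nat.lt_or_ge i i' with hlt | hge
      · exact hno t ht i i' hlt (by omega) he
      · exact hno t ht i' i (by omega) (by omega) he.symm
    obtain ⟨t1, ht1m, t2, ht2m, htne, hseq⟩ :
        ∃ t1 ∈ Finset.range (T+1), ∃ t2 ∈ Finset.range (T+1),
          t1 ≠ t2 ∧ hset Z c t1 = hset Z c t2 := by
      apply Finset.exists_ne_map_eq_of_card_lt_of_maps_to
        (t := ((Finset.univ : Finset (Q × Γ)).powerset.erase ∅))
      · have hc1 : ((Finset.univ : Finset (Q × Γ)).powerset.erase ∅).card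
            = 2 ^ (Fintype.card Q * Fintype.card Γ) - 1 := by
          rw [Finset.card_erase_of_mem (Finset.empty_mem_powerset _),
            Finset.card_powerset, Finset.card_univ, Fintype.card_prod]
        have h2K : 1 ≤ 2 ^ (Fintype.card Q * Fintype.card Γ) := Nat.one_le_two_pow
        rw [hc1, Finset.card_range]
        omega
      · intro a ha
        simp only [Finset.coe_range, Set.mem_Iio] at ha
        have haT : a ≤ T := by omega
        rw [Finset.mem_coe, Finset.mem_erase]
        constructor
        · intro he
          have h1 : 1 ≤ hgt c a := hgt_pos hnf h haT
          have : ent Z c a 0 ∈ hset Z c a := mem_hset.mpr ⟨0, by omega, rfl⟩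
          rw [he] at this
          simp at this
        · exact Finset.mem_powerset.mpr (Finset.subset_univ _)
    simp only [Finset.mem_range] at ht1m ht2m
    -- wlog t1 < t2
    obtain ⟨t1, t2, h12, ht2T, hseq⟩ :
        ∃ t1 t2, t1 < t2 ∧ t2 ≤ T ∧ hset Z c t1 = hset Z c t2 := by
      rcases lt_or_gt_of_ne htne with hc | hc
      · exact ⟨t1, t2, hc, by omega, hseq⟩
      · exact ⟨t2, t1, hc, by omega, hseq.symm⟩
    have ht1T : t1 ≤ T := by omega
    have hL : hgt c t2 = hgt c t1 := by
      rw [← hcard t1 ht1T, ← hcard t2 ht2T, hseq]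
    set ℓ := hgt c t1 with hℓ
    have hℓ1 : 1 ≤ ℓ := hgt_pos hnf h ht1T
    -- the minimum height on [t1, t2]
    obtain ⟨w0, hw0mem, hw0min⟩ := Finset.exists_min_image (Finset.Icc t1 t2) (hgt c)
      ⟨t1, Finset.mem_Icc.mpr ⟨le_rfl, le_of_lt h12⟩⟩
    rw [Finset.mem_Icc] at hw0mem
    set d := hgt c w0 with hd'
    have hdmin : ∀ w, t1 ≤ w → w ≤ t2 → d ≤ hgt c w := by
      intro w hw1 hw2
      exact hw0min w (Finset.mem_Icc.mpr ⟨hw1, hw2⟩)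
    have hd1 : 1 ≤ d := hgt_pos hnf h (by omega)
    have hdℓ : d ≤ ℓ := hdmin t1 le_rfl (by omega)
    -- prefix stability below the minimum level
    have hpre : ∀ i, i + 1 < d → ent Z c t2 i = ent Z c t1 i := by
      intro i hi
      apply ent_eq h (le_of_lt h12) ht2T (by omega)
      intro w hw1 hw2
      have := hdmin w (le_of_lt hw1) hw2
      omega
    rcases eq_or_lt_of_le hdℓ with hdeq | hdlt
    · -- min height = ℓ : modes at t1 and t2 coincide
      have htop1 : ent Z c t1 (ℓ-1) = md Z c t1 := by
        rw [ent, show ℓ - 1 + 1 = ℓ by omega, hℓ, lv_top h]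
      have htop2 : ent Z c t2 (ℓ-1) = md Z c t2 := by
        rw [ent, show ℓ - 1 + 1 = ℓ by omega, show ℓ = hgt c t2 from by omega, lv_top h]
      have hmem : ent Z c t1 (ℓ-1) ∈ hset Z c t2 := by
        rw [← hseq]
        exact mem_hset.mpr ⟨ℓ-1, by omega, rfl⟩
      obtain ⟨i, hi, hie⟩ := mem_hset.mp hmem
      have hieq : i = ℓ - 1 := by
        by_contra hne
        have hilt : i + 1 < ℓ := by omega
        rw [hpre i (by omega)] at hie
        exact hno t1 ht1T i (ℓ-1) (by omega) (by omega) hie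
      refine ⟨t1, t2, h12, ht2T, ?_, ?_⟩
      · rw [← htop1, ← htop2, ← hie, hieq]
      · intro w hw1 hw2
        rw [← hℓ, ← hdeq]
        exact hdmin w hw1 hw2
    · -- min height < ℓ
      set u := lv c t1 d with hu'
      set v := lv c t2 d with hv'
      have hu : hgt c u = d := lv_spec h ht1T hd1 hdℓ
      have hv : hgt c v = d := lv_spec h ht2T hd1 (by omega)
      have hut1 : u ≤ t1 := lv_le
      have hvt2 : v ≤ t2 := lv_le
      have ht1v : t1 < v := by
        have hwv : w0 ≤ v := le_lv hw0mem.2 rfl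
        have : v ≠ t1 := fun he => by rw [he] at hv; omega
        omega
      have hent1 : ent Z c t1 (d-1) = md Z c u := by
        rw [ent, show d - 1 + 1 = d by omega]
      have hent2 : ent Z c t2 (d-1) = md Z c v := by
        rw [ent, show d - 1 + 1 = d by omega]
      have heightsLow : ∀ w, u ≤ w → w ≤ t2 → d ≤ hgt c w := by
        intro w hw1 hw2
        rcases le_or_gt w t1 with hc | hc
        · exact hgt_ge_after_lv h ht1T hd1 hdℓ w hw1 hc
        · exact hdmin w (le_of_lt hc) hw2
      by_cases hmd : md Z c u = md Z c v
      · refine ⟨u, v, by omega, by omega, hmd, ?_⟩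
        intro w hw1 hw2
        rw [hu]
        exact heightsLow w hw1 (by omega)
      · -- the mode of u must occur higher up in the history at t2
        have hmem : ent Z c t1 (d-1) ∈ hset Z c t2 := by
          rw [← hseq]
          exact mem_hset.mpr ⟨d-1, by omega, rfl⟩
        obtain ⟨i, hi, hie⟩ := mem_hset.mp hmem
        have hid : d ≤ i := by
          rcases Nat.lt_or_ge i (d-1) with hc | hc
          · exfalso
            rw [hpre i (by omega)] at hie
            exact hno t1 ht1T i (d-1) hc (by omega) hie
          · rcases Nat.eq_or_lt_of_le hc with hc' | hc'
            · exfalso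
              rw [← hc'] at hie
              rw [hent1, hent2] at hie
              exact hmd hie.symm
            · omega
        set w' := lv c t2 (i+1) with hw''
        have hw'h : hgt c w' = i + 1 := lv_spec h ht2T (by omega) (by omega)
        have hw't2 : w' ≤ t2 := lv_le
        have hmdw : md Z c w' = md Z c u := by
          rw [← hent1, ← hie, ent]
        have huw' : u < w' := by
          by_contra hc
          push_neg at hc
          obtain ⟨j, hj1, hj2, hj3⟩ := ivt (ℓ := i+1) h (show u ≤ t2 by omega) ht2T
            (by rw [hu]; omega) (by omega)
          have hjne : j ≠ u := fun he => by rw [he, hu] at hj3; omega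
          exact lv_last (show w' < j by omega) hj2 hj3
        refine ⟨u, w', huw', by omega, hmdw.symm, ?_⟩
        intro w hw1 hw2
        rw [hu]
        exact heightsLow w hw1 (by omega)

end GoodPair

lemma mode_eq_of_good_pair {M : UPDA Q Γ} (hdet : M.Deterministic) (hnf : M.NormalForm)
    {c : ℕ → Q × ℕ × List Γ} {N u v t : ℕ} (h : M.TraceUpTo c N)
    (huv : u < v) (hvN : v ≤ N) (hut : u ≤ t) (htN : t + (v - u) ≤ N)
    (hmd : md M.Z0 c u = md M.Z0 c v)
    (hts : ∀ w, u ≤ w → w ≤ v → hgt c u ≤ hgt c w) :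
    (c t).1 = (c (t + (v-u))).1 ∧ (stk c t).head? = (stk c (t + (v-u))).head? := by
  have hneu : stk c u ≠ [] := stk_ne_nil hnf h (by omega)
  have hnev : stk c v ≠ [] := stk_ne_nil hnf h (by omega)
  obtain ⟨A, ρ, hu⟩ : ∃ A ρ, stk c u = A :: ρ := by
    cases e : stk c u with
    | nil => exact absurd e hneu
    | cons a l => exact ⟨a, l, rfl⟩
  obtain ⟨A', ρ', hv⟩ : ∃ A' ρ', stk c v = A' :: ρ' := by
    cases e : stk c v with
    | nil => exact absurd e hnev
    | cons a l => exact ⟨a, l, rfl⟩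
  have hA : A' = A := by
    have h2 := congrArg Prod.snd hmd
    simp only [md] at h2
    rw [hu, hv] at h2
    exact h2.symm
  rw [hA] at hv
  have hqeq : (c u).1 = (c v).1 := by
    have h1 := congrArg Prod.fst hmd
    simp only [md] at h1
    exact h1
  have hgu : hgt c u = ρ.length + 1 := by rw [hgt, hu]; rfl
  have hh := height_ge hdet h.2 huv hvN hmd hneu hnev hts
  have hsim := sim hdet h.2 hqeq (γ0 := [A]) (by simp)
    (by rw [hu]; rfl) (by rw [hv]; rfl) (t - u) (by omega) (by omega)
    (fun s' hs' => by
      have := hh (u + s') (by omega) (by omega)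
      omega)
  obtain ⟨hq, γ, hγ, hxx, hyy⟩ := hsim
  rw [show u + (t - u) = t by omega] at hq hxx
  rw [show v + (t - u) = t + (v - u) by omega] at hq hyy
  refine ⟨hq, ?_⟩
  rw [hxx, hyy]
  obtain ⟨a, γ', rfl⟩ := List.exists_cons_of_ne_nil hγ
  simp

end Stmt13

/-- for a unary dpda in normal form with `n` states and `m` stack
symbols, the sequence `(m_t)` of modes (state, top stack symbol) reached at each
step of the computation is ultimately periodic with `μ + λ ≤ 2^{nm}`. -/
theorem stmt_13 {Q Γ : Type*} [Fintype Q] [Fintype Γ] (M : UPDA Q Γ)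
    (hdet : M.Deterministic) (hnf : M.NormalForm) (n m : ℕ)
    (hn : Fintype.card Q = n) (hm : Fintype.card Γ = m) :
    ∃ μ lam : ℕ, 1 ≤ lam ∧ μ + lam ≤ 2 ^ (n * m) ∧
      ∀ t, μ ≤ t → ∀ c, M.TraceUpTo c (t + lam) →
        (c t).1 = (c (t + lam)).1 ∧
        (c t).2.2.head? = (c (t + lam)).2.2.head? := by
  classical
  subst hn; subst hm
  have h2K : 1 ≤ 2 ^ (Fintype.card Q * Fintype.card Γ) := Nat.one_le_two_pow
  by_cases hc0 : ∃ c0 : ℕ → Q × ℕ × List Γ,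
      M.TraceUpTo c0 (2 ^ (Fintype.card Q * Fintype.card Γ))
  · obtain ⟨c0, h0⟩ := hc0
    obtain ⟨u, v, huv, hvT, hmd, hhts⟩ := Stmt13.good_pair hdet hnf h0 rfl
    refine ⟨u, v - u, by omega, by omega, ?_⟩
    intro t ht c hcT
    have hagree : ∀ j, j ≤ 2 ^ (Fintype.card Q * Fintype.card Γ) → j ≤ t + (v - u) →
        c0 j = c j := Stmt13.trace_agree hdet h0 hcT
    have e_u : c0 u = c u := hagree u (by omega) (by omega)
    have e_v : c0 v = c v := hagree v (by omega) (by omega)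
    have hmdc : Stmt13.md M.Z0 c u = Stmt13.md M.Z0 c v := by
      unfold Stmt13.md Stmt13.stk at hmd ⊢
      rw [← e_u, ← e_v]
      exact hmd
    have hts_c : ∀ w, u ≤ w → w ≤ v → Stmt13.hgt c u ≤ Stmt13.hgt c w := by
      intro w h1 h2
      have ew : c0 w = c w := hagree w (by omega) (by omega)
      unfold Stmt13.hgt Stmt13.stk
      rw [← ew, ← e_u]
      exact hhts w h1 h2
    exact Stmt13.mode_eq_of_good_pair hdet hnf hcT huv (by omega) ht (by omega)
      hmdc hts_c
  · refine ⟨2 ^ (Fintype.card Q * Fintype.card Γ) - 1, 1, le_rfl, by omega, ?_⟩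
    intro t ht c hcT
    exfalso
    apply hc0
    exact ⟨c, hcT.1, fun j hj => hcT.2 j (by omega)⟩
end

section
/- Every unary language accepted by a deterministic pushdown automaton in normal form with n states and m stack symbols is accepted by a one-way deterministic finite automaton with at most 2^{nm} states. -/
section PartA
open UPDA
variable {Q Γ : Type*}

theorem UPDA.step_src_ne {M : UPDA Q Γ} {c c'} (h : M.Step c c') : c.2.2 ≠ [] := by
  cases h <;> simp

theorem UPDA.step_unique {M : UPDA Q Γ} (hdet : M.Deterministic) {c c₁ c₂}
    (h₁ : M.Step c c₁) (h₂ : M.Step c c₂) : c₁ = c₂ := by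
  cases h₁ with
  | readA hm₁ =>
    cases h₂ with
    | readA hm₂ => cases hdet _ _ _ _ hm₁ hm₂; rfl
    | readE hm₂ => cases hdet _ _ _ _ hm₁ hm₂
    | pop hm₂ => cases hdet _ _ _ _ hm₁ hm₂
    | push hm₂ => cases hdet _ _ _ _ hm₁ hm₂
  | readE hm₁ =>
    cases h₂ with
    | readA hm₂ => cases hdet _ _ _ _ hm₁ hm₂
    | readE hm₂ => cases hdet _ _ _ _ hm₁ hm₂; rfl
    | pop hm₂ => cases hdet _ _ _ _ hm₁ hm₂
    | push hm₂ => cases hdet _ _ _ _ hm₁ hm₂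
  | pop hm₁ =>
    cases h₂ with
    | readA hm₂ => cases hdet _ _ _ _ hm₁ hm₂
    | readE hm₂ => cases hdet _ _ _ _ hm₁ hm₂
    | pop hm₂ => cases hdet _ _ _ _ hm₁ hm₂; rfl
    | push hm₂ => cases hdet _ _ _ _ hm₁ hm₂
  | push hm₁ =>
    cases h₂ with
    | readA hm₂ => cases hdet _ _ _ _ hm₁ hm₂
    | readE hm₂ => cases hdet _ _ _ _ hm₁ hm₂
    | pop hm₂ => cases hdet _ _ _ _ hm₁ hm₂
    | push hm₂ => cases hdet _ _ _ _ hm₁ hm₂; rfl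

theorem UPDA.steppable_iff {M : UPDA Q Γ} {c} :
    (∃ d, M.Step c d) ↔ ∃ A γ, c.2.2 = A :: γ ∧ ∃ mv, mv ∈ M.δ c.1 A := by
  constructor
  · rintro ⟨d, h⟩
    cases h with
    | readA hm => exact ⟨_, _, rfl, _, hm⟩
    | readE hm => exact ⟨_, _, rfl, _, hm⟩
    | pop hm => exact ⟨_, _, rfl, _, hm⟩
    | push hm => exact ⟨_, _, rfl, _, hm⟩
  · rintro ⟨A, γ, hs, mv, hm⟩
    obtain ⟨q, n, σ⟩ := c
    simp only at hs; subst hs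
    cases mv with
    | readA p => exact ⟨(p, n + 1, A :: γ), Step.readA hm⟩
    | readE p => exact ⟨(p, n, A :: γ), Step.readE hm⟩
    | pop p => exact ⟨(p, n, γ), Step.pop hm⟩
    | push p B => exact ⟨(p, n, B :: A :: γ), Step.push hm⟩

noncomputable def UPDA.stepFn (M : UPDA Q Γ) (c : Q × ℕ × List Γ) : Option (Q × ℕ × List Γ) :=
  letI := Classical.propDecidable (∃ c', M.Step c c')
  if h : ∃ c', M.Step c c' then some (Classical.choose h) else none

theorem UPDA.stepFn_eq_none_iff {M : UPDA Q Γ} {c} :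
    M.stepFn c = none ↔ ¬ ∃ d, M.Step c d := by
  unfold UPDA.stepFn; split <;> simp_all

theorem UPDA.stepFn_spec {M : UPDA Q Γ} {c d} (h : M.stepFn c = some d) : M.Step c d := by
  unfold UPDA.stepFn at h
  split at h
  · cases h; exact Classical.choose_spec ‹_›
  · cases h

theorem UPDA.stepFn_eq_some {M : UPDA Q Γ} (hdet : M.Deterministic) {c d}
    (h : M.Step c d) : M.stepFn c = some d := by
  unfold UPDA.stepFn
  split
  · exact congrArg some (step_unique hdet (Classical.choose_spec ‹_›) h)
  · exact absurd (⟨d, h⟩ : ∃ c', M.Step c c') ‹_›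

noncomputable def UPDA.runFrom (M : UPDA Q Γ) (c : Q × ℕ × List Γ) : ℕ → Option (Q × ℕ × List Γ)
  | 0 => some c
  | s + 1 => (M.runFrom c s).bind M.stepFn

@[simp] theorem UPDA.runFrom_zero {M : UPDA Q Γ} {c} : M.runFrom c 0 = some c := rfl

theorem UPDA.runFrom_succ {M : UPDA Q Γ} {c s} :
    M.runFrom c (s + 1) = (M.runFrom c s).bind M.stepFn := rfl

theorem UPDA.runFrom_add {M : UPDA Q Γ} {c} (a b : ℕ) :
    M.runFrom c (a + b) = (M.runFrom c a).bind (fun d => M.runFrom d b) := by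
  induction b with
  | zero => cases h : M.runFrom c a <;> simp [h]
  | succ b ih =>
    rw [← Nat.add_assoc, runFrom_succ, ih, Option.bind_assoc]
    simp only [runFrom_succ]

theorem UPDA.runFrom_mono {M : UPDA Q Γ} {c d s₂} (h : M.runFrom c s₂ = some d)
    {s₁} (hle : s₁ ≤ s₂) : ∃ d', M.runFrom c s₁ = some d' := by
  obtain ⟨k, rfl⟩ := Nat.exists_eq_add_of_le hle
  rw [runFrom_add] at h
  cases e : M.runFrom c s₁ with
  | none => rw [e] at h; simp at h
  | some d' => exact ⟨d', rfl⟩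

theorem UPDA.runFrom_succ_elim {M : UPDA Q Γ} {c d s} (h : M.runFrom c (s+1) = some d) :
    ∃ mid, M.runFrom c s = some mid ∧ M.stepFn mid = some d := by
  rw [runFrom_succ] at h
  cases e : M.runFrom c s with
  | none => rw [e] at h; simp at h
  | some mid => rw [e] at h; exact ⟨mid, rfl, h⟩

theorem UPDA.reaches_iff {M : UPDA Q Γ} (hdet : M.Deterministic) {c d} :
    M.Reaches c d ↔ ∃ s, M.runFrom c s = some d := by
  constructor
  · intro h
    induction h with
    | refl => exact ⟨0, rfl⟩
    | tail _ hstep ih =>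
      obtain ⟨s, hs⟩ := ih
      exact ⟨s + 1, by rw [runFrom_succ, hs, Option.bind_some, stepFn_eq_some hdet hstep]⟩
  · rintro ⟨s, hs⟩
    induction s generalizing d with
    | zero => cases hs; exact Relation.ReflTransGen.refl
    | succ s ih =>
      obtain ⟨mid, h₁, h₂⟩ := runFrom_succ_elim hs
      exact Relation.ReflTransGen.tail (ih h₁) (stepFn_spec h₂)

def UPDA.shiftC (k : ℕ) (c : Q × ℕ × List Γ) : Q × ℕ × List Γ := (c.1, c.2.1 + k, c.2.2)

def UPDA.appendS (γ : List Γ) (c : Q × ℕ × List Γ) : Q × ℕ × List Γ := (c.1, c.2.1, c.2.2 ++ γ)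

theorem UPDA.step_shiftC {M : UPDA Q Γ} {c c'} (k : ℕ) (h : M.Step c c') :
    M.Step (shiftC k c) (shiftC k c') := by
  cases h with
  | readA hm =>
    show M.Step (_, _ + k, _) (_, _ + 1 + k, _)
    rw [Nat.add_right_comm]
    exact .readA hm
  | readE hm => exact .readE hm
  | pop hm => exact .pop hm
  | push hm => exact .push hm

theorem UPDA.step_appendS {M : UPDA Q Γ} {c c'} (γ : List Γ) (h : M.Step c c') :
    M.Step (appendS γ c) (appendS γ c') := by
  cases h with
  | readA hm => exact .readA hm
  | readE hm => exact .readE hm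
  | pop hm => exact .pop hm
  | push hm => exact .push hm

theorem UPDA.stepFn_shiftC {M : UPDA Q Γ} (hdet : M.Deterministic) (k : ℕ) (c) :
    M.stepFn (shiftC k c) = (M.stepFn c).map (shiftC k) := by
  cases e : M.stepFn c with
  | some d => rw [Option.map_some, stepFn_eq_some hdet (step_shiftC k (stepFn_spec e))]
  | none =>
    rw [Option.map_none, stepFn_eq_none_iff]
    rw [stepFn_eq_none_iff] at e
    intro hex
    exact e (steppable_iff.mpr (by simpa [shiftC] using steppable_iff.mp hex))

theorem UPDA.runFrom_shiftC {M : UPDA Q Γ} (hdet : M.Deterministic) (k : ℕ) (c) (s : ℕ) :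
    M.runFrom (shiftC k c) s = (M.runFrom c s).map (shiftC k) := by
  induction s with
  | zero => rfl
  | succ s ih =>
    rw [runFrom_succ, runFrom_succ, ih]
    cases M.runFrom c s with
    | none => rfl
    | some d => simp [stepFn_shiftC hdet]

theorem UPDA.stepFn_appendS {M : UPDA Q Γ} (hdet : M.Deterministic) (γ : List Γ) {c}
    (hne : c.2.2 ≠ []) :
    M.stepFn (appendS γ c) = (M.stepFn c).map (appendS γ) := by
  cases e : M.stepFn c with
  | some d => rw [Option.map_some, stepFn_eq_some hdet (step_appendS γ (stepFn_spec e))]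
  | none =>
    rw [Option.map_none, stepFn_eq_none_iff]
    rw [stepFn_eq_none_iff] at e
    intro hex
    obtain ⟨A, γ', hs, mv, hm⟩ := steppable_iff.mp hex
    obtain ⟨A', γ'', hs'⟩ := List.exists_cons_of_ne_nil hne
    refine e (steppable_iff.mpr ⟨A', γ'', hs', mv, ?_⟩)
    have : c.2.2 ++ γ = A :: γ' := hs
    rw [hs'] at this
    simp only [List.cons_append, List.cons.injEq] at this
    rwa [this.1]

theorem UPDA.runFrom_appendS {M : UPDA Q Γ} (hdet : M.Deterministic) (γ : List Γ) {c d s}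
    (h : M.runFrom c s = some d) :
    M.runFrom (appendS γ c) s = some (appendS γ d) := by
  induction s generalizing d with
  | zero => cases h; rfl
  | succ s ih =>
    obtain ⟨mid, h₁, h₂⟩ := runFrom_succ_elim h
    rw [runFrom_succ, ih h₁, Option.bind_some,
      stepFn_appendS hdet γ (step_src_ne (stepFn_spec h₂)), h₂, Option.map_some]

theorem UPDA.step_proj {M : UPDA Q Γ} {γ : List Γ} {m₀ d} (hne : m₀.2.2 ≠ [])
    (h : M.Step (appendS γ m₀) d) : ∃ d₀, M.Step m₀ d₀ ∧ d = appendS γ d₀ := by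
  obtain ⟨q, n, σ⟩ := m₀
  obtain ⟨A, σ', rfl⟩ := List.exists_cons_of_ne_nil hne
  cases h with
  | readA hm => exact ⟨(_, n + 1, A :: σ'), .readA hm, rfl⟩
  | readE hm => exact ⟨(_, n, A :: σ'), .readE hm, rfl⟩
  | pop hm => exact ⟨(_, n, σ'), .pop hm, rfl⟩
  | push hm => exact ⟨(_, n, _ :: A :: σ'), .push hm, rfl⟩

theorem UPDA.runFrom_proj {M : UPDA Q Γ} (hdet : M.Deterministic) {γ : List Γ} {c₀ d s}
    (h : M.runFrom (appendS γ c₀) s = some d)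
    (hb : ∀ r e, r ≤ s → M.runFrom (appendS γ c₀) r = some e → γ.length < e.2.2.length) :
    ∃ d₀, M.runFrom c₀ s = some d₀ ∧ d = appendS γ d₀ := by
  induction s generalizing d with
  | zero => cases h; exact ⟨c₀, rfl, rfl⟩
  | succ s ih =>
    obtain ⟨mid, h₁, h₂⟩ := runFrom_succ_elim h
    obtain ⟨m₀, hr₀, rfl⟩ := ih h₁ (fun r e hr he => hb r e (Nat.le_succ_of_le hr) he)
    have hne : m₀.2.2 ≠ [] := by
      have := hb s _ (Nat.le_succ s) h₁
      simp only [appendS, List.length_append] at this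
      intro hnil; rw [hnil] at this; simp at this
    obtain ⟨d₀, hstep, rfl⟩ := step_proj hne (stepFn_spec h₂)
    exact ⟨d₀, by rw [runFrom_succ, hr₀, Option.bind_some, stepFn_eq_some hdet hstep], rfl⟩

theorem UPDA.step_counter {M : UPDA Q Γ} {c c'} (h : M.Step c c') :
    c'.2.1 = c.2.1 ∨ c'.2.1 = c.2.1 + 1 := by
  cases h <;> simp

theorem UPDA.step_len {M : UPDA Q Γ} {c c'} (h : M.Step c c') :
    c'.2.2.length + 1 = c.2.2.length ∨ c'.2.2.length = c.2.2.length ∨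
      c'.2.2.length = c.2.2.length + 1 := by
  cases h <;> simp

theorem UPDA.step_bottom {M : UPDA Q Γ} (hnf : M.NormalForm) {c c'} (h : M.Step c c')
    (hb : ∃ σ, c.2.2 = σ ++ [M.Z0]) : ∃ σ', c'.2.2 = σ' ++ [M.Z0] := by
  obtain ⟨σ, hσ⟩ := hb
  cases h with
  | readA hm => exact ⟨σ, hσ⟩
  | readE hm => exact ⟨σ, hσ⟩
  | pop hm =>
    rename_i q n A γ p
    cases σ with
    | nil =>
      simp only [List.nil_append, List.cons.injEq] at hσ
      obtain ⟨rfl, -⟩ := hσ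
      exact absurd hm (hnf.2 q p)
    | cons B σ' =>
      simp only [List.cons_append, List.cons.injEq] at hσ
      exact ⟨σ', hσ.2⟩
  | push hm =>
    rename_i q n A γ p B
    exact ⟨B :: σ, by simp only [List.cons_append, List.cons.injEq, true_and]; exact hσ⟩

end PartA
section PartB
open UPDA
variable {Q Γ : Type*}

/-- generic walk lemmas on ℕ-sequences -/
theorem walk_down (f : ℕ → ℕ) {a b h : ℕ} (hab : a ≤ b)
    (hstep : ∀ s, a ≤ s → s < b → f s ≤ f (s + 1) + 1)
    (ha : h ≤ f a) (hb : f b ≤ h) : ∃ s, a ≤ s ∧ s ≤ b ∧ f s = h := by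
  by_contra hc
  push_neg at hc
  have key : ∀ d, a + d ≤ b → h < f (a + d) := by
    intro d
    induction d with
    | zero =>
      intro _
      exact lt_of_le_of_ne (by simpa using ha) (fun e => hc a le_rfl hab (by simpa using e.symm))
    | succ d ih =>
      intro hd
      rw [← Nat.add_assoc]
      have h1 : a + d ≤ b := by omega
      have h2 := ih h1
      have h3 := hstep (a + d) (Nat.le_add_right a d) (by omega)
      have h4 : f (a + d + 1) ≠ h := hc _ (by omega) (by omega)
      omega
  obtain ⟨d, rfl⟩ := Nat.exists_eq_add_of_le hab
  have := key d le_rfl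
  omega

theorem walk_up (f : ℕ → ℕ) {a b h : ℕ} (hab : a ≤ b)
    (hstep : ∀ s, a ≤ s → s < b → f (s + 1) ≤ f s + 1)
    (ha : f a ≤ h) (hb : h ≤ f b) : ∃ s, a ≤ s ∧ s ≤ b ∧ f s = h := by
  by_contra hc
  push_neg at hc
  have key : ∀ d, a + d ≤ b → f (a + d) < h := by
    intro d
    induction d with
    | zero =>
      intro _
      exact lt_of_le_of_ne (by simpa using ha) (fun e => hc a le_rfl hab (by simpa using e))
    | succ d ih =>
      intro hd
      rw [← Nat.add_assoc]
      have h1 : a + d ≤ b := by omega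
      have h2 := ih h1
      have h3 := hstep (a + d) (Nat.le_add_right a d) (by omega)
      have h4 : f (a + d + 1) ≠ h := hc _ (by omega) (by omega)
      omega
  obtain ⟨d, rfl⟩ := Nat.exists_eq_add_of_le hab
  have := key d le_rfl
  omega

variable (M : UPDA Q Γ)

noncomputable def UPDA.SRun (x : Q × Γ) : ℕ → Option (Q × ℕ × List Γ) :=
  M.runFrom (x.1, 0, [x.2])

theorem UPDA.SRun_zero {x : Q × Γ} : M.SRun x 0 = some (x.1, 0, [x.2]) := rfl

theorem UPDA.SRun_add {x : Q × Γ} (a b : ℕ) :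
    M.SRun x (a + b) = (M.SRun x a).bind (fun d => M.runFrom d b) :=
  runFrom_add a b

theorem UPDA.cfg_decomp (p : Q) (n : ℕ) (A : Γ) (rest : List Γ) :
    shiftC n (appendS rest (p, 0, [A])) = (p, n, A :: rest) := by
  simp [shiftC, appendS]

theorem UPDA.runFrom_shift_append (hdet : M.Deterministic) (k : ℕ) (γ : List Γ)
    {c d : Q × ℕ × List Γ} {s : ℕ} (h : M.runFrom c s = some d) :
    M.runFrom (shiftC k (appendS γ c)) s = some (shiftC k (appendS γ d)) := by
  rw [runFrom_shiftC hdet, runFrom_appendS hdet γ h, Option.map_some]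

def UPDA.Ev (x : Q × Γ) : Set ℕ :=
  {d | ∃ s c, M.SRun x s = some c ∧ c.2.1 = d ∧ c.1 ∈ M.final}

def UPDA.Mortal (x : Q × Γ) : Prop := ∃ s c, M.SRun x s = some c ∧ c.2.2 = []

theorem UPDA.stepFn_empty {c : Q × ℕ × List Γ} (h : c.2.2 = []) : M.stepFn c = none :=
  stepFn_eq_none_iff.mpr (by rintro ⟨d, hstep⟩; exact step_src_ne hstep h)

theorem UPDA.halt_of_empty {c : Q × ℕ × List Γ} (h : c.2.2 = []) :
    ∀ r, 0 < r → M.runFrom c r = none := by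
  intro r hr
  induction r with
  | zero => omega
  | succ r ih =>
    rcases Nat.eq_zero_or_pos r with rfl | hr'
    · rw [runFrom_succ, runFrom_zero, Option.bind_some, stepFn_empty M h]
    · rw [runFrom_succ, ih hr', Option.bind_none]

noncomputable def UPDA.mT (x : Q × Γ) : ℕ :=
  letI := Classical.propDecidable (M.Mortal x)
  if h : M.Mortal x then h.choose else 0

noncomputable def UPDA.mC (x : Q × Γ) : Q × ℕ × List Γ :=
  letI := Classical.propDecidable (M.Mortal x)
  if h : M.Mortal x then h.choose_spec.choose else (x.1, 0, [])

theorem UPDA.mSpec {x : Q × Γ} (h : M.Mortal x) :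
    M.SRun x (M.mT x) = some (M.mC x) ∧ (M.mC x).2.2 = [] := by
  unfold UPDA.mT UPDA.mC
  rw [dif_pos h, dif_pos h]
  exact h.choose_spec.choose_spec

theorem UPDA.mortal_unique {x : Q × Γ} (hx : M.Mortal x) {s c}
    (h : M.SRun x s = some c) (he : c.2.2 = []) : s = M.mT x ∧ c = M.mC x := by
  obtain ⟨hw, hstk⟩ := M.mSpec hx
  rcases le_total s (M.mT x) with hle | hle
  · obtain ⟨k, hk⟩ := Nat.exists_eq_add_of_le hle
    rw [hk, M.SRun_add, h, Option.bind_some] at hw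
    rcases Nat.eq_zero_or_pos k with rfl | hkpos
    · rw [runFrom_zero] at hw; cases hw; exact ⟨by omega, rfl⟩
    · rw [M.halt_of_empty he k hkpos] at hw; cases hw
  · obtain ⟨k, hk⟩ := Nat.exists_eq_add_of_le hle
    rw [hk, M.SRun_add, hw, Option.bind_some] at h
    rcases Nat.eq_zero_or_pos k with rfl | hkpos
    · rw [runFrom_zero] at h; cases h; exact ⟨by omega, rfl⟩
    · rw [M.halt_of_empty hstk k hkpos] at h; cases h

noncomputable def UPDA.F : List Γ → Q → Set ℕ
  | [], p => {d | d = 0 ∧ p ∈ M.final}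
  | A :: rest, p =>
    M.Ev (p, A) ∪
      {d | M.Mortal (p, A) ∧ ∃ d' ∈ UPDA.F rest (M.mC (p, A)).1, d = (M.mC (p, A)).2.1 + d'}

noncomputable def UPDA.chain : List Γ → Q → Option Q
  | [], p => some p
  | A :: rest, p =>
    letI := Classical.propDecidable (M.Mortal (p, A))
    if M.Mortal (p, A) then UPDA.chain rest (M.mC (p, A)).1 else none

theorem UPDA.F_stable : ∀ (π : List Γ) (p : Q), M.chain π p = none →
    ∀ ρ ρ', M.F (π ++ ρ) p = M.F (π ++ ρ') p := by
  intro π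
  induction π with
  | nil => intro p h; simp [chain] at h
  | cons A rest ih =>
    intro p h ρ ρ'
    by_cases hm : M.Mortal (p, A)
    · rw [show M.chain (A :: rest) p = M.chain rest (M.mC (p, A)).1 from by
        simp only [chain]; rw [if_pos hm]] at h
      have heq := ih _ h ρ ρ'
      simp only [List.cons_append, F, List.append_eq, heq]
    · simp only [List.cons_append, F]
      ext d
      simp only [Set.mem_union, Set.mem_setOf_eq, hm, false_and, or_false]

theorem UPDA.runFrom_counter_le {c d : Q × ℕ × List Γ} {s : ℕ}
    (h : M.runFrom c s = some d) : c.2.1 ≤ d.2.1 := by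
  induction s generalizing d with
  | zero => cases h; exact le_rfl
  | succ s ih =>
    obtain ⟨mid, h₁, h₂⟩ := runFrom_succ_elim h
    have := step_counter (stepFn_spec h₂)
    have := ih h₁
    omega

theorem UPDA.runFrom_notMortal_map (hdet : M.Deterministic) {p : Q} {A : Γ}
    (hm : ¬ M.Mortal (p, A)) (rest : List Γ) (n : ℕ) (s : ℕ) :
    M.runFrom (p, n, A :: rest) s
      = (M.SRun (p, A) s).map (fun c => shiftC n (appendS rest c)) := by
  induction s with
  | zero => simp [SRun_zero, shiftC, appendS]
  | succ s ih =>
    rw [runFrom_succ, ih, show M.SRun (p, A) (s + 1) = (M.SRun (p, A) s).bind M.stepFn from rfl]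
    cases e : M.SRun (p, A) s with
    | none => simp
    | some cs =>
      have hne : cs.2.2 ≠ [] := fun hnil => hm ⟨s, cs, e, hnil⟩
      simp only [Option.map_some, Option.bind_some]
      rw [stepFn_shiftC hdet, stepFn_appendS hdet rest hne, Option.map_map]
      rfl

theorem UPDA.FE (hdet : M.Deterministic) :
    ∀ (σ : List Γ) (p : Q) (n : ℕ),
      {d | ∃ s c, M.runFrom (p, n, σ) s = some c ∧ c.2.1 = n + d ∧ c.1 ∈ M.final}
        = M.F σ p := by
  intro σ
  induction σ with
  | nil =>
    intro p n; ext d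
    simp only [F, Set.mem_setOf_eq]
    constructor
    · rintro ⟨s, c, hrun, hcnt, hfin⟩
      rcases Nat.eq_zero_or_pos s with rfl | hs
      · rw [runFrom_zero] at hrun; cases hrun
        simp only at hcnt
        exact ⟨by omega, hfin⟩
      · rw [M.halt_of_empty rfl s hs] at hrun; cases hrun
    · rintro ⟨rfl, hfin⟩
      exact ⟨0, (p, n, []), rfl, by simp, hfin⟩
  | cons A rest ih =>
    intro p n; ext d
    by_cases hm : M.Mortal (p, A)
    case neg =>
      have hmap := M.runFrom_notMortal_map hdet hm rest n
      simp only [F, Set.mem_union, Set.mem_setOf_eq, hm, false_and, or_false, Ev,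
        Set.mem_setOf_eq]
      constructor
      · rintro ⟨s, c, hrun, hcnt, hfin⟩
        rw [hmap s] at hrun
        cases e : M.SRun (p, A) s with
        | none => rw [e] at hrun; cases hrun
        | some cs =>
          rw [e, Option.map_some] at hrun
          cases hrun
          refine ⟨s, cs, e, ?_, hfin⟩
          simp only [shiftC, appendS] at hcnt
          omega
      · rintro ⟨s, cs, he, hcnt, hfin⟩
        refine ⟨s, shiftC n (appendS rest cs), by rw [hmap s, he, Option.map_some], ?_, hfin⟩
        simp only [shiftC, appendS]
        omega
    case pos =>
      obtain ⟨hw, hstk⟩ := M.mSpec hm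
      have hreach : M.runFrom (p, n, A :: rest) (M.mT (p, A))
          = some ((M.mC (p, A)).1, n + (M.mC (p, A)).2.1, rest) := by
        have h2 := M.runFrom_shift_append hdet n rest hw
        rw [cfg_decomp] at h2
        rw [h2]
        simp [shiftC, appendS, hstk, Nat.add_comm]
      constructor
      · rintro ⟨s, c, hrun, hcnt, hfin⟩
        rcases le_or_gt s (M.mT (p, A)) with hsw | hws
        · obtain ⟨cs, hcs⟩ := runFrom_mono hw hsw
          have hcomp := M.runFrom_shift_append hdet n rest hcs
          rw [cfg_decomp] at hcomp
          rw [hcomp] at hrun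
          cases hrun
          refine Or.inl ⟨s, cs, hcs, ?_, hfin⟩
          simp only [shiftC, appendS] at hcnt ⊢
          omega
        · have hs : s = M.mT (p, A) + (s - M.mT (p, A)) := by omega
          rw [hs, runFrom_add, hreach, Option.bind_some] at hrun
          have hcle := M.runFrom_counter_le hrun
          simp only at hcle
          refine Or.inr ⟨hm, d - (M.mC (p, A)).2.1, ?_, by omega⟩
          rw [← ih (M.mC (p, A)).1 (n + (M.mC (p, A)).2.1)]
          exact ⟨s - M.mT (p, A), c, hrun, by omega, hfin⟩
      · rintro (⟨s, cs, he, hcnt, hfin⟩ | ⟨-, d', hd', rfl⟩)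
        · refine ⟨s, shiftC n (appendS rest cs), ?_, ?_, hfin⟩
          · have hcomp := M.runFrom_shift_append hdet n rest he
            rw [cfg_decomp] at hcomp
            rw [hcomp]
          · simp only [shiftC, appendS]
            omega
        · rw [← ih (M.mC (p, A)).1 (n + (M.mC (p, A)).2.1)] at hd'
          obtain ⟨j, c, hrunj, hcnt', hfin⟩ := hd'
          refine ⟨M.mT (p, A) + j, c, ?_, by omega, hfin⟩
          rw [runFrom_add, hreach, Option.bind_some]
          exact hrunj

theorem UPDA.chain_descend (hdet : M.Deterministic) :
    ∀ (π : List Γ) (p pe : Q), M.chain π p = some pe → ∀ (n : ℕ) (ρ : List Γ),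
      ∃ s n', M.runFrom (p, n, π ++ ρ) s = some (pe, n', ρ) := by
  intro π
  induction π with
  | nil =>
    intro p pe h n ρ
    simp only [chain, Option.some.injEq] at h
    exact ⟨0, n, by rw [List.nil_append, runFrom_zero, h]⟩
  | cons A rest ih =>
    intro p pe h n ρ
    by_cases hm : M.Mortal (p, A)
    case neg =>
      rw [show M.chain (A :: rest) p = none from by
        simp only [chain]; rw [if_neg hm]] at h
      cases h
    case pos =>
      rw [show M.chain (A :: rest) p = M.chain rest (M.mC (p, A)).1 from by
        simp only [chain]; rw [if_pos hm]] at h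
      obtain ⟨hw, hstk⟩ := M.mSpec hm
      obtain ⟨s', n', hrun'⟩ := ih _ pe h (n + (M.mC (p, A)).2.1) ρ
      refine ⟨M.mT (p, A) + s', n', ?_⟩
      rw [List.cons_append, runFrom_add]
      have h2 := M.runFrom_shift_append hdet n (rest ++ ρ) hw
      rw [cfg_decomp] at h2
      rw [h2]
      simp only [Option.bind_some, shiftC, appendS, hstk, List.nil_append]
      rw [Nat.add_comm (M.mC (p, A)).2.1 n]
      exact hrun'

theorem UPDA.pump (hdet : M.Deterministic) {x : Q × Γ} {W D : ℕ} {τ : List Γ}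
    (hW : 0 < W) (hτ : τ ≠ [])
    (hself : M.SRun x W = some (x.1, D, x.2 :: τ))
    (hh : ∀ r c, 0 < r → r ≤ W → M.SRun x r = some c → 2 ≤ c.2.2.length) :
    ∀ s c, 0 < s → M.SRun x s = some c → 2 ≤ c.2.2.length := by
  have claim : ∀ i, ∃ d τi, τi.length = i * τ.length ∧
      M.SRun x (i * W) = some (x.1, d, x.2 :: τi) := by
    intro i
    induction i with
    | zero => exact ⟨0, [], by simp, by rw [Nat.zero_mul]; exact M.SRun_zero⟩
    | succ i ih =>
      obtain ⟨d, τi, hlen, hrun⟩ := ih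
      refine ⟨D + d, τ ++ τi, by simp [hlen]; ring, ?_⟩
      rw [show (i + 1) * W = i * W + W by ring, M.SRun_add, hrun, Option.bind_some]
      have h2 := M.runFrom_shift_append hdet d τi hself
      rw [cfg_decomp] at h2
      show M.runFrom (x.1, d, x.2 :: τi) W = _
      rw [h2]
      simp [shiftC, appendS, Nat.add_comm]
  intro s c hs hrun
  set i := (s - 1) / W with hi
  have hdm := Nat.div_add_mod (s - 1) W
  have hmlt : (s - 1) % W < W := Nat.mod_lt _ hW
  set P := W * i with hP
  set m := (s - 1) % W with hm
  have hsplit : s = i * W + (m + 1) := by rw [Nat.mul_comm]; omega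
  obtain ⟨d, τi, hlen, hruni⟩ := claim i
  rw [hsplit, M.SRun_add, hruni, Option.bind_some] at hrun
  have hrle : m + 1 ≤ W := by omega
  obtain ⟨cs, hcs⟩ := runFrom_mono hself hrle
  have h2 := M.runFrom_shift_append hdet d τi hcs
  rw [cfg_decomp] at h2
  rw [show M.runFrom (x.1, d, x.2 :: τi) (m+1) = _ from h2] at hrun
  cases hrun
  have := hh (m + 1) cs (by omega) hrle hcs
  simp only [shiftC, appendS, List.length_append]
  omega

def UPDA.SA (x y : Q × Γ) : Prop :=
  ∃ w c, 0 < w ∧ M.SRun x w = some c ∧ c.1 = y.1 ∧ c.2.2.head? = some y.2 ∧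
    2 ≤ c.2.2.length ∧
    ∀ r c', 0 < r → r ≤ w → M.SRun x r = some c' → 2 ≤ c'.2.2.length

def UPDA.HasRet (x : Q × Γ) : Prop :=
  ∃ w c, 0 < w ∧ M.SRun x w = some c ∧ c.2.2.length = 1

def UPDA.Rrel (x y : Q × Γ) : Prop := M.SA x y ∧ M.HasRet x

theorem UPDA.Rrel_antisym (hdet : M.Deterministic) {x y : Q × Γ}
    (h1 : M.Rrel x y) (h2 : M.Rrel y x) : False := by
  obtain ⟨⟨w1, c1, hw1, hr1, hst1, hhd1, hln1, hh1⟩, wret, cret, hwret, hrret, hlret⟩ := h1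
  obtain ⟨⟨w2, c2, hw2, hr2, hst2, hhd2, hln2, hh2⟩, -⟩ := h2
  obtain ⟨q1, d1, σ1⟩ := c1
  obtain ⟨q2, d2, σ2⟩ := c2
  simp only at hst1 hst2 hhd1 hhd2 hln1 hln2
  subst hst1; subst hst2
  cases σ1 with
  | nil => simp at hhd1
  | cons B1 τ1 =>
  cases σ2 with
  | nil => simp at hhd2
  | cons B2 τ2 =>
  simp only [List.head?_cons, Option.some.injEq] at hhd1 hhd2
  subst hhd1; subst hhd2
  have hτ1 : τ1 ≠ [] := by simp at hln1; intro hn; rw [hn] at hln1; simp at hln1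
  -- self-reach
  have hself : M.SRun x (w1 + w2) = some (x.1, d2 + d1, x.2 :: (τ2 ++ τ1)) := by
    rw [M.SRun_add, hr1, Option.bind_some]
    have h2c := M.runFrom_shift_append hdet d1 τ1 hr2
    rw [cfg_decomp] at h2c
    show M.runFrom (y.1, d1, y.2 :: τ1) w2 = _
    rw [h2c]
    simp [shiftC, appendS]
  have hhc : ∀ r c, 0 < r → r ≤ w1 + w2 → M.SRun x r = some c → 2 ≤ c.2.2.length := by
    intro r c hr hrle hrun
    rcases le_or_gt r w1 with h | h
    · exact hh1 r c hr h hrun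
    · have hr' : r = w1 + (r - w1) := by omega
      obtain ⟨cs, hcs⟩ := runFrom_mono hr2 (show r - w1 ≤ w2 by omega)
      rw [hr', M.SRun_add, hr1, Option.bind_some] at hrun
      have h2c := M.runFrom_shift_append hdet d1 τ1 hcs
      rw [cfg_decomp] at h2c
      rw [show M.runFrom (y.1, d1, y.2 :: τ1) (r - w1) = _ from h2c] at hrun
      cases hrun
      have := hh2 (r - w1) cs (by omega) (by omega) hcs
      simp only [shiftC, appendS, List.length_append]
      omega
  have hpump := M.pump hdet (by omega) (show τ2 ++ τ1 ≠ [] by simp [hτ1]) hself hhc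
  have := hpump wret cret hwret hrret
  omega

end PartB
section PartC1
open UPDA
variable {Q Γ : Type*} (M : UPDA Q Γ)

noncomputable def UPDA.run : ℕ → Option (Q × ℕ × List Γ) :=
  M.runFrom (M.start, 0, [M.Z0])

theorem UPDA.run_zero : M.run 0 = some (M.start, 0, [M.Z0]) := rfl

theorem UPDA.run_add (a b : ℕ) :
    M.run (a + b) = (M.run a).bind (fun d => M.runFrom d b) := runFrom_add a b

theorem UPDA.accepts_iff (hdet : M.Deterministic) (v : ℕ) :
    M.Accepts v ↔ ∃ s c, M.run s = some c ∧ c.2.1 = v ∧ c.1 ∈ M.final := by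
  constructor
  · rintro ⟨p, γ, hr, hf⟩
    obtain ⟨s, hs⟩ := (reaches_iff hdet).mp hr
    exact ⟨s, (p, v, γ), hs, rfl, hf⟩
  · rintro ⟨s, c, hs, hv, hf⟩
    obtain ⟨p, n, γ⟩ := c
    simp only at hv hf
    subst hv
    exact ⟨p, γ, (reaches_iff hdet).mpr ⟨s, hs⟩, hf⟩

theorem UPDA.run_bottom (hnf : M.NormalForm) {s c} (h : M.run s = some c) :
    ∃ σ, c.2.2 = σ ++ [M.Z0] := by
  induction s generalizing c with
  | zero => rw [run_zero] at h; cases h; exact ⟨[], rfl⟩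
  | succ s ih =>
    obtain ⟨mid, h₁, h₂⟩ := runFrom_succ_elim h
    exact step_bottom hnf (stepFn_spec h₂) (ih h₁)

theorem UPDA.run_stack_ne (hnf : M.NormalForm) {s c} (h : M.run s = some c) :
    c.2.2 ≠ [] := by
  obtain ⟨σ, hσ⟩ := M.run_bottom hnf h
  simp [hσ]

noncomputable def UPDA.hgt (s : ℕ) : ℕ := ((M.run s).map (fun c => c.2.2.length)).getD 0
noncomputable def UPDA.cnt (s : ℕ) : ℕ := ((M.run s).map (fun c => c.2.1)).getD 0
noncomputable def UPDA.modeAt (s : ℕ) : Q × Γ :=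
  (((M.run s).map (fun c => c.1)).getD M.start,
    ((M.run s).bind (fun c => c.2.2.head?)).getD M.Z0)

theorem UPDA.hgt_eq {s c} (h : M.run s = some c) : M.hgt s = c.2.2.length := by
  simp [hgt, h]

theorem UPDA.cnt_eq {s c} (h : M.run s = some c) : M.cnt s = c.2.1 := by
  simp [cnt, h]

theorem UPDA.modeAt_eq {s q n A γ} (h : M.run s = some (q, n, A :: γ)) :
    M.modeAt s = (q, A) := by
  simp [modeAt, h]

theorem UPDA.dfnd_of_hgt_pos {s} (h : 1 ≤ M.hgt s) : ∃ c, M.run s = some c := by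
  cases e : M.run s with
  | none => rw [hgt, e] at h; simp at h
  | some c => exact ⟨c, rfl⟩

theorem UPDA.run_mono {s₂ c} (h : M.run s₂ = some c) {s₁} (hle : s₁ ≤ s₂) :
    ∃ c', M.run s₁ = some c' := runFrom_mono h hle

theorem UPDA.hgt_zero : M.hgt 0 = 1 := by rw [M.hgt_eq M.run_zero]; rfl

theorem UPDA.hgt_pos (hnf : M.NormalForm) {s c} (h : M.run s = some c) : 1 ≤ M.hgt s := by
  rw [M.hgt_eq h]
  have := M.run_stack_ne hnf h
  cases e : c.2.2 with
  | nil => exact absurd e this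
  | cons a l => simp [e]

theorem UPDA.run_succ_elim {s c} (h : M.run (s + 1) = some c) :
    ∃ mid, M.run s = some mid ∧ M.stepFn mid = some c := runFrom_succ_elim h

theorem UPDA.hgt_step {s c} (h : M.run (s + 1) = some c) :
    M.hgt (s + 1) ≤ M.hgt s + 1 ∧ M.hgt s ≤ M.hgt (s + 1) + 1 := by
  obtain ⟨mid, h₁, h₂⟩ := M.run_succ_elim h
  have hl := step_len (stepFn_spec h₂)
  rw [M.hgt_eq h, M.hgt_eq h₁]
  omega

theorem UPDA.cnt_mono {s₂ c} (h : M.run s₂ = some c) {s₁} (hle : s₁ ≤ s₂) :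
    M.cnt s₁ ≤ M.cnt s₂ := by
  obtain ⟨k, rfl⟩ := Nat.exists_eq_add_of_le hle
  obtain ⟨c', hc'⟩ := M.run_mono h (Nat.le_add_right s₁ k)
  have h2 : M.runFrom c' k = some c := by rw [run_add, hc', Option.bind_some] at h; exact h
  rw [M.cnt_eq hc', M.cnt_eq h]
  exact M.runFrom_counter_le h2

theorem UPDA.cnt_step {s c} (h : M.run (s + 1) = some c) :
    M.cnt (s + 1) ≤ M.cnt s + 1 := by
  obtain ⟨mid, h₁, h₂⟩ := M.run_succ_elim h
  have hs := step_counter (stepFn_spec h₂)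
  rw [M.cnt_eq h, M.cnt_eq h₁]
  omega

/-- intermediate value (upward) for heights on a defined interval -/
theorem UPDA.exists_hgt_between {a b h : ℕ} (hab : a ≤ b) {cb} (hb : M.run b = some cb)
    (h1 : M.hgt a ≤ h) (h2 : h ≤ M.hgt b) : ∃ s, a ≤ s ∧ s ≤ b ∧ M.hgt s = h := by
  refine walk_up M.hgt hab (fun s hs hsb => ?_) h1 h2
  obtain ⟨c', hc'⟩ := M.run_mono hb (show s + 1 ≤ b by omega)
  exact (M.hgt_step hc').1

theorem UPDA.exists_hgt_between' {a b h : ℕ} (hab : a ≤ b) {cb} (hb : M.run b = some cb)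
    (h1 : h ≤ M.hgt a) (h2 : M.hgt b ≤ h) : ∃ s, a ≤ s ∧ s ≤ b ∧ M.hgt s = h := by
  refine walk_down M.hgt hab (fun s hs hsb => ?_) h1 h2
  obtain ⟨c', hc'⟩ := M.run_mono hb (show s + 1 ≤ b by omega)
  exact (M.hgt_step hc').2

theorem UPDA.exists_cnt_between {a b v : ℕ} (hab : a ≤ b) {cb} (hb : M.run b = some cb)
    (h1 : M.cnt a ≤ v) (h2 : v ≤ M.cnt b) : ∃ s, a ≤ s ∧ s ≤ b ∧ M.cnt s = v := by
  refine walk_up M.cnt hab (fun s hs hsb => ?_) h1 h2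
  obtain ⟨c', hc'⟩ := M.run_mono hb (show s + 1 ≤ b by omega)
  exact M.cnt_step hc'

end PartC1
section PartC2
open UPDA
variable {Q Γ : Type*} (M : UPDA Q Γ)

noncomputable def UPDA.entry (t h : ℕ) : ℕ :=
  letI : DecidablePred (fun s => M.hgt s = h) := fun _ => Nat.decEq _ _
  Nat.findGreatest (fun s => M.hgt s = h) t

noncomputable def UPDA.hlive (t : ℕ) : ℕ :=
  sInf {h | ∃ s, t ≤ s ∧ ∃ c, M.run s = some c ∧ c.2.2.length = h}

theorem UPDA.exists_le_hgt {t ct} (ht : M.run t = some ct) {h} (hh : 1 ≤ h)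
    (hH : h ≤ M.hgt t) : ∃ s, s ≤ t ∧ M.hgt s = h := by
  obtain ⟨s, _, hs2, hs3⟩ := M.exists_hgt_between (Nat.zero_le t) ht
    (by rw [M.hgt_zero]; exact hh) hH
  exact ⟨s, hs2, hs3⟩

theorem UPDA.entry_def (t h : ℕ) :
    M.entry t h = Nat.findGreatest (fun s => M.hgt s = h) t := rfl

theorem UPDA.entry_le (t h : ℕ) : M.entry t h ≤ t := Nat.findGreatest_le t

theorem UPDA.entry_spec {t ct} (ht : M.run t = some ct) {h} (hh : 1 ≤ h)
    (hH : h ≤ M.hgt t) : M.hgt (M.entry t h) = h := by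
  obtain ⟨s, hst, hs⟩ := M.exists_le_hgt ht hh hH
  rw [entry_def]
  exact Nat.findGreatest_spec (P := fun s => M.hgt s = h) hst hs

theorem UPDA.entry_gt {t ct} (ht : M.run t = some ct) {h} (hh : 1 ≤ h)
    (hH : h ≤ M.hgt t) : ∀ s, M.entry t h < s → s ≤ t → h < M.hgt s := by
  intro s h1 h2
  rw [entry_def] at h1
  have hne : ¬ (M.hgt s = h) := Nat.findGreatest_is_greatest (P := fun s => M.hgt s = h) h1 h2
  by_contra hcon
  push_neg at hcon
  have hlt : M.hgt s < h := lt_of_le_of_ne hcon hne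
  obtain ⟨s', hs'1, hs'2, hs'3⟩ := M.exists_hgt_between h2 ht (le_of_lt hlt) hH
  exact Nat.findGreatest_is_greatest (P := fun s => M.hgt s = h) (lt_of_lt_of_le h1 hs'1) hs'2 hs'3

theorem UPDA.entry_strict_mono {t ct} (ht : M.run t = some ct) {h h'} (hh : 1 ≤ h)
    (hlt : h < h') (hH : h' ≤ M.hgt t) : M.entry t h < M.entry t h' := by
  have e1 := M.entry_spec ht hh (le_trans (le_of_lt hlt) hH)
  have e1' := M.entry_spec ht (by omega) hH
  rcases lt_trichotomy (M.entry t h) (M.entry t h') with h3 | h3 | h3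
  · exact h3
  · rw [h3, e1'] at e1; omega
  · have := M.entry_gt ht (by omega) hH (M.entry t h) h3 (M.entry_le t h)
    omega

theorem UPDA.entry_top {t ct} (ht : M.run t = some ct) : M.entry t (M.hgt t) = t := by
  refine le_antisymm (M.entry_le t _) ?_
  rw [entry_def]
  exact Nat.le_findGreatest (P := fun s => M.hgt s = M.hgt t) le_rfl rfl

theorem UPDA.hlive_mem {t ct} (ht : M.run t = some ct) :
    ∃ s, t ≤ s ∧ ∃ c, M.run s = some c ∧ c.2.2.length = M.hlive t := by
  have : M.hlive t ∈ {h | ∃ s, t ≤ s ∧ ∃ c, M.run s = some c ∧ c.2.2.length = h} :=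
    Nat.sInf_mem ⟨ct.2.2.length, t, le_rfl, ct, ht, rfl⟩
  exact this

theorem UPDA.hlive_le {t ct} (ht : M.run t = some ct) : M.hlive t ≤ M.hgt t := by
  rw [M.hgt_eq ht]
  exact Nat.sInf_le ⟨t, le_rfl, ct, ht, rfl⟩

theorem UPDA.hlive_le_after {t s c} (hs : t ≤ s) (hc : M.run s = some c) :
    M.hlive t ≤ c.2.2.length := Nat.sInf_le ⟨s, hs, c, hc, rfl⟩

theorem UPDA.hlive_pos (hnf : M.NormalForm) {t ct} (ht : M.run t = some ct) :
    1 ≤ M.hlive t := by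
  refine le_csInf ⟨ct.2.2.length, t, le_rfl, ct, ht, rfl⟩ ?_
  rintro b ⟨s, hs, c, hc, rfl⟩
  have := M.run_stack_ne hnf hc
  cases e : c.2.2 with
  | nil => exact absurd e this
  | cons a l => simp [e]

theorem UPDA.exposure (hnf : M.NormalForm) {t ct} (ht : M.run t = some ct) {h}
    (hh1 : M.hlive t ≤ h) (hh2 : h ≤ M.hgt t) :
    ∃ s, t ≤ s ∧ M.hgt s = h ∧ (∃ c, M.run s = some c) ∧
      ∀ s', t ≤ s' → s' < s → h < M.hgt s' := by
  obtain ⟨sm, hsmt, cm, hcm, hlenm⟩ := M.hlive_mem ht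
  have hgm : M.hgt sm = M.hlive t := by rw [M.hgt_eq hcm, hlenm]
  obtain ⟨s0, hs01, hs02, hs03⟩ := M.exists_hgt_between' hsmt hcm hh2 (by omega)
  classical
  have hex : ∃ s, t ≤ s ∧ M.hgt s = h := ⟨s0, hs01, hs03⟩
  set s1 := Nat.find hex with hs1
  obtain ⟨hs11, hs12⟩ := Nat.find_spec hex
  have hmin : ∀ s', s' < s1 → ¬ (t ≤ s' ∧ M.hgt s' = h) := fun s' hs' => Nat.find_min hex hs'
  have hs1le : s1 ≤ s0 := Nat.find_min' hex ⟨hs01, hs03⟩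
  have hdf : ∃ c, M.run s1 = some c := by
    refine M.dfnd_of_hgt_pos ?_
    rw [hs12]
    have := M.hlive_pos hnf ht
    omega
  refine ⟨s1, hs11, hs12, hdf, ?_⟩
  intro s' h1 h2
  have hne : M.hgt s' ≠ h := fun e => hmin s' h2 ⟨h1, e⟩
  by_contra hcon
  push_neg at hcon
  have hlt : M.hgt s' < h := lt_of_le_of_ne hcon hne
  obtain ⟨cs', hcs'⟩ := M.run_mono hcm (le_trans (le_of_lt h2) (le_trans hs1le hs02))
  obtain ⟨s'', h''1, h''2, h''3⟩ := M.exists_hgt_between' h1 hcs' hh2 (le_of_lt hlt)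
  exact hmin s'' (lt_of_le_of_lt h''2 h2) ⟨h''1, h''3⟩

theorem UPDA.run_project (hdet : M.Deterministic) {u v : ℕ} {q n A γ cv}
    (hu : M.run u = some (q, n, A :: γ)) (hv : M.run v = some cv) (huv : u ≤ v)
    (hbet : ∀ s c', u ≤ s → s ≤ v → M.run s = some c' → γ.length < c'.2.2.length) :
    ∃ d₀, M.SRun (q, A) (v - u) = some d₀ ∧ cv = shiftC n (appendS γ d₀) := by
  have hrv : M.runFrom (q, n, A :: γ) (v - u) = some cv := by
    rw [show v = u + (v - u) by omega, run_add, hu, Option.bind_some] at hv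
    exact hv
  rw [← cfg_decomp q n A γ, runFrom_shiftC hdet] at hrv
  cases e : M.runFrom (appendS γ (q, 0, [A])) (v - u) with
  | none => rw [e] at hrv; cases hrv
  | some dX =>
    rw [e, Option.map_some] at hrv
    have hb : ∀ r e', r ≤ v - u → M.runFrom (appendS γ (q, 0, [A])) r = some e' →
        γ.length < e'.2.2.length := by
      intro r e' hr he'
      have hrun : M.run (u + r) = some (shiftC n e') := by
        rw [run_add, hu, Option.bind_some, ← cfg_decomp q n A γ, runFrom_shiftC hdet,
          he', Option.map_some]
      have := hbet (u + r) _ (by omega) (by omega) hrun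
      simpa [shiftC] using this
    obtain ⟨d₀, hd₀, rfl⟩ := runFrom_proj hdet e hb
    exact ⟨d₀, hd₀, (Option.some.inj hrv).symm⟩

end PartC2
section PartC3
open UPDA
variable {Q Γ : Type*} (M : UPDA Q Γ)

theorem UPDA.SA_entry (hdet : M.Deterministic) {t ct} (ht : M.run t = some ct) {h h'}
    (h1 : 1 ≤ h) (hlt : h < h') (hH : h' ≤ M.hgt t) :
    M.SA (M.modeAt (M.entry t h)) (M.modeAt (M.entry t h')) := by
  have hu_h := M.entry_spec ht h1 (le_trans (le_of_lt hlt) hH)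
  have hu'_h := M.entry_spec ht (show 1 ≤ h' by omega) hH
  have huu' := M.entry_strict_mono ht h1 hlt hH
  have hu_le := M.entry_le t h
  have hu'_le := M.entry_le t h'
  obtain ⟨cu, hcu⟩ := M.run_mono ht hu_le
  obtain ⟨cu', hcu'⟩ := M.run_mono ht hu'_le
  obtain ⟨q, nn, σ⟩ := cu
  have hlen : σ.length = h := by
    have := M.hgt_eq hcu
    simp only at this
    omega
  cases σ with
  | nil => simp at hlen; omega
  | cons A γ =>
  have hγlen : γ.length = h - 1 := by simp at hlen; omega
  rw [M.modeAt_eq hcu]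
  have hbet : ∀ s c', M.entry t h ≤ s → s ≤ M.entry t h' → M.run s = some c' →
      γ.length < c'.2.2.length := by
    intro s c' hs1 hs2 hc'
    rcases eq_or_lt_of_le hs1 with rfl | hlt2
    · rw [hcu] at hc'; cases hc'; simp only [List.length_cons]; omega
    · have := M.entry_gt ht h1 (le_trans (le_of_lt hlt) hH) s hlt2 (le_trans hs2 hu'_le)
      rw [M.hgt_eq hc'] at this; omega
  obtain ⟨d₀, hd₀, hshape⟩ := M.run_project hdet hcu hcu' (le_of_lt huu') hbet
  have hlen' : cu'.2.2.length = h' := by rw [← M.hgt_eq hcu', hu'_h]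
  have hd₀len : d₀.2.2.length = h' - h + 1 := by
    rw [hshape] at hlen'
    simp only [shiftC, appendS, List.length_append] at hlen'
    omega
  obtain ⟨q0, n0, σ0⟩ := d₀
  cases σ0 with
  | nil => simp at hd₀len
  | cons B σ0' =>
  have hcu'' : cu' = (q0, n0 + nn, B :: (σ0' ++ γ)) := by rw [hshape]; rfl
  rw [hcu''] at hcu'
  rw [M.modeAt_eq hcu']
  refine ⟨M.entry t h' - M.entry t h, (q0, n0, B :: σ0'), by omega, hd₀, rfl, by simp,
    by simp only [List.length_cons] at hd₀len ⊢; omega, ?_⟩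
  intro r c' hr hrle hrun
  have hrunbig : M.run (M.entry t h + r) = some (shiftC nn (appendS γ c')) := by
    rw [run_add, hcu, Option.bind_some, ← cfg_decomp q nn A γ, runFrom_shiftC hdet,
      runFrom_appendS hdet γ hrun, Option.map_some]
  have hgt_big := M.entry_gt ht h1 (le_trans (le_of_lt hlt) hH) (M.entry t h + r)
    (by omega) (by omega)
  rw [M.hgt_eq hrunbig] at hgt_big
  simp only [shiftC, appendS, List.length_append] at hgt_big
  omega

theorem UPDA.HasRet_entry (hdet : M.Deterministic) (hnf : M.NormalForm) {t ct}
    (ht : M.run t = some ct) {h} (hh1 : M.hlive t ≤ h) (hh2 : h < M.hgt t) :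
    M.HasRet (M.modeAt (M.entry t h)) := by
  have h1 : 1 ≤ h := le_trans (M.hlive_pos hnf ht) hh1
  have hu_h := M.entry_spec ht h1 (le_of_lt hh2)
  have hu_le := M.entry_le t h
  obtain ⟨cu, hcu⟩ := M.run_mono ht hu_le
  obtain ⟨q, nn, σ⟩ := cu
  have hlen : σ.length = h := by
    have := M.hgt_eq hcu
    simp only at this
    omega
  cases σ with
  | nil => simp at hlen; omega
  | cons A γ =>
  have hγlen : γ.length = h - 1 := by simp at hlen; omega
  obtain ⟨sx, hsx_t, hsx_h, ⟨cx, hcx⟩, hsx_min⟩ := M.exposure hnf ht hh1 (le_of_lt hh2)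
  have hu_lt_sx : M.entry t h < sx := by
    by_contra hcon
    push_neg at hcon
    have e1 : sx = t := le_antisymm (le_trans hcon hu_le) hsx_t
    have e2 : M.entry t h = t := by omega
    rw [e2] at hu_h
    omega
  have hbet : ∀ s c', M.entry t h ≤ s → s ≤ sx → M.run s = some c' →
      γ.length < c'.2.2.length := by
    intro s c' hs1 hs2 hc'
    rcases eq_or_lt_of_le hs1 with rfl | hlt2
    · rw [hcu] at hc'; cases hc'; simp only [List.length_cons]; omega
    · rcases le_or_gt s t with hst | hts
      · have := M.entry_gt ht h1 (le_of_lt hh2) s hlt2 hst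
        rw [M.hgt_eq hc'] at this; omega
      · rcases eq_or_lt_of_le hs2 with rfl | hlt3
        · rw [hcx] at hc'; cases hc'
          rw [M.hgt_eq hcx] at hsx_h
          omega
        · have := hsx_min s (le_of_lt hts) hlt3
          rw [M.hgt_eq hc'] at this; omega
  obtain ⟨d₀, hd₀, hshape⟩ := M.run_project hdet hcu hcx (by omega) hbet
  have hlenx : cx.2.2.length = h := by rw [← M.hgt_eq hcx, hsx_h]
  have hd₀len : d₀.2.2.length = 1 := by
    rw [hshape] at hlenx
    simp only [shiftC, appendS, List.length_append] at hlenx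
    omega
  rw [M.modeAt_eq hcu]
  exact ⟨sx - M.entry t h, d₀, by omega, hd₀, hd₀len⟩

noncomputable def UPDA.liveList (t : ℕ) : List (Q × Γ) :=
  (List.range' (M.hlive t) (M.hgt t + 1 - M.hlive t)).map (fun h => M.modeAt (M.entry t h))

theorem UPDA.liveList_length (t : ℕ) :
    (M.liveList t).length = M.hgt t + 1 - M.hlive t := by simp [liveList]

theorem UPDA.liveList_getElem {t i : ℕ} (hi : i < (M.liveList t).length) :
    (M.liveList t)[i] = M.modeAt (M.entry t (M.hlive t + i)) := by
  simp only [liveList, List.getElem_map, List.getElem_range', Nat.one_mul]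

theorem UPDA.liveList_getElem? {t j : ℕ} (hj : j < (M.liveList t).length) :
    (M.liveList t)[j]? = some (M.modeAt (M.entry t (M.hlive t + j))) := by
  rw [List.getElem?_eq_getElem hj, M.liveList_getElem hj]

theorem UPDA.liveList_pairwise (hdet : M.Deterministic) (hnf : M.NormalForm) {t ct}
    (ht : M.run t = some ct) : (M.liveList t).Pairwise M.Rrel := by
  rw [List.pairwise_iff_getElem]
  intro i j hi hj hij
  rw [M.liveList_getElem hi, M.liveList_getElem hj]
  rw [M.liveList_length] at hi hj
  have hlp := M.hlive_pos hnf ht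
  have hle := M.hlive_le ht
  constructor
  · exact M.SA_entry hdet ht (by omega) (by omega) (by omega)
  · exact M.HasRet_entry hdet hnf ht (by omega) (by omega)

theorem UPDA.cell_frozen (hdet : M.Deterministic) (hnf : M.NormalForm) {t ct}
    (ht : M.run t = some ct) {h} (h1 : 1 ≤ h) (h2 : h ≤ M.hgt t) :
    ∃ σ cu, M.run (M.entry t h) = some cu ∧ ct.2.2 = σ ++ cu.2.2 ∧
      σ.length = M.hgt t - h := by
  obtain ⟨cu, hcu⟩ := M.run_mono ht (M.entry_le t h)
  have hu_h := M.entry_spec ht h1 h2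
  have hculen : cu.2.2.length = h := by rw [← M.hgt_eq hcu, hu_h]
  rcases eq_or_lt_of_le (M.entry_le t h) with he | hlt
  · rw [he, ht] at hcu
    cases hcu
    refine ⟨[], ct, by rw [he]; exact ht, by simp, ?_⟩
    rw [he] at hu_h
    simp only [List.length_nil]
    omega
  · obtain ⟨c1, hc1⟩ := M.run_mono ht (show M.entry t h + 1 ≤ t by omega)
    obtain ⟨mid, hmid, hstep⟩ := M.run_succ_elim hc1
    have hmidcu : mid = cu := by rw [hmid] at hcu; exact Option.some.inj hcu
    subst hmidcu
    have hstep' := stepFn_spec hstep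
    have hgt1 : h < M.hgt (M.entry t h + 1) := M.entry_gt ht h1 h2 _ (by omega) (by omega)
    rw [M.hgt_eq hc1] at hgt1
    obtain ⟨q, nn, σc⟩ := mid
    have hlenc : σc.length = h := by simpa using hculen
    cases σc with
    | nil => simp at hlenc; omega
    | cons A γ =>
    have hγlen : γ.length = h - 1 := by simp at hlenc; omega
    cases hstep' with
    | readA hm => simp at hgt1; omega
    | readE hm => simp at hgt1; omega
    | pop hm => simp at hgt1; omega
    | push hm =>
      rename_i p B
      have hc1' : M.run (M.entry t h + 1) = some (p, nn, B :: (A :: γ)) := hc1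
      have hbet : ∀ s c', M.entry t h + 1 ≤ s → s ≤ t → M.run s = some c' →
          (A :: γ).length < c'.2.2.length := by
        intro s c' hs1 hs2 hc'
        have := M.entry_gt ht h1 h2 s (by omega) hs2
        rw [M.hgt_eq hc'] at this
        simp
        omega
      obtain ⟨d₀, hd₀, hshape⟩ := M.run_project hdet hc1' ht (by omega) hbet
      refine ⟨d₀.2.2, (q, nn, A :: γ), hcu, ?_, ?_⟩
      · rw [hshape]; simp [shiftC, appendS]
      · have hcl : ct.2.2.length = M.hgt t := (M.hgt_eq ht).symm
        rw [hshape] at hcl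
        simp only [shiftC, appendS, List.length_append] at hcl
        simp at hcl ⊢
        omega

theorem UPDA.chain_none (hdet : M.Deterministic) (hnf : M.NormalForm) {t ct}
    (ht : M.run t = some ct) :
    M.chain (ct.2.2.take (M.hgt t + 1 - M.hlive t)) ct.1 = none := by
  cases hE : M.chain (ct.2.2.take (M.hgt t + 1 - M.hlive t)) ct.1 with
  | none => rfl
  | some pe =>
    exfalso
    obtain ⟨s, n', hrun⟩ := M.chain_descend hdet _ ct.1 pe hE ct.2.1
      (ct.2.2.drop (M.hgt t + 1 - M.hlive t))
    rw [List.take_append_drop] at hrun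
    have hbig : M.run (t + s) = some (pe, n', ct.2.2.drop (M.hgt t + 1 - M.hlive t)) := by
      rw [run_add, ht, Option.bind_some]
      exact hrun
    have hlive_le2 := M.hlive_le_after (Nat.le_add_right t s) hbig
    have hlen : ct.2.2.length = M.hgt t := (M.hgt_eq ht).symm
    have hp1 := M.hlive_pos hnf ht
    have hp2 := M.hlive_le ht
    simp only [List.length_drop, hlen] at hlive_le2
    omega

theorem UPDA.cell_eq (hdet : M.Deterministic) (hnf : M.NormalForm) {t ct}
    (ht : M.run t = some ct) {i : ℕ} (hi : i < M.hgt t + 1 - M.hlive t) :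
    ct.2.2[i]? = some ((M.modeAt (M.entry t (M.hgt t - i))).2) := by
  have hlp := M.hlive_pos hnf ht
  have hle := M.hlive_le ht
  obtain ⟨σ, cu, hcu, hshape, hσlen⟩ := M.cell_frozen hdet hnf ht
    (h := M.hgt t - i) (by omega) (by omega)
  have hculen : cu.2.2.length = M.hgt t - i := by
    rw [← M.hgt_eq hcu, M.entry_spec ht (by omega) (by omega)]
  rw [hshape, List.getElem?_append_right (by omega), show i - σ.length = 0 by omega]
  obtain ⟨q, nn, σc⟩ := cu
  cases σc with
  | nil => simp at hculen; omega
  | cons A γ =>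
  rw [M.modeAt_eq hcu]
  simp

theorem UPDA.futures_eq (hdet : M.Deterministic) (hnf : M.NormalForm) {t1 c1 t2 c2}
    (h1 : M.run t1 = some c1) (h2 : M.run t2 = some c2)
    (hLL : M.liveList t1 = M.liveList t2) :
    M.F c1.2.2 c1.1 = M.F c2.2.2 c2.1 := by
  set L := (M.liveList t1).length with hL
  have hLeq : (M.liveList t2).length = L := by rw [← hLL]
  have hp1 := M.hlive_pos hnf h1
  have hq1 := M.hlive_le h1
  have hp2 := M.hlive_pos hnf h2
  have hq2 := M.hlive_le h2
  have hL1 : L = M.hgt t1 + 1 - M.hlive t1 := by rw [hL, M.liveList_length]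
  have hL2 : L = M.hgt t2 + 1 - M.hlive t2 := by rw [← hLeq, M.liveList_length]
  have hLpos : 1 ≤ L := by omega
  have hlen1 : c1.2.2.length = M.hgt t1 := (M.hgt_eq h1).symm
  have hlen2 : c2.2.2.length = M.hgt t2 := (M.hgt_eq h2).symm
  -- mode equality level by level
  have hmodes : ∀ j, j < L → M.modeAt (M.entry t1 (M.hlive t1 + j))
      = M.modeAt (M.entry t2 (M.hlive t2 + j)) := by
    intro j hjL
    have hj : (M.liveList t1)[j]? = (M.liveList t2)[j]? := by rw [hLL]
    rw [M.liveList_getElem? (by omega), M.liveList_getElem? (by rw [hLeq]; omega)] at hj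
    exact Option.some.inj hj
  have hmode : M.modeAt t1 = M.modeAt t2 := by
    have := hmodes (L - 1) (by omega)
    rw [show M.hlive t1 + (L - 1) = M.hgt t1 by omega, M.entry_top h1,
      show M.hlive t2 + (L - 1) = M.hgt t2 by omega, M.entry_top h2] at this
    exact this
  have hst : c1.1 = c2.1 := by
    have e1 : (M.modeAt t1).1 = c1.1 := by simp [modeAt, h1]
    have e2 : (M.modeAt t2).1 = c2.1 := by simp [modeAt, h2]
    rw [← e1, ← e2, hmode]
  -- live cells equality
  have hπ : c1.2.2.take L = c2.2.2.take L := by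
    apply List.ext_getElem?
    intro i
    rw [List.getElem?_take, List.getElem?_take]
    split
    · rename_i hiL
      rw [M.cell_eq hdet hnf h1 (by omega), M.cell_eq hdet hnf h2 (by omega)]
      have := hmodes (L - 1 - i) (by omega)
      rw [show M.hlive t1 + (L - 1 - i) = M.hgt t1 - i by omega,
        show M.hlive t2 + (L - 1 - i) = M.hgt t2 - i by omega] at this
      rw [this]
    · rfl
  -- chain none
  have hchain := M.chain_none hdet hnf h1
  rw [← hL1] at hchain
  calc M.F c1.2.2 c1.1 = M.F (c1.2.2.take L ++ c1.2.2.drop L) c1.1 := by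
        rw [List.take_append_drop]
    _ = M.F (c1.2.2.take L ++ c2.2.2.drop L) c1.1 := M.F_stable _ _ hchain _ _
    _ = M.F c2.2.2 c2.1 := by rw [hπ, hst, List.take_append_drop]

end PartC3
section PartD
open UPDA
variable {Q Γ : Type*}

theorem list_eq_of_mem_iff {α : Type*} {R : α → α → Prop}
    (hR : ∀ x y, R x y → R y x → False) :
    ∀ (l1 l2 : List α), l1.Pairwise R → l2.Pairwise R →
      (∀ x, x ∈ l1 ↔ x ∈ l2) → l1 = l2 := by
  intro l1
  induction l1 with
  | nil =>
    intro l2 _ _ hmem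
    cases l2 with
    | nil => rfl
    | cons b tl2 => exact absurd ((hmem b).mpr (List.mem_cons_self (a := b) (l := tl2))) (List.not_mem_nil (a := b))
  | cons a tl1 ih =>
    intro l2 h1 h2 hmem
    cases l2 with
    | nil => exact absurd ((hmem a).mp (List.mem_cons_self (a := a) (l := tl1))) (List.not_mem_nil (a := a))
    | cons b tl2 =>
      obtain ⟨h1a, h1tl⟩ := List.pairwise_cons.mp h1
      obtain ⟨h2b, h2tl⟩ := List.pairwise_cons.mp h2
      have hab : a = b := by
        by_contra hne
        have ha2 : a ∈ tl2 := by
          have := (hmem a).mp (List.mem_cons_self (a := a) (l := tl1))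
          rcases List.mem_cons.mp this with h | h
          · exact absurd h hne
          · exact h
        have hb1 : b ∈ tl1 := by
          have := (hmem b).mpr (List.mem_cons_self (a := b) (l := tl2))
          rcases List.mem_cons.mp this with h | h
          · exact absurd h.symm hne
          · exact h
        exact hR a b (h1a b hb1) (h2b a ha2)
      subst hab
      have hmem' : ∀ x, x ∈ tl1 ↔ x ∈ tl2 := by
        intro x
        constructor
        · intro hx
          have := (hmem x).mp (List.mem_cons_of_mem a hx)
          rcases List.mem_cons.mp this with h | h
          · subst h; exact absurd (h1a x hx) (fun hr => hR x x hr hr)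
          · exact h
        · intro hx
          have := (hmem x).mpr (List.mem_cons_of_mem a hx)
          rcases List.mem_cons.mp this with h | h
          · subst h; exact absurd (h2b x hx) (fun hr => hR x x hr hr)
          · exact h
      rw [ih tl2 h1tl h2tl hmem']

variable (M : UPDA Q Γ)

theorem UPDA.accepts_decomp (hdet : M.Deterministic) {k t : ℕ} {c}
    (ht : M.run t = some c) (hcnt : c.2.1 = k)
    (hmin : ∀ s c', s < t → M.run s = some c' → c'.2.1 < k) :
    ∀ d, (M.Accepts (k + d) ↔ d ∈ M.F c.2.2 c.1) := by
  intro d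
  rw [← M.FE hdet c.2.2 c.1 k]
  rw [M.accepts_iff hdet]
  have hc : (c.1, k, c.2.2) = c := by rw [← hcnt]
  constructor
  · rintro ⟨s, e, hs, he, hf⟩
    rcases lt_or_ge s t with hst | hst
    · have := hmin s e hst hs
      omega
    · refine ⟨s - t, e, ?_, he, hf⟩
      rw [hc]
      rw [show s = t + (s - t) by omega, run_add, ht, Option.bind_some] at hs
      exact hs
  · rintro ⟨j, e, hj, he, hf⟩
    refine ⟨t + j, e, ?_, he, hf⟩
    rw [run_add, ht, Option.bind_some]
    rw [hc] at hj
    exact hj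

theorem UPDA.main_prop [Fintype Q] [Fintype Γ] (hdet : M.Deterministic)
    (hnf : M.NormalForm) :
    ∃ k1 k2, k1 < k2 ∧ k2 ≤ 2 ^ (Fintype.card Q * Fintype.card Γ) ∧
      ∀ d, (M.Accepts (k1 + d) ↔ M.Accepts (k2 + d)) := by
  classical
  set K := 2 ^ (Fintype.card Q * Fintype.card Γ) with hK
  have hK1 : 1 ≤ K := Nat.one_le_two_pow
  by_cases hreach : ∃ s c, M.run s = some c ∧ c.2.1 = K - 1
  case neg =>
    refine ⟨K - 1, K, by omega, le_rfl, ?_⟩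
    have hno : ∀ v, K - 1 ≤ v → ¬ M.Accepts v := by
      intro v hv hacc
      rw [M.accepts_iff hdet] at hacc
      obtain ⟨s, c, hs, hv', hf⟩ := hacc
      have hc0 : M.cnt 0 = 0 := by rw [M.cnt_eq M.run_zero]
      have hcs : M.cnt s = v := by rw [M.cnt_eq hs]; exact hv'
      obtain ⟨s', hs'1, hs'2, hs'3⟩ := M.exists_cnt_between (v := K - 1) (Nat.zero_le s) hs
        (by omega) (by omega)
      obtain ⟨c', hc'⟩ := M.run_mono hs hs'2
      refine hreach ⟨s', c', hc', ?_⟩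
      rw [← M.cnt_eq hc', hs'3]
    intro d
    exact iff_of_false (hno _ (by omega)) (hno _ (by omega))
  case pos =>
    obtain ⟨sK, cK, hsK, hcK⟩ := hreach
    have hcntK : M.cnt sK = K - 1 := by rw [M.cnt_eq hsK]; exact hcK
    have hexist : ∀ k, k ≤ K - 1 → ∃ s, ∃ c, M.run s = some c ∧ c.2.1 = k := by
      intro k hk
      have hc0 : M.cnt 0 = 0 := by rw [M.cnt_eq M.run_zero]
      obtain ⟨s', hs'1, hs'2, hs'3⟩ := M.exists_cnt_between (v := k) (Nat.zero_le sK) hsK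
        (by omega) (by omega)
      obtain ⟨c', hc'⟩ := M.run_mono hsK hs'2
      exact ⟨s', c', hc', by rw [← M.cnt_eq hc', hs'3]⟩
    set φ : ℕ → Finset (Q × Γ) := fun k =>
      if hk : k ≤ K - 1 then (M.liveList (Nat.find (hexist k hk))).toFinset else ∅ with hφ
    have hmaps : ∀ k ∈ Finset.range K, φ k ∈ (Finset.univ : Finset (Finset (Q × Γ))).erase ∅ := by
      intro k hkr
      rw [Finset.mem_range] at hkr
      have hk : k ≤ K - 1 := by omega
      rw [Finset.mem_erase]
      refine ⟨?_, Finset.mem_univ _⟩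
      rw [hφ]
      simp only [hk, dif_pos]
      obtain ⟨c, hc, hcnt⟩ := Nat.find_spec (hexist k hk)
      have hlp := M.hlive_pos hnf hc
      have hle := M.hlive_le hc
      have hlen : (M.liveList (Nat.find (hexist k hk))).length ≥ 1 := by
        rw [M.liveList_length]; omega
      intro hemp
      rw [List.toFinset_eq_empty_iff] at hemp
      rw [hemp] at hlen
      simp at hlen
    have hcard : ((Finset.univ : Finset (Finset (Q × Γ))).erase ∅).card < (Finset.range K).card := by
      rw [Finset.card_erase_of_mem (Finset.mem_univ _), Finset.card_range]
      have : (Finset.univ : Finset (Finset (Q × Γ))).card = K := by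
        rw [Finset.card_univ, Fintype.card_finset, Fintype.card_prod, hK]
      omega
    obtain ⟨x, hx, y, hy, hxy, hfeq⟩ :=
      Finset.exists_ne_map_eq_of_card_lt_of_maps_to hcard hmaps
    rw [Finset.mem_range] at hx hy
    -- wlog x < y
    have main : ∀ a b, a < b → b < K → φ a = φ b →
        ∃ k1 k2, k1 < k2 ∧ k2 ≤ K ∧ ∀ d, (M.Accepts (k1 + d) ↔ M.Accepts (k2 + d)) := by
      intro a b hab hbK hfab
      have ha : a ≤ K - 1 := by omega
      have hb : b ≤ K - 1 := by omega
      rw [hφ] at hfab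
      simp only [ha, hb, dif_pos] at hfab
      set t1 := Nat.find (hexist a ha) with ht1
      set t2 := Nat.find (hexist b hb) with ht2
      obtain ⟨c1, hc1, hcnt1⟩ := Nat.find_spec (hexist a ha)
      obtain ⟨c2, hc2, hcnt2⟩ := Nat.find_spec (hexist b hb)
      have hLL : M.liveList t1 = M.liveList t2 := by
        refine list_eq_of_mem_iff (fun u v h1 h2 => M.Rrel_antisym hdet h1 h2) _ _
          (M.liveList_pairwise hdet hnf hc1) (M.liveList_pairwise hdet hnf hc2) ?_
        intro z
        rw [← List.mem_toFinset, ← List.mem_toFinset, hfab]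
      have hFeq := M.futures_eq hdet hnf hc1 hc2 hLL
      have hmin1 : ∀ s c', s < t1 → M.run s = some c' → c'.2.1 < a := by
        intro s c' hst hs
        have hne := Nat.find_min (hexist a ha) hst
        have hle : c'.2.1 ≤ c1.2.1 := by
          rw [← M.cnt_eq hs, ← M.cnt_eq hc1]
          exact M.cnt_mono hc1 (by omega)
        rcases eq_or_lt_of_le hle with he | hl
        · exact absurd ⟨c', hs, by omega⟩ hne
        · omega
      have hmin2 : ∀ s c', s < t2 → M.run s = some c' → c'.2.1 < b := by
        intro s c' hst hs
        have hne := Nat.find_min (hexist b hb) hst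
        have hle : c'.2.1 ≤ c2.2.1 := by
          rw [← M.cnt_eq hs, ← M.cnt_eq hc2]
          exact M.cnt_mono hc2 (by omega)
        rcases eq_or_lt_of_le hle with he | hl
        · exact absurd ⟨c', hs, by omega⟩ hne
        · omega
      have hd1 := M.accepts_decomp hdet hc1 hcnt1 hmin1
      have hd2 := M.accepts_decomp hdet hc2 hcnt2 hmin2
      refine ⟨a, b, hab, by omega, fun d => ?_⟩
      rw [hd1 d, hd2 d, hFeq]
    rcases lt_or_gt_of_ne hxy with h | h
    · exact main x y h hy hfeq
    · exact main y x h hx hfeq.symm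

theorem UPDA.dfa_of_period {K k1 k2 : ℕ} (hk : k1 < k2) (hK : k2 ≤ K)
    (hper : ∀ d, (M.Accepts (k1 + d) ↔ M.Accepts (k2 + d))) :
    ∃ D : DFA (Fin 1) (Fin K), ∀ k, (List.replicate k (0 : Fin 1) ∈ D.accepts ↔ M.Accepts k) := by
  classical
  have hKpos : 0 < K := by omega
  set D : DFA (Fin 1) (Fin K) :=
    ⟨fun s _ => if h : s.val + 1 < k2 then ⟨s.val + 1, by omega⟩ else ⟨k1, by omega⟩,
      ⟨0, hKpos⟩, {s | M.Accepts s.val}⟩ with hD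
  refine ⟨D, ?_⟩
  have key : ∀ k, (D.eval (List.replicate k (0 : Fin 1))).val < k2 ∧
      ∀ d, (M.Accepts ((D.eval (List.replicate k (0 : Fin 1))).val + d) ↔ M.Accepts (k + d)) := by
    intro k
    induction k with
    | zero =>
      rw [List.replicate_zero, DFA.eval_nil]
      have h0 : (D.start).val = 0 := rfl
      exact ⟨by omega, fun d => by rw [h0]⟩
    | succ k ih =>
      obtain ⟨ih1, ih2⟩ := ih
      have hstep : D.eval (List.replicate (k + 1) (0 : Fin 1))
          = D.step (D.eval (List.replicate k (0 : Fin 1))) 0 := by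
        rw [List.replicate_succ', DFA.eval_append_singleton]
      set s := D.eval (List.replicate k (0 : Fin 1)) with hs
      by_cases hlt : s.val + 1 < k2
      · have hv : (D.eval (List.replicate (k + 1) (0 : Fin 1))).val = s.val + 1 := by
          rw [hstep]
          show (if h : s.val + 1 < k2 then (⟨s.val + 1, by omega⟩ : Fin K)
            else ⟨k1, by omega⟩).val = s.val + 1
          rw [dif_pos hlt]
        rw [hv]
        refine ⟨hlt, fun d => ?_⟩
        have h2 := ih2 (1 + d)
        rw [show s.val + (1 + d) = s.val + 1 + d by omega,
          show k + (1 + d) = k + 1 + d by omega] at h2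
        exact h2
      · have hs2 : s.val + 1 = k2 := by omega
        have hv : (D.eval (List.replicate (k + 1) (0 : Fin 1))).val = k1 := by
          rw [hstep]
          show (if h : s.val + 1 < k2 then (⟨s.val + 1, by omega⟩ : Fin K)
            else ⟨k1, by omega⟩).val = k1
          rw [dif_neg hlt]
        rw [hv]
        refine ⟨by omega, fun d => ?_⟩
        have h2 := ih2 (1 + d)
        rw [show s.val + (1 + d) = k2 + d by omega,
          show k + (1 + d) = k + 1 + d by omega] at h2
        exact (hper d).trans h2
  intro k
  rw [DFA.mem_accepts]
  have h2 := (key k).2 0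
  rw [Nat.add_zero, Nat.add_zero] at h2
  show M.Accepts ((D.eval (List.replicate k (0 : Fin 1)))).val ↔ M.Accepts k
  exact h2

end PartD

/-- every unary language accepted by a deterministic pushdown
automaton in normal form with `n` states and `m` stack symbols is accepted by a
one-way deterministic finite automaton with at most `2^{nm}` states
(`a^k` is represented as `List.replicate k 0` over the alphabet `Fin 1`). -/
theorem stmt_14 {Q Γ : Type*} [Fintype Q] [Fintype Γ] (M : UPDA Q Γ)
    (hdet : M.Deterministic) (hnf : M.NormalForm) (n m : ℕ)
    (hn : Fintype.card Q = n) (hm : Fintype.card Γ = m) :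
    ∃ D : DFA (Fin 1) (Fin (2 ^ (n * m))),
      ∀ k : ℕ, (List.replicate k 0 ∈ D.accepts ↔ M.Accepts k) := by
  subst hn
  subst hm
  obtain ⟨k1, k2, hk, hK, hper⟩ := M.main_prop hdet hnf
  exact M.dfa_of_period hk hK hper
end

section
/- For the grammar G constructed from a unary dpda M in normal form (with variables [qA]_0 and [qA]_1), the following hold for every mode [qA] and x ∈ a*: (1) [qA]_0 ⇒* x iff (q, x, A) ⊢* (exit[qA], ε, ε); (2) [qA]_1 ⇒* x iff (q, x, A) ⊢* (q', ε, γ) for some final state q' and nonempty stack string γ. -/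
/-- The productions of the grammar `G` built from a unary dpda `M`: variables
are `[qA]_b` with `b ∈ {false, true}` (written `(q, A, b)`), terminals are the
single letter `a` (written `Sum.inr ()`). -/
inductive GProd {Q Γ : Type*} (M : UPDA Q Γ) :
    Q × Γ × Bool → List ((Q × Γ × Bool) ⊕ Unit) → Prop
  | push1 {q A p B} : PMove.push p B ∈ M.δ q A →
      GProd M (q, A, true) [Sum.inl (p, B, true)]
  | push0 {q A p B q' k} : PMove.push p B ∈ M.δ q A →
      M.Reaches (p, 0, [B]) (q', k, []) →
      GProd M (q, A, false) [Sum.inl (p, B, false), Sum.inl (q', A, false)]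
  | push01 {q A p B q' k} : PMove.push p B ∈ M.δ q A →
      M.Reaches (p, 0, [B]) (q', k, []) →
      GProd M (q, A, true) [Sum.inl (p, B, false), Sum.inl (q', A, true)]
  | pop {q A p} : PMove.pop p ∈ M.δ q A → GProd M (q, A, false) []
  | readA {q A p b} : PMove.readA p ∈ M.δ q A →
      GProd M (q, A, b) [Sum.inr (), Sum.inl (p, A, b)]
  | readE {q A p b} : PMove.readE p ∈ M.δ q A →
      GProd M (q, A, b) [Sum.inl (p, A, b)]
  | fin {q A} : q ∈ M.final → GProd M (q, A, true) []

/-- Context-free derivation relation generated by a set `P` of productions. -/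
def CFDerives {V T : Type*} (P : V → List (V ⊕ T) → Prop) :
    List (V ⊕ T) → List (V ⊕ T) → Prop :=
  Relation.ReflTransGen (fun u v => ∃ x y N rhs, P N rhs ∧
    u = x ++ Sum.inl N :: y ∧ v = x ++ rhs ++ y)

section Stmt16Aux
variable {Q Γ : Type*}

lemma step_lift {M : UPDA Q Γ} {c c' : Q × ℕ × List Γ} (h : M.Step c c') (d : ℕ) (α : List Γ) :
    M.Step (c.1, c.2.1 + d, c.2.2 ++ α) (c'.1, c'.2.1 + d, c'.2.2 ++ α) := by
  cases h <;> simp [Nat.add_right_comm] <;> constructor <;> assumption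

lemma reaches_lift {M : UPDA Q Γ} {c c' : Q × ℕ × List Γ} (h : M.Reaches c c') (d : ℕ)
    (α : List Γ) :
    M.Reaches (c.1, c.2.1 + d, c.2.2 ++ α) (c'.1, c'.2.1 + d, c'.2.2 ++ α) := by
  induction h with
  | refl => exact .refl
  | tail _ hstep ih => exact ih.tail (step_lift hstep d α)

/-- Counted reachability. -/
inductive RN (M : UPDA Q Γ) : ℕ → Q × ℕ × List Γ → Q × ℕ × List Γ → Prop
  | refl (c) : RN M 0 c c
  | head {c d e n} : M.Step c d → RN M n d e → RN M (n + 1) c e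

lemma RN.reaches {M : UPDA Q Γ} {n c d} (h : RN M n c d) : M.Reaches c d := by
  induction h with
  | refl => exact .refl
  | head hs _ ih => exact Relation.ReflTransGen.head hs ih


lemma RN.trans {M : UPDA Q Γ} {m n c d e} (h1 : RN M m c d) (h2 : RN M n d e) :
    RN M (m + n) c e := by
  induction h1 with
  | refl => simpa using h2
  | head hs _ ih => exact (Nat.succ_add _ _) ▸ RN.head hs (ih h2)

lemma RN.lift {M : UPDA Q Γ} {n} {c c' : Q × ℕ × List Γ} (h : RN M n c c') (d : ℕ)
    (α : List Γ) :
    RN M n (c.1, c.2.1 + d, c.2.2 ++ α) (c'.1, c'.2.1 + d, c'.2.2 ++ α) := by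
  induction h with
  | refl => exact .refl _
  | head hs _ ih => exact RN.head (step_lift hs d α) ih

lemma RN.single {M : UPDA Q Γ} {c d} (h : M.Step c d) : RN M 1 c d := .head h (.refl _)

lemma RN.tail {M : UPDA Q Γ} {n c d e} (h : RN M n c d) (hs : M.Step d e) : RN M (n + 1) c e :=
  h.trans (RN.single hs)

lemma reaches_rn {M : UPDA Q Γ} {c d} (h : M.Reaches c d) : ∃ n, RN M n c d := by
  induction h with
  | refl => exact ⟨0, .refl c⟩
  | tail _ hstep ih =>
      obtain ⟨n, hn⟩ := ih
      exact ⟨n + 1, hn.tail hstep⟩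

lemma step_unshift {M : UPDA Q Γ} {q c d γ p c2 γ2}
    (h : M.Step (q, c + d, γ) (p, c2, γ2)) :
    ∃ c2', c2 = c2' + d ∧ M.Step (q, c, γ) (p, c2', γ2) := by
  generalize hc : (q, c + d, γ) = x at h
  generalize hc2 : (p, c2, γ2) = y at h
  cases h <;> (injection hc with h1 h2; injection h2 with h2 h3) <;>
    (injection hc2 with g1 g2; injection g2 with g2 g3) <;> subst_vars
  · exact ⟨c + 1, by omega, .readA ‹_›⟩
  · exact ⟨c, rfl, .readE ‹_›⟩
  · exact ⟨c, rfl, .pop ‹_›⟩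
  · exact ⟨c, rfl, .push ‹_›⟩

lemma rn_unshift {M : UPDA Q Γ} : ∀ {n q c d γ p c' γ'},
    RN M n (q, c + d, γ) (p, c', γ') →
    ∃ e, c' = e + d ∧ RN M n (q, c, γ) (p, e, γ') := by
  intro n
  induction n with
  | zero =>
      intro q c d γ p c' γ' h
      cases h
      exact ⟨c, rfl, .refl _⟩
  | succ n ih =>
      intro q c d γ p c' γ' h
      cases h with
      | head hs hr =>
          rename_i mid
          obtain ⟨q1, c1, γ1⟩ := mid
          obtain ⟨c1', rfl, hs'⟩ := step_unshift hs
          obtain ⟨e, rfl, hr'⟩ := ih hr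
          exact ⟨e, rfl, .head hs' hr'⟩

lemma no_step_empty {M : UPDA Q Γ} {p k} {d : Q × ℕ × List Γ}
    (h : M.Step (p, k, ([] : List Γ)) d) : False := by
  generalize hc : (p, k, ([] : List Γ)) = x at h
  cases h <;> (injection hc with h1 h2; injection h2 with h2 h3) <;> simp_all

lemma reaches_empty_stuck {M : UPDA Q Γ} {p k} {d : Q × ℕ × List Γ}
    (h : M.Reaches (p, k, ([] : List Γ)) d) : d = (p, k, []) := by
  cases (Relation.ReflTransGen.cases_head h) with
  | inl h => exact h.symm
  | inr h => exact absurd h.choose_spec.1 (fun hs => no_step_empty hs)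

lemma rn_empty_stuck {M : UPDA Q Γ} {n p k} {d : Q × ℕ × List Γ}
    (h : RN M n (p, k, ([] : List Γ)) d) : d = (p, k, []) := by
  cases h with
  | refl => rfl
  | head hs _ => exact absurd hs no_step_empty

lemma step_det' {M : UPDA Q Γ} (hdet : M.Deterministic) {q n A γ d1 d2}
    (h1 : M.Step (q, n, A :: γ) d1) (h2 : M.Step (q, n, A :: γ) d2) : d1 = d2 := by
  cases h1 <;> rename_i hm1 <;> cases h2 <;> rename_i hm2 <;>
    have h := hdet _ _ _ _ hm1 hm2 <;> simp_all

lemma step_det {M : UPDA Q Γ} (hdet : M.Deterministic) {c d1 d2}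
    (h1 : M.Step c d1) (h2 : M.Step c d2) : d1 = d2 := by
  have : ∃ q n A γ, c = (q, n, A :: γ) := by
    cases h1 <;> exact ⟨_, _, _, _, rfl⟩
  obtain ⟨q, n, A, γ, rfl⟩ := this
  exact step_det' hdet h1 h2

lemma reaches_confluent {M : UPDA Q Γ} (hdet : M.Deterministic) {c d1 d2}
    (h1 : M.Reaches c d1) (h2 : M.Reaches c d2) :
    M.Reaches d1 d2 ∨ M.Reaches d2 d1 := by
  induction h1 using Relation.ReflTransGen.head_induction_on with
  | refl => exact .inl h2
  | head hs _ ih =>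
      cases (Relation.ReflTransGen.cases_head h2) with
      | inl h => subst h
                 exact .inr (Relation.ReflTransGen.head hs (by assumption))
      | inr h =>
          obtain ⟨c', hs', hr'⟩ := h
          rw [step_det hdet hs hs'] at *
          exact ih hr'

lemma det_empty_unique {M : UPDA Q Γ} (hdet : M.Deterministic) {c p1 k1 p2 k2}
    (h1 : M.Reaches c (p1, k1, ([] : List Γ))) (h2 : M.Reaches c (p2, k2, ([] : List Γ))) :
    p1 = p2 ∧ k1 = k2 := by
  cases reaches_confluent hdet h1 h2 with
  | inl h => have := reaches_empty_stuck h; simp_all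
  | inr h => have := reaches_empty_stuck h; simp_all

lemma rn_split {M : UPDA Q Γ} : ∀ n : ℕ, ∀ {q c B α p c' γ},
    RN M n (q, c, B :: α) (p, c', γ) →
    (∃ γ' m, m ≤ n ∧ γ = γ' ++ α ∧ RN M m (q, c, [B]) (p, c', γ')) ∨
    (∃ q1 c1 n1 n2, n1 + n2 ≤ n ∧ RN M n1 (q, c, [B]) (q1, c1, []) ∧
      RN M n2 (q1, c1, α) (p, c', γ)) := by
  intro n
  induction n using Nat.strong_induction_on with
  | _ n ih =>
    intro q c B α p c' γ h
    cases h with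
    | refl => exact .inl ⟨[B], 0, le_refl _, rfl, .refl _⟩
    | head hs hr =>
      rename_i mid n'
      cases hs with
      | readA hm =>
          rcases ih n' (by omega) hr with ⟨γ', m, hmle, rfl, hrun⟩ |
            ⟨q1, c1, n1, n2, hle, h1, h2⟩
          · exact .inl ⟨γ', m + 1, by omega, rfl, .head (.readA hm) hrun⟩
          · exact .inr ⟨q1, c1, n1 + 1, n2, by omega, .head (.readA hm) h1, h2⟩
      | readE hm =>
          rcases ih n' (by omega) hr with ⟨γ', m, hmle, rfl, hrun⟩ |
            ⟨q1, c1, n1, n2, hle, h1, h2⟩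
          · exact .inl ⟨γ', m + 1, by omega, rfl, .head (.readE hm) hrun⟩
          · exact .inr ⟨q1, c1, n1 + 1, n2, by omega, .head (.readE hm) h1, h2⟩
      | pop hm =>
          exact .inr ⟨_, c, 1, n', by omega, RN.single (.pop hm), hr⟩
      | push hm =>
          rename_i p1 B'
          rcases ih n' (by omega) hr with ⟨γ', m, hmle, rfl, hrun⟩ |
            ⟨q1, c1, n1, n2, hle, h1, h2⟩
          · refine .inl ⟨γ' ++ [B], m + 1, by omega, by simp, .head (.push hm) ?_⟩
            simpa using hrun.lift 0 [B]
          · have h1' : RN M n1 (p1, c, [B', B]) (q1, c1, [B]) := by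
              simpa using h1.lift 0 [B]
            rcases ih n2 (by omega) h2 with ⟨γ2, m2, hm2, rfl, hrun2⟩ |
              ⟨q2, c2, n2a, n2b, hle2, h2a, h2b⟩
            · exact .inl ⟨γ2, (n1 + m2) + 1, by omega, rfl,
                .head (.push hm) (h1'.trans hrun2)⟩
            · exact .inr ⟨q2, c2, (n1 + n2a) + 1, n2b, by omega,
                .head (.push hm) (h1'.trans h2a), h2b⟩

lemma cf_congr {V T : Type*} {P : V → List (V ⊕ T) → Prop} {u v : List (V ⊕ T)}
    (h : CFDerives P u v) (x y : List (V ⊕ T)) :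
    CFDerives P (x ++ u ++ y) (x ++ v ++ y) := by
  induction h with
  | refl => exact .refl
  | tail _ hstep ih =>
      obtain ⟨x', y', N, rhs, hP, rfl, rfl⟩ := hstep
      refine ih.tail ⟨x ++ x', y' ++ y, N, rhs, hP, by simp, by simp⟩

lemma cf_append {V T : Type*} {P : V → List (V ⊕ T) → Prop} {u u' v v' : List (V ⊕ T)}
    (h1 : CFDerives P u u') (h2 : CFDerives P v v') :
    CFDerives P (u ++ v) (u' ++ v') := by
  have a1 := cf_congr h1 [] v
  have a2 := cf_congr h2 u' []
  simp at a1 a2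
  exact a1.trans a2

lemma cf_prod {V T : Type*} {P : V → List (V ⊕ T) → Prop} {N rhs} (h : P N rhs) :
    CFDerives P [Sum.inl N] rhs :=
  Relation.ReflTransGen.single ⟨[], [], N, rhs, h, rfl, by simp⟩

/-- Semantics of a grammar symbol. -/
def Sem (M : UPDA Q Γ) : (Q × Γ × Bool) ⊕ Unit → ℕ → Prop
  | Sum.inr _, k => k = 1
  | Sum.inl (q, A, false), k => ∃ p, M.Reaches (q, 0, [A]) (p, k, [])
  | Sum.inl (q, A, true), k =>
      ∃ q' γ, q' ∈ M.final ∧ γ ≠ [] ∧ M.Reaches (q, 0, [A]) (q', k, γ)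

inductive LSem (M : UPDA Q Γ) : List ((Q × Γ × Bool) ⊕ Unit) → ℕ → Prop
  | nil : LSem M [] 0
  | cons {s w k1 k2} : Sem M s k1 → LSem M w k2 → LSem M (s :: w) (k1 + k2)

lemma lsem_nil_inv {M : UPDA Q Γ} {k} (h : LSem M [] k) : k = 0 := by
  cases h; rfl

lemma lsem_cons_inv {M : UPDA Q Γ} {s w k} (h : LSem M (s :: w) k) :
    ∃ k1 k2, k = k1 + k2 ∧ Sem M s k1 ∧ LSem M w k2 := by
  cases h with
  | cons hs hw => exact ⟨_, _, rfl, hs, hw⟩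

lemma lsem_append_inv {M : UPDA Q Γ} : ∀ {u v : List ((Q × Γ × Bool) ⊕ Unit)} {k},
    LSem M (u ++ v) k → ∃ k1 k2, k = k1 + k2 ∧ LSem M u k1 ∧ LSem M v k2 := by
  intro u
  induction u with
  | nil => exact fun h => ⟨0, _, by simp, .nil, h⟩
  | cons s w ih =>
      intro v k h
      obtain ⟨k1, k2, rfl, hs, hw⟩ := lsem_cons_inv h
      obtain ⟨k2a, k2b, rfl, ha, hb⟩ := ih hw
      exact ⟨k1 + k2a, k2b, by omega, .cons hs ha, hb⟩

lemma lsem_append {M : UPDA Q Γ} {u v : List ((Q × Γ × Bool) ⊕ Unit)} {k1 k2}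
    (h1 : LSem M u k1) (h2 : LSem M v k2) : LSem M (u ++ v) (k1 + k2) := by
  induction h1 with
  | nil => simpa using h2
  | cons hs _ ih =>
      rw [Nat.add_assoc]
      exact .cons hs ih

lemma prod_sound {M : UPDA Q Γ} (hdet : M.Deterministic) {N rhs k}
    (hp : GProd M N rhs) (h : LSem M rhs k) : Sem M (Sum.inl N) k := by
  cases hp with
  | @push1 q A p B hm =>
      obtain ⟨k1, k2, rfl, hs, hrest⟩ := lsem_cons_inv h
      obtain rfl := lsem_nil_inv hrest
      obtain ⟨q', γ, hq', hγ, hr⟩ := hs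
      refine ⟨q', γ ++ [A], hq', by simp, ?_⟩
      have hl : M.Reaches (p, 0, [B, A]) (q', k1 + 0, γ ++ [A]) := by
        simpa using reaches_lift hr 0 [A]
      exact Relation.ReflTransGen.head (.push hm) hl
  | @push0 q A p B q' k0 hm hr0 =>
      obtain ⟨k1, kr, rfl, hs1, hrest⟩ := lsem_cons_inv h
      obtain ⟨k2, kz, rfl, hs2, hnil⟩ := lsem_cons_inv hrest
      obtain rfl := lsem_nil_inv hnil
      obtain ⟨p1, hr1⟩ := hs1
      obtain ⟨p2, hr2⟩ := hs2
      obtain ⟨rfl, rfl⟩ := det_empty_unique hdet hr1 hr0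
      refine ⟨p2, ?_⟩
      have hl1 : M.Reaches (p, 0, [B, A]) (p1, k1, [A]) := by
        simpa using reaches_lift hr1 0 [A]
      have hl2 : M.Reaches (p1, k1, [A]) (p2, k2 + k1, []) := by
        simpa using reaches_lift hr2 k1 []
      have : k1 + (k2 + 0) = k2 + k1 := by omega
      rw [this]
      exact Relation.ReflTransGen.head (.push hm) (hl1.trans hl2)
  | @push01 q A p B q' k0 hm hr0 =>
      obtain ⟨k1, kr, rfl, hs1, hrest⟩ := lsem_cons_inv h
      obtain ⟨k2, kz, rfl, hs2, hnil⟩ := lsem_cons_inv hrest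
      obtain rfl := lsem_nil_inv hnil
      obtain ⟨p1, hr1⟩ := hs1
      obtain ⟨q'', γ, hq'', hγ, hr2⟩ := hs2
      obtain ⟨rfl, rfl⟩ := det_empty_unique hdet hr1 hr0
      refine ⟨q'', γ, hq'', hγ, ?_⟩
      have hl1 : M.Reaches (p, 0, [B, A]) (p1, k1, [A]) := by
        simpa using reaches_lift hr1 0 [A]
      have hl2 : M.Reaches (p1, k1, [A]) (q'', k2 + k1, γ) := by
        simpa using reaches_lift hr2 k1 []
      have : k1 + (k2 + 0) = k2 + k1 := by omega
      rw [this]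
      exact Relation.ReflTransGen.head (.push hm) (hl1.trans hl2)
  | @pop q A p hm =>
      obtain rfl := lsem_nil_inv h
      exact ⟨p, Relation.ReflTransGen.single (.pop hm)⟩
  | @readA q A p b hm =>
      obtain ⟨k1, kr, rfl, hs1, hrest⟩ := lsem_cons_inv h
      obtain ⟨k2, kz, rfl, hs2, hnil⟩ := lsem_cons_inv hrest
      obtain rfl := lsem_nil_inv hnil
      obtain rfl : k1 = 1 := hs1
      cases b with
      | false =>
          obtain ⟨p2, hr2⟩ := hs2
          refine ⟨p2, ?_⟩
          have hl : M.Reaches (p, 1, [A]) (p2, k2 + 1, []) := by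
            simpa using reaches_lift hr2 1 []
          have : 1 + (k2 + 0) = k2 + 1 := by omega
          rw [this]
          exact Relation.ReflTransGen.head (.readA hm) hl
      | true =>
          obtain ⟨q'', γ, hq'', hγ, hr2⟩ := hs2
          refine ⟨q'', γ, hq'', hγ, ?_⟩
          have hl : M.Reaches (p, 1, [A]) (q'', k2 + 1, γ) := by
            simpa using reaches_lift hr2 1 []
          have : 1 + (k2 + 0) = k2 + 1 := by omega
          rw [this]
          exact Relation.ReflTransGen.head (.readA hm) hl
  | @readE q A p b hm =>
      obtain ⟨k1, kr, rfl, hs1, hrest⟩ := lsem_cons_inv h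
      obtain rfl := lsem_nil_inv hrest
      cases b with
      | false =>
          obtain ⟨p2, hr2⟩ := hs1
          exact ⟨p2, Relation.ReflTransGen.head (.readE hm) (by simpa [UPDA.Reaches] using hr2)⟩
      | true =>
          obtain ⟨q'', γ, hq'', hγ, hr2⟩ := hs1
          exact ⟨q'', γ, hq'', hγ, Relation.ReflTransGen.head (.readE hm) (by simpa [UPDA.Reaches] using hr2)⟩
  | @fin q A hq =>
      obtain rfl := lsem_nil_inv h
      exact ⟨q, [A], hq, by simp, .refl⟩

lemma lsem_preserved {M : UPDA Q Γ} (hdet : M.Deterministic) {u v : List ((Q × Γ × Bool) ⊕ Unit)}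
    {k} (hstep : ∃ x y N rhs, GProd M N rhs ∧ u = x ++ Sum.inl N :: y ∧ v = x ++ rhs ++ y)
    (h : LSem M v k) : LSem M u k := by
  obtain ⟨x, y, N, rhs, hP, rfl, rfl⟩ := hstep
  obtain ⟨k1, krest, rfl, h1, hrest⟩ := lsem_append_inv (u := x) (by simpa using h)
  obtain ⟨k2, k3, rfl, h2, h3⟩ := lsem_append_inv (u := rhs) hrest
  exact lsem_append h1 (.cons (prod_sound hdet hP h2) h3)

lemma cf_sound {M : UPDA Q Γ} (hdet : M.Deterministic) {u w : List ((Q × Γ × Bool) ⊕ Unit)} {k}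
    (h : CFDerives (GProd M) u w) (hw : LSem M w k) : LSem M u k := by
  induction h using Relation.ReflTransGen.head_induction_on with
  | refl => exact hw
  | head hs _ ih => exact lsem_preserved hdet hs ih

lemma lsem_replicate {M : UPDA Q Γ} (k : ℕ) :
    LSem M (List.replicate k (Sum.inr ())) k := by
  induction k with
  | zero => exact .nil
  | succ k ih =>
      have : LSem M (Sum.inr () :: List.replicate k (Sum.inr ())) (1 + k) :=
        .cons rfl ih
      simpa [List.replicate_succ, Nat.add_comm] using this

lemma cf_forward {M : UPDA Q Γ} (hdet : M.Deterministic) {q A b k}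
    (h : CFDerives (GProd M) [Sum.inl (q, A, b)] (List.replicate k (Sum.inr ()))) :
    Sem M (Sum.inl (q, A, b)) k := by
  have := cf_sound hdet h (lsem_replicate k)
  obtain ⟨k1, k2, hk, hs, hnil⟩ := lsem_cons_inv this
  obtain rfl := lsem_nil_inv hnil
  subst hk
  simpa using hs

lemma cf_backward {M : UPDA Q Γ} : ∀ n : ℕ, ∀ {q : Q} {A : Γ},
    (∀ p k, RN M n (q, 0, [A]) (p, k, []) →
      CFDerives (GProd M) [Sum.inl (q, A, false)] (List.replicate k (Sum.inr ()))) ∧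
    (∀ q' k γ, q' ∈ M.final → γ ≠ [] → RN M n (q, 0, [A]) (q', k, γ) →
      CFDerives (GProd M) [Sum.inl (q, A, true)] (List.replicate k (Sum.inr ()))) := by
  intro n
  induction n using Nat.strong_induction_on with
  | _ n ih =>
    intro q A
    constructor
    · intro p k h
      cases h with
      | head hs hr =>
        rename_i mid n'
        cases hs with
        | readA hm =>
            rename_i p1
            have hr1 : RN M n' (p1, 0 + 1, [A]) (p, k, []) := hr
            obtain ⟨e, rfl, hr2⟩ := rn_unshift hr1
            have ihd := (ih n' (by omega)).1 p e hr2
            have step2 : CFDerives (GProd M) [Sum.inr (), Sum.inl (p1, A, false)]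
                (Sum.inr () :: List.replicate e (Sum.inr ())) := by
              simpa using cf_congr ihd [Sum.inr ()] ([] : List _)
            have comb := (cf_prod (GProd.readA hm)).trans step2
            rw [List.replicate_succ]; exact comb
        | readE hm =>
            rename_i p1
            exact (cf_prod (GProd.readE hm)).trans ((ih n' (by omega)).1 p k hr)
        | pop hm =>
            rename_i p1
            obtain ⟨rfl, rfl, -⟩ := Prod.mk.injEq .. ▸ (rn_empty_stuck hr)
            simpa using cf_prod (GProd.pop hm)
        | push hm =>
            rename_i p1 B
            rcases rn_split n' hr with ⟨γ', m, hmle, heq, -⟩ |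
              ⟨q1, c1, n1, n2, hle, h1, h2⟩
            · exact absurd heq (by simp)
            · have h2' : RN M n2 (q1, 0 + c1, [A]) (p, k, []) := by
                simp only [Nat.zero_add]; exact h2
              obtain ⟨e, rfl, h2''⟩ := rn_unshift h2'
              have d1 := (ih n1 (by omega)).1 _ _ h1
              have d2 := (ih n2 (by omega)).1 _ _ h2''
              have step2 : CFDerives (GProd M)
                  [Sum.inl (p1, B, false), Sum.inl (q1, A, false)]
                  (List.replicate (c1 + e) (Sum.inr ())) := by
                rw [List.replicate_add]
                simpa using cf_append d1 d2
              have comb := (cf_prod (GProd.push0 hm h1.reaches)).trans step2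
              rw [Nat.add_comm e c1]
              exact comb
    · intro q' k γ hq' hγ h
      cases h with
      | refl => simpa using cf_prod (GProd.fin hq')
      | head hs hr =>
        rename_i mid n'
        cases hs with
        | readA hm =>
            rename_i p1
            have hr1 : RN M n' (p1, 0 + 1, [A]) (q', k, γ) := hr
            obtain ⟨e, rfl, hr2⟩ := rn_unshift hr1
            have ihd := (ih n' (by omega)).2 q' e γ hq' hγ hr2
            have step2 : CFDerives (GProd M) [Sum.inr (), Sum.inl (p1, A, true)]
                (Sum.inr () :: List.replicate e (Sum.inr ())) := by
              simpa using cf_congr ihd [Sum.inr ()] ([] : List _)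
            have comb := (cf_prod (GProd.readA hm)).trans step2
            rw [List.replicate_succ]; exact comb
        | readE hm =>
            rename_i p1
            exact (cf_prod (GProd.readE hm)).trans ((ih n' (by omega)).2 q' k γ hq' hγ hr)
        | pop hm =>
            rename_i p1
            have := rn_empty_stuck hr
            exact absurd (congrArg (fun c => c.2.2) this) (by simpa using hγ)
        | push hm =>
            rename_i p1 B
            rcases rn_split n' hr with ⟨γ', m, hmle, rfl, hrun⟩ |
              ⟨q1, c1, n1, n2, hle, h1, h2⟩
            · cases γ' with
              | nil =>
                  have d1 := (ih m (by omega)).1 _ _ hrun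
                  have d2 : CFDerives (GProd M) [Sum.inl (q', A, true)]
                      (List.replicate 0 (Sum.inr ())) := by
                    simpa using cf_prod (GProd.fin hq')
                  have step2 : CFDerives (GProd M)
                      [Sum.inl (p1, B, false), Sum.inl (q', A, true)]
                      (List.replicate k (Sum.inr ())) := by
                    simpa using cf_append d1 d2
                  exact (cf_prod (GProd.push01 hm hrun.reaches)).trans step2
              | cons B' rest =>
                  have d := (ih m (by omega)).2 q' k (B' :: rest) hq' (by simp) hrun
                  exact (cf_prod (GProd.push1 hm)).trans d
            · have h2' : RN M n2 (q1, 0 + c1, [A]) (q', k, γ) := by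
                simp only [Nat.zero_add]; exact h2
              obtain ⟨e, rfl, h2''⟩ := rn_unshift h2'
              have d1 := (ih n1 (by omega)).1 _ _ h1
              have d2 := (ih n2 (by omega)).2 q' e γ hq' hγ h2''
              have step2 : CFDerives (GProd M)
                  [Sum.inl (p1, B, false), Sum.inl (q1, A, true)]
                  (List.replicate (c1 + e) (Sum.inr ())) := by
                rw [List.replicate_add]
                simpa using cf_append d1 d2
              have comb := (cf_prod (GProd.push01 hm h1.reaches)).trans step2
              rw [Nat.add_comm e c1]
              exact comb

end Stmt16Aux

/-- correctness of the grammar `G` built from a unary dpda `M` in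
normal form: for every mode `[qA]` and every `x = a^k`,
(1) `[qA]_0 ⇒* x` iff `(q, x, A) ⊢* (exit[qA], ε, ε)` (the exit state being the
unique state reachable with empty stack), and
(2) `[qA]_1 ⇒* x` iff `(q, x, A) ⊢* (q', ε, γ)` for some final `q'` and
nonempty `γ`. -/
theorem stmt_16 {Q Γ : Type*} (M : UPDA Q Γ) (hdet : M.Deterministic)
    (hnf : M.NormalForm) :
    ∀ (q : Q) (A : Γ) (k : ℕ),
      (CFDerives (GProd M) [Sum.inl (q, A, false)]
          (List.replicate k (Sum.inr ())) ↔
        ∃ p, M.Reaches (q, 0, [A]) (p, k, [])) ∧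
      (CFDerives (GProd M) [Sum.inl (q, A, true)]
          (List.replicate k (Sum.inr ())) ↔
        ∃ (q' : Q) (γ : List Γ), q' ∈ M.final ∧ γ ≠ [] ∧
          M.Reaches (q, 0, [A]) (q', k, γ)) := by
  intro q A k
  refine ⟨⟨fun h => cf_forward hdet h, ?_⟩, ⟨fun h => cf_forward hdet h, ?_⟩⟩
  · rintro ⟨p, hr⟩
    obtain ⟨n, hn⟩ := reaches_rn hr
    exact (cf_backward n).1 p k hn
  · rintro ⟨q', γ, hq', hγ, hr⟩
    obtain ⟨n, hn⟩ := reaches_rn hr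
    exact (cf_backward n).2 q' k γ hq' hγ hn
end

section
/- Every unary deterministic pushdown automaton in normal form with n states and m stack symbols accepting by final states is equivalent to a context-free grammar with at most 2nm variables in which every production's right-hand side has length at most 2. -/
namespace UPDA

variable {Q Γ : Type*}

/-- Step-counted reachability. -/
inductive RN (M : UPDA Q Γ) : ℕ → Q × ℕ × List Γ → Q × ℕ × List Γ → Prop
  | refl (c) : RN M 0 c c
  | head {c c' c'' t} : M.Step c c' → RN M t c' c'' → RN M (t + 1) c c''

lemma RN.toReaches {M : UPDA Q Γ} {t c c'} (h : M.RN t c c') : M.Reaches c c' := by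
  induction h with
  | refl c => exact Relation.ReflTransGen.refl
  | head hs _ ih => exact Relation.ReflTransGen.head hs ih

lemma Reaches.toRN {M : UPDA Q Γ} {c c'} (h : M.Reaches c c') : ∃ t, M.RN t c c' := by
  induction h with
  | refl => exact ⟨0, RN.refl c⟩
  | tail _ hs ih =>
      obtain ⟨t, ht⟩ := ih
      refine ⟨t + 1, ?_⟩
      clear * - ht hs
      induction ht with
      | refl c => exact RN.head hs (RN.refl _)
      | head h1 _ ih => exact RN.head h1 (ih hs)

lemma RN.trans {M : UPDA Q Γ} {t₁ t₂ c c' c''} (h₁ : M.RN t₁ c c') (h₂ : M.RN t₂ c' c'') :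
    M.RN (t₁ + t₂) c c'' := by
  induction h₁ with
  | refl c => simpa using h₂
  | head hs _ ih =>
      have := RN.head hs (ih h₂)
      convert this using 1
      omega

/-- Shift lemma: the consumed-input counter can be translated. -/
lemma RN.shift' {M : UPDA Q Γ} {t c c'} (h : M.RN t c c') :
    ∃ d, c'.2.1 = c.2.1 + d ∧ ∀ n₀, M.RN t (c.1, n₀, c.2.2) (c'.1, n₀ + d, c'.2.2) := by
  induction h with
  | refl c => exact ⟨0, by simp, fun n₀ => by simpa using RN.refl _⟩
  | @head c c' c'' t hs _ ih =>
      obtain ⟨d, hd, hall⟩ := ih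
      cases hs with
      | @readA q n A γ p hm =>
          have hd' : c''.2.1 = (n + 1) + d := hd
          refine ⟨d + 1, by show c''.2.1 = n + (d + 1); rw [hd']; omega, fun k => RN.head (Step.readA hm) ?_⟩
          have h2 := hall (k + 1)
          have e : (k + 1) + d = k + (d + 1) := by omega
          rw [e] at h2
          exact h2
      | readE hm => exact ⟨d, hd, fun k => RN.head (Step.readE hm) (hall k)⟩
      | pop hm => exact ⟨d, hd, fun k => RN.head (Step.pop hm) (hall k)⟩
      | push hm => exact ⟨d, hd, fun k => RN.head (Step.push hm) (hall k)⟩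

lemma RN.shift {M : UPDA Q Γ} {t q n σ p n' σ'} (h : M.RN t (q, n, σ) (p, n', σ')) :
    ∃ d, n' = n + d ∧ ∀ n₀, M.RN t (q, n₀, σ) (p, n₀ + d, σ') :=
  h.shift'

lemma RN.of_empty {M : UPDA Q Γ} {t p n c} (h : M.RN t (p, n, []) c) :
    t = 0 ∧ c = (p, n, []) := by
  cases h with
  | refl _ => exact ⟨rfl, rfl⟩
  | head hs _ => cases hs

/-- Determinism of single steps. -/
lemma step_det {M : UPDA Q Γ} (hdet : M.Deterministic) {c d₁ d₂}
    (h₁ : M.Step c d₁) (h₂ : M.Step c d₂) : d₁ = d₂ := by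
  cases h₁ with
  | readA hm₁ => cases h₂ with
    | readA hm₂ => cases hdet _ _ _ _ hm₁ hm₂; rfl
    | readE hm₂ => cases hdet _ _ _ _ hm₁ hm₂
    | pop hm₂ => cases hdet _ _ _ _ hm₁ hm₂
    | push hm₂ => cases hdet _ _ _ _ hm₁ hm₂
  | readE hm₁ => cases h₂ with
    | readA hm₂ => cases hdet _ _ _ _ hm₁ hm₂
    | readE hm₂ => cases hdet _ _ _ _ hm₁ hm₂; rfl
    | pop hm₂ => cases hdet _ _ _ _ hm₁ hm₂
    | push hm₂ => cases hdet _ _ _ _ hm₁ hm₂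
  | pop hm₁ => cases h₂ with
    | readA hm₂ => cases hdet _ _ _ _ hm₁ hm₂
    | readE hm₂ => cases hdet _ _ _ _ hm₁ hm₂
    | pop hm₂ => cases hdet _ _ _ _ hm₁ hm₂; rfl
    | push hm₂ => cases hdet _ _ _ _ hm₁ hm₂
  | push hm₁ => cases h₂ with
    | readA hm₂ => cases hdet _ _ _ _ hm₁ hm₂
    | readE hm₂ => cases hdet _ _ _ _ hm₁ hm₂
    | pop hm₂ => cases hdet _ _ _ _ hm₁ hm₂
    | push hm₂ => cases hdet _ _ _ _ hm₁ hm₂; rfl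

/-- Two halting computations from the same configuration agree. -/
lemma pop_unique {M : UPDA Q Γ} (hdet : M.Deterministic) :
    ∀ t {t' c r h r' h'}, M.RN t c (r, h, ([] : List Γ)) →
      M.RN t' c (r', h', ([] : List Γ)) → r = r' ∧ h = h' := by
  intro t
  induction t with
  | zero =>
      intro t' c r h r' h' h₁ h₂
      cases h₁
      obtain ⟨-, heq⟩ := h₂.of_empty
      injection heq with h1 h2
      injection h2 with h3 h4
      exact ⟨h1.symm, h3.symm⟩
  | succ t ih =>
      intro t' c r h r' h' h₁ h₂
      cases h₁ with
      | head hs₁ h₁' =>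
          cases h₂ with
          | refl _ => cases hs₁
          | head hs₂ h₂' =>
              cases step_det hdet hs₁ hs₂
              exact ih h₁' h₂'

end UPDA
namespace UPDA

variable {Q Γ : Type*}

lemma Step.append {M : UPDA Q Γ} {q n σ p n' σ'} (ρ : List Γ)
    (h : M.Step (q, n, σ) (p, n', σ')) : M.Step (q, n, σ ++ ρ) (p, n', σ' ++ ρ) := by
  cases h with
  | readA hm => exact Step.readA hm
  | readE hm => exact Step.readE hm
  | pop hm => exact Step.pop hm
  | push hm => exact Step.push hm

lemma RN.append {M : UPDA Q Γ} (ρ : List Γ) :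
    ∀ {t c c'}, M.RN t c c' →
      M.RN t (c.1, c.2.1, c.2.2 ++ ρ) (c'.1, c'.2.1, c'.2.2 ++ ρ) := by
  intro t c c' h
  induction h with
  | refl c => exact RN.refl _
  | @head c c' c'' t hs _ ih =>
      exact RN.head (Step.append ρ hs) ih

lemma Reaches.append {M : UPDA Q Γ} (ρ : List Γ) {q n σ p n' σ'}
    (h : M.Reaches (q, n, σ) (p, n', σ')) :
    M.Reaches (q, n, σ ++ ρ) (p, n', σ' ++ ρ) := by
  obtain ⟨t, ht⟩ := h.toRN
  exact (ht.append ρ).toReaches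

lemma Reaches.shift {M : UPDA Q Γ} (d : ℕ) {q n σ p n' σ'}
    (h : M.Reaches (q, n, σ) (p, n', σ')) :
    M.Reaches (q, n + d, σ) (p, n' + d, σ') := by
  obtain ⟨t, ht⟩ := h.toRN
  obtain ⟨e, he, hall⟩ := ht.shift
  have := hall (n + d)
  rw [show n + d + e = n' + d by omega] at this
  exact this.toReaches

/-- Decomposition of a computation that starts on a stack `σ ++ ρ`. -/
lemma RN.decompose {M : UPDA Q Γ} :
    ∀ {t c c''}, M.RN t c c'' → ∀ {q n σ ρ r h τ},
      c = (q, n, σ ++ ρ) → c'' = (r, h, τ) →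
      (∃ τ', τ = τ' ++ ρ ∧ M.RN t (q, n, σ) (r, h, τ')) ∨
      (∃ t₁ t₂ s k, t = t₁ + t₂ ∧ M.RN t₁ (q, n, σ) (s, k, ([] : List Γ)) ∧
        M.RN t₂ (s, k, ρ) (r, h, τ)) := by
  intro t c c'' hrn
  induction hrn with
  | refl c =>
      intro q n σ ρ r h τ hc hc'
      subst hc
      injection hc' with e1 e2
      injection e2 with e3 e4
      subst e1; subst e3; subst e4
      exact Or.inl ⟨σ, rfl, RN.refl _⟩
  | @head c c' c'' t hs htail ih =>
      intro q n σ ρ r h τ hc hc'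
      subst hc
      match σ, hs with
      | [], hs =>
          right
          refine ⟨0, t + 1, q, n, by omega, RN.refl _, ?_⟩
          exact RN.head (by simpa using hs) (by rw [hc'] at htail; exact htail)
      | (A :: σ₁), hs =>
          cases hs with
          | @readA _ _ _ _ p hm =>
              rcases ih (q := p) (n := n + 1) (σ := A :: σ₁) (ρ := ρ) rfl hc' with
                ⟨τ', hτ, hr⟩ | ⟨t₁, t₂, s, k, ht, h1, h2⟩
              · exact Or.inl ⟨τ', hτ, RN.head (Step.readA hm) hr⟩
              · exact Or.inr ⟨t₁ + 1, t₂, s, k, by omega, RN.head (Step.readA hm) h1, h2⟩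
          | @readE _ _ _ _ p hm =>
              rcases ih (q := p) (n := n) (σ := A :: σ₁) (ρ := ρ) rfl hc' with
                ⟨τ', hτ, hr⟩ | ⟨t₁, t₂, s, k, ht, h1, h2⟩
              · exact Or.inl ⟨τ', hτ, RN.head (Step.readE hm) hr⟩
              · exact Or.inr ⟨t₁ + 1, t₂, s, k, by omega, RN.head (Step.readE hm) h1, h2⟩
          | @pop _ _ _ _ p hm =>
              rcases ih (q := p) (n := n) (σ := σ₁) (ρ := ρ) rfl hc' with
                ⟨τ', hτ, hr⟩ | ⟨t₁, t₂, s, k, ht, h1, h2⟩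
              · exact Or.inl ⟨τ', hτ, RN.head (Step.pop hm) hr⟩
              · exact Or.inr ⟨t₁ + 1, t₂, s, k, by omega, RN.head (Step.pop hm) h1, h2⟩
          | @push _ _ _ _ p B hm =>
              rcases ih (q := p) (n := n) (σ := B :: A :: σ₁) (ρ := ρ) rfl hc' with
                ⟨τ', hτ, hr⟩ | ⟨t₁, t₂, s, k, ht, h1, h2⟩
              · exact Or.inl ⟨τ', hτ, RN.head (Step.push hm) hr⟩
              · exact Or.inr ⟨t₁ + 1, t₂, s, k, by omega, RN.head (Step.push hm) h1, h2⟩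

/-- The bottom stack symbol `Z0` is never removed. -/
lemma RN.bottom {M : UPDA Q Γ} (hnf : M.NormalForm) :
    ∀ {t c c'}, M.RN t c c' → ∀ {q n σ r h τ},
      c = (q, n, σ ++ [M.Z0]) → c' = (r, h, τ) → ∃ τ', τ = τ' ++ [M.Z0] := by
  intro t c c' hrn
  induction hrn with
  | refl c =>
      intro q n σ r h τ hc hc'
      rw [hc] at hc'
      injection hc' with e1 e2
      injection e2 with e3 e4
      exact ⟨σ, e4.symm⟩
  | @head c c' c'' t hs htail ih =>
      intro q n σ r h τ hc hc'
      subst hc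
      match σ, hs with
      | [], hs =>
          cases hs with
          | readA hm => exact ih (σ := []) rfl hc'
          | readE hm => exact ih (σ := []) rfl hc'
          | pop hm => exact absurd hm (hnf.2 _ _)
          | @push _ _ _ _ p B hm => exact ih (σ := [B]) rfl hc'
      | (A :: σ₁), hs =>
          cases hs with
          | @readA _ _ _ _ p hm => exact ih (σ := A :: σ₁) rfl hc'
          | readE hm => exact ih (σ := A :: σ₁) rfl hc'
          | pop hm => exact ih (σ := σ₁) rfl hc'
          | @push _ _ _ _ p B hm => exact ih (σ := B :: A :: σ₁) rfl hc'

end UPDA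
namespace UPDA

variable {Q Γ : Type*}

open scoped Classical in
/-- The (unique) state in which `M`, started in state `p` on stack `[B]`,
empties its stack, if it ever does. -/
noncomputable def exit (M : UPDA Q Γ) (p : Q) (B : Γ) : Q :=
  if h : ∃ r k, M.Reaches (p, 0, [B]) (r, k, ([] : List Γ)) then h.choose else p

lemma exit_spec {M : UPDA Q Γ} (hdet : M.Deterministic) {p B r k}
    (h : M.Reaches (p, 0, [B]) (r, k, ([] : List Γ))) : M.exit p B = r := by
  have hex : ∃ r k, M.Reaches (p, 0, [B]) (r, k, ([] : List Γ)) := ⟨r, k, h⟩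
  classical
  rw [exit, dif_pos hex]
  obtain ⟨k', h'⟩ := hex.choose_spec
  obtain ⟨t, ht⟩ := h.toRN
  obtain ⟨t', ht'⟩ := h'.toRN
  exact (pop_unique hdet t' ht' ht).1

end UPDA

section CFD

variable {V T : Type*} {P : V → List (V ⊕ T) → Prop}

lemma CFDerives.refl (u : List (V ⊕ T)) : CFDerives P u u := Relation.ReflTransGen.refl

lemma CFDerives.trans {u v w : List (V ⊕ T)} (h₁ : CFDerives P u v) (h₂ : CFDerives P v w) :
    CFDerives P u w := Relation.ReflTransGen.trans h₁ h₂

lemma CFDerives.step {N rhs} (h : P N rhs) : CFDerives P [Sum.inl N] rhs :=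
  Relation.ReflTransGen.single ⟨[], [], N, rhs, h, rfl, by simp⟩

lemma CFDerives.congr {u v : List (V ⊕ T)} (x y : List (V ⊕ T)) (h : CFDerives P u v) :
    CFDerives P (x ++ u ++ y) (x ++ v ++ y) := by
  induction h with
  | refl => exact CFDerives.refl _
  | tail _ hstep ih =>
      obtain ⟨x', y', N, rhs, hP, he₁, he₂⟩ := hstep
      refine ih.trans (Relation.ReflTransGen.single ⟨x ++ x', y' ++ y, N, rhs, hP, ?_, ?_⟩)
      · rw [he₁]; simp
      · rw [he₂]; simp

lemma CFDerives.pair {X Y : V} {u v : List (V ⊕ T)}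
    (hx : CFDerives P [Sum.inl X] u) (hy : CFDerives P [Sum.inl Y] v) :
    CFDerives P [Sum.inl X, Sum.inl Y] (u ++ v) := by
  have h1 : CFDerives P ([] ++ [Sum.inl X] ++ [Sum.inl Y]) ([] ++ u ++ [Sum.inl Y]) :=
    CFDerives.congr _ _ hx
  have h2 : CFDerives P (u ++ [Sum.inl Y] ++ []) (u ++ v ++ []) := CFDerives.congr _ _ hy
  simpa using h1.trans (by simpa using h2)

lemma CFDerives.cons_terminal {a : V ⊕ T} {X : V} {u : List (V ⊕ T)}
    (hx : CFDerives P [Sum.inl X] u) :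
    CFDerives P [a, Sum.inl X] (a :: u) := by
  have h1 : CFDerives P ([a] ++ [Sum.inl X] ++ []) ([a] ++ u ++ []) := CFDerives.congr _ _ hx
  simpa using h1

end CFD
namespace Stmt17

open UPDA

variable {Q Γ : Type*} {n m : ℕ}

/-- The productions of the grammar: variables are `(e q, f A, b)` for modes
`[qA]` and `b ∈ {0,1}`. -/
inductive Prods (M : UPDA Q Γ) (e : Q ≃ Fin n) (f : Γ ≃ Fin m) :
    Fin n × Fin m × Bool → List ((Fin n × Fin m × Bool) ⊕ Unit) → Prop
  | pop0 {q A p} : PMove.pop p ∈ M.δ q A → Prods M e f (e q, f A, false) []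
  | readA0 {q A p} : PMove.readA p ∈ M.δ q A →
      Prods M e f (e q, f A, false) [Sum.inr (), Sum.inl (e p, f A, false)]
  | readE0 {q A p} : PMove.readE p ∈ M.δ q A →
      Prods M e f (e q, f A, false) [Sum.inl (e p, f A, false)]
  | push0 {q A p B} : PMove.push p B ∈ M.δ q A →
      Prods M e f (e q, f A, false)
        [Sum.inl (e p, f B, false), Sum.inl (e (M.exit p B), f A, false)]
  | fin1 {q A} : q ∈ M.final → Prods M e f (e q, f A, true) []
  | readA1 {q A p} : PMove.readA p ∈ M.δ q A →
      Prods M e f (e q, f A, true) [Sum.inr (), Sum.inl (e p, f A, true)]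
  | readE1 {q A p} : PMove.readE p ∈ M.δ q A →
      Prods M e f (e q, f A, true) [Sum.inl (e p, f A, true)]
  | push1a {q A p B} : PMove.push p B ∈ M.δ q A →
      Prods M e f (e q, f A, true) [Sum.inl (e p, f B, true)]
  | push1b {q A p B} : PMove.push p B ∈ M.δ q A →
      Prods M e f (e q, f A, true)
        [Sum.inl (e p, f B, false), Sum.inl (e (M.exit p B), f A, true)]

lemma prods_len {M : UPDA Q Γ} {e : Q ≃ Fin n} {f : Γ ≃ Fin m} {N rhs}
    (h : Prods M e f N rhs) : rhs.length ≤ 2 := by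
  cases h <;> simp

/-- Semantics of a variable. -/
def semV (M : UPDA Q Γ) (e : Q ≃ Fin n) (f : Γ ≃ Fin m) :
    Fin n × Fin m × Bool → ℕ → Prop :=
  fun N k =>
    match N with
    | (i, j, false) => ∃ r, M.Reaches (e.symm i, 0, [f.symm j]) (r, k, ([] : List Γ))
    | (i, j, true) =>
        ∃ p γ, M.Reaches (e.symm i, 0, [f.symm j]) (p, k, γ) ∧ p ∈ M.final

def semS (M : UPDA Q Γ) (e : Q ≃ Fin n) (f : Γ ≃ Fin m) :
    (Fin n × Fin m × Bool) ⊕ Unit → ℕ → Prop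
  | Sum.inl N, k => semV M e f N k
  | Sum.inr _, k => k = 1

def semL (M : UPDA Q Γ) (e : Q ≃ Fin n) (f : Γ ≃ Fin m) :
    List ((Fin n × Fin m × Bool) ⊕ Unit) → ℕ → Prop
  | [], k => k = 0
  | x :: xs, k => ∃ a b, semS M e f x a ∧ semL M e f xs b ∧ k = a + b

variable {M : UPDA Q Γ} {e : Q ≃ Fin n} {f : Γ ≃ Fin m}

lemma semL_append {u v k} :
    semL M e f (u ++ v) k ↔ ∃ a b, semL M e f u a ∧ semL M e f v b ∧ k = a + b := by
  induction u generalizing k with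
  | nil =>
      simp only [List.nil_append, semL]
      constructor
      · intro h; exact ⟨0, k, rfl, h, by omega⟩
      · rintro ⟨a, b, ha, hb, rfl⟩; cases ha; simpa using hb
  | cons x xs ih =>
      simp only [List.cons_append, semL]
      constructor
      · rintro ⟨a, b, hx, hrest, rfl⟩
        obtain ⟨a', b', h1, h2, rfl⟩ := ih.1 hrest
        exact ⟨a + a', b', ⟨a, a', hx, h1, rfl⟩, h2, by omega⟩
      · rintro ⟨a, b, ⟨a1, a2, hx, hxs, rfl⟩, hv, rfl⟩
        exact ⟨a1, a2 + b, hx, ih.2 ⟨a2, b, hxs, hv, rfl⟩, by omega⟩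

lemma semL_replicate (k : ℕ) :
    semL M e f (List.replicate k (Sum.inr ())) k := by
  induction k with
  | zero => rfl
  | succ k ih => exact ⟨1, k, rfl, ih, by omega⟩

lemma semL_singleton {x k} : semL M e f [x] k ↔ semS M e f x k := by
  constructor
  · rintro ⟨a, b, hx, hb, rfl⟩; cases hb; simpa using hx
  · intro h; exact ⟨k, 0, h, rfl, by omega⟩

lemma prod_sound (hdet : M.Deterministic) {N rhs b}
    (hP : Prods M e f N rhs) (hsem : semL M e f rhs b) : semV M e f N b := by
  cases hP with
  | @pop0 q A p hm =>
      cases hsem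
      exact ⟨p, by simp only [Equiv.symm_apply_apply]; exact
        (Relation.ReflTransGen.single (Step.pop hm) : M.Reaches (q, 0, [A]) (p, 0, []))⟩
  | @readA0 q A p hm =>
      obtain ⟨a, b', ha, hrest, rfl⟩ := hsem
      cases ha
      obtain ⟨r, hr⟩ := semL_singleton.1 hrest
      simp only [semV, Equiv.symm_apply_apply] at hr ⊢
      refine ⟨r, ?_⟩
      rw [show 1 + b' = b' + 1 by omega]
      exact Relation.ReflTransGen.head (Step.readA hm) (hr.shift 1)
  | @readE0 q A p hm =>
      obtain ⟨r, hr⟩ := semL_singleton.1 hsem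
      simp only [semV, Equiv.symm_apply_apply] at hr ⊢
      exact ⟨r, Relation.ReflTransGen.head (Step.readE hm) hr⟩
  | @push0 q A p B hm =>
      obtain ⟨b₁, b₂', h1, hrest, rfl⟩ := hsem
      obtain ⟨b₂, z, h2, hz, rfl⟩ := hrest
      cases hz
      obtain ⟨r, hr⟩ := h1
      obtain ⟨r', hr'⟩ := h2
      simp only [semV, Equiv.symm_apply_apply] at hr hr' ⊢
      rw [exit_spec hdet hr] at hr'
      refine ⟨r', ?_⟩
      have c1 : M.Reaches (p, 0, [B, A]) (r, b₁, [A]) := by simpa using hr.append [A]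
      have c2 : M.Reaches (r, b₁, [A]) (r', b₂ + b₁, []) := by simpa using hr'.shift b₁
      rw [show b₁ + (b₂ + 0) = b₂ + b₁ by omega]
      exact Relation.ReflTransGen.head (Step.push hm) (c1.trans c2)
  | @fin1 q A hq =>
      cases hsem
      simp only [semV, Equiv.symm_apply_apply]
      exact ⟨q, [A], Relation.ReflTransGen.refl, hq⟩
  | @readA1 q A p hm =>
      obtain ⟨a, b', ha, hrest, rfl⟩ := hsem
      cases ha
      obtain ⟨g, γ, hg, hfin⟩ := semL_singleton.1 hrest
      simp only [semV, Equiv.symm_apply_apply] at hg ⊢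
      refine ⟨g, γ, ?_, hfin⟩
      rw [show 1 + b' = b' + 1 by omega]
      exact Relation.ReflTransGen.head (Step.readA hm) (hg.shift 1)
  | @readE1 q A p hm =>
      obtain ⟨g, γ, hg, hfin⟩ := semL_singleton.1 hsem
      simp only [semV, Equiv.symm_apply_apply] at hg ⊢
      exact ⟨g, γ, Relation.ReflTransGen.head (Step.readE hm) hg, hfin⟩
  | @push1a q A p B hm =>
      obtain ⟨g, γ, hg, hfin⟩ := semL_singleton.1 hsem
      simp only [semV, Equiv.symm_apply_apply] at hg ⊢
      refine ⟨g, γ ++ [A], ?_, hfin⟩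
      exact Relation.ReflTransGen.head (Step.push hm) (hg.append [A])
  | @push1b q A p B hm =>
      obtain ⟨b₁, b₂', h1, hrest, rfl⟩ := hsem
      obtain ⟨b₂, z, h2, hz, rfl⟩ := hrest
      cases hz
      obtain ⟨r, hr⟩ := h1
      obtain ⟨g, γ, hg, hfin⟩ := h2
      simp only [semV, Equiv.symm_apply_apply] at hr hg ⊢
      rw [exit_spec hdet hr] at hg
      refine ⟨g, γ, ?_, hfin⟩
      have c1 : M.Reaches (p, 0, [B, A]) (r, b₁, [A]) := by simpa using hr.append [A]
      have c2 : M.Reaches (r, b₁, [A]) (g, b₂ + b₁, γ) := by simpa using hg.shift b₁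
      rw [show b₁ + (b₂ + 0) = b₂ + b₁ by omega]
      exact Relation.ReflTransGen.head (Step.push hm) (c1.trans c2)

lemma derives_sound (hdet : M.Deterministic) {u w k}
    (h : CFDerives (Prods M e f) u w) (hw : semL M e f w k) : semL M e f u k := by
  induction h with
  | refl => exact hw
  | tail _ hstep ih =>
      obtain ⟨x, y, N, rhs, hP, he₁, he₂⟩ := hstep
      apply ih
      subst he₁ he₂
      rw [List.append_assoc] at hw
      obtain ⟨a, b, hx, hrest, rfl⟩ := semL_append.1 hw
      obtain ⟨b₁, b₂, hrhs, hy, rfl⟩ := semL_append.1 hrest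
      have hN : semS M e f (Sum.inl N) b₁ := prod_sound hdet hP hrhs
      have hgoal : x ++ Sum.inl N :: y = x ++ ([Sum.inl N] ++ y) := rfl
      rw [hgoal]
      exact semL_append.2 ⟨a, b₁ + b₂, hx,
        semL_append.2 ⟨b₁, b₂, semL_singleton.2 hN, hy, rfl⟩, rfl⟩

end Stmt17
namespace Stmt17

open UPDA

variable {Q Γ : Type*} {n m : ℕ} {M : UPDA Q Γ} {e : Q ≃ Fin n} {f : Γ ≃ Fin m}

lemma claim1 (hdet : M.Deterministic) :
    ∀ t q A r h, M.RN t (q, 0, [A]) (r, h, ([] : List Γ)) →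
      CFDerives (Prods M e f) [Sum.inl (e q, f A, false)]
        (List.replicate h (Sum.inr ())) := by
  intro t
  induction t using Nat.strong_induction_on with
  | _ t ih =>
    intro q A r h hrn
    cases hrn with
    | @head _ c' _ t' hs htail =>
      cases hs with
      | @readA _ _ _ _ p hm =>
          obtain ⟨d, hd, hall⟩ := htail.shift
          have hall0 := hall 0
          have d1 := ih t' (by omega) p A r (0 + d) hall0
          have base : CFDerives (Prods M e f) [Sum.inl (e q, f A, false)]
              [Sum.inr (), Sum.inl (e p, f A, false)] :=
            CFDerives.step (Prods.readA0 hm)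
          have d2 := base.trans (CFDerives.cons_terminal d1)
          rw [show h = d + 1 by omega, List.replicate_succ]
          simpa using d2
      | @readE _ _ _ _ p hm =>
          have d1 := ih t' (by omega) p A r h htail
          exact (CFDerives.step (Prods.readE0 hm)).trans d1
      | @pop _ _ _ _ p hm =>
          obtain ⟨-, heq⟩ := htail.of_empty
          injection heq with e1 e2
          injection e2 with e3 e4
          rw [e3]
          exact CFDerives.step (Prods.pop0 hm)
      | @push _ _ _ _ p B hm =>
          rcases htail.decompose (q := p) (n := 0) (σ := [B]) (ρ := [A]) rfl rfl with
            ⟨τ', hτ, -⟩ | ⟨t₁, t₂, s, k, ht, h1, h2⟩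
          · exact absurd hτ.symm (by simp)
          · have hexit : M.exit p B = s := exit_spec hdet h1.toReaches
            obtain ⟨d, hd, hall⟩ := h2.shift
            have dB := ih t₁ (by omega) p B s k h1
            have dA := ih t₂ (by omega) s A r (0 + d) (hall 0)
            have base : CFDerives (Prods M e f) [Sum.inl (e q, f A, false)]
                [Sum.inl (e p, f B, false), Sum.inl (e s, f A, false)] := by
              rw [← hexit]; exact CFDerives.step (Prods.push0 hm)
            have d2 := base.trans (CFDerives.pair dB dA)
            rw [show h = k + d by omega, List.replicate_add]
            simpa using d2

lemma claim2 (hdet : M.Deterministic) :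
    ∀ t q A g h γ, M.RN t (q, 0, [A]) (g, h, γ) → γ ≠ [] → g ∈ M.final →
      CFDerives (Prods M e f) [Sum.inl (e q, f A, true)]
        (List.replicate h (Sum.inr ())) := by
  intro t
  induction t using Nat.strong_induction_on with
  | _ t ih =>
    intro q A g h γ hrn hγ hfin
    cases hrn with
    | refl _ => exact CFDerives.step (Prods.fin1 hfin)
    | @head _ c' _ t' hs htail =>
      cases hs with
      | @readA _ _ _ _ p hm =>
          obtain ⟨d, hd, hall⟩ := htail.shift
          have d1 := ih t' (by omega) p A g (0 + d) γ (hall 0) hγ hfin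
          have base : CFDerives (Prods M e f) [Sum.inl (e q, f A, true)]
              [Sum.inr (), Sum.inl (e p, f A, true)] :=
            CFDerives.step (Prods.readA1 hm)
          have d2 := base.trans (CFDerives.cons_terminal d1)
          rw [show h = d + 1 by omega, List.replicate_succ]
          simpa using d2
      | @readE _ _ _ _ p hm =>
          have d1 := ih t' (by omega) p A g h γ htail hγ hfin
          exact (CFDerives.step (Prods.readE1 hm)).trans d1
      | @pop _ _ _ _ p hm =>
          obtain ⟨-, heq⟩ := htail.of_empty
          injection heq with e1 e2
          injection e2 with e3 e4
          exact absurd e4 hγ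
      | @push _ _ _ _ p B hm =>
          rcases htail.decompose (q := p) (n := 0) (σ := [B]) (ρ := [A]) rfl rfl with
            ⟨τ', hτ, hr⟩ | ⟨t₁, t₂, s, k, ht, h1, h2⟩
          · rcases List.eq_nil_or_concat τ' with rfl | ⟨l, z, rfl⟩
            · -- acceptance exactly when `B` is popped
              have hexit : M.exit p B = g := exit_spec hdet hr.toReaches
              have dB := claim1 hdet (e := e) (f := f) t' p B g h hr
              have dA : CFDerives (Prods M e f) [Sum.inl (e g, f A, true)]
                  (List.replicate 0 (Sum.inr ())) :=
                CFDerives.step (Prods.fin1 hfin)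
              have base : CFDerives (Prods M e f) [Sum.inl (e q, f A, true)]
                  [Sum.inl (e p, f B, false), Sum.inl (e g, f A, true)] := by
                rw [← hexit]; exact CFDerives.step (Prods.push1b hm)
              have d2 := base.trans (CFDerives.pair dB dA)
              simpa using d2
            · have hτ' : l.concat z ≠ ([] : List Γ) := by simp
              have d1 := ih t' (by omega) p B g h (l.concat z) hr hτ' hfin
              exact (CFDerives.step (Prods.push1a hm)).trans d1
          · have hexit : M.exit p B = s := exit_spec hdet h1.toReaches
            obtain ⟨d, hd, hall⟩ := h2.shift
            have dB := claim1 hdet (e := e) (f := f) t₁ p B s k h1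
            have dA := ih t₂ (by omega) s A g (0 + d) γ (hall 0) hγ hfin
            have base : CFDerives (Prods M e f) [Sum.inl (e q, f A, true)]
                [Sum.inl (e p, f B, false), Sum.inl (e s, f A, true)] := by
              rw [← hexit]; exact CFDerives.step (Prods.push1b hm)
            have d2 := base.trans (CFDerives.pair dB dA)
            rw [show h = k + d by omega, List.replicate_add]
            simpa using d2

end Stmt17
/-- every unary dpda in normal form with `n` states and `m` stack
symbols, accepting by final states, is equivalent to a context-free grammar
(over the one-letter terminal alphabet) with at most `2nm` variables in which
every right-hand side has length at most `2`. -/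
theorem stmt_17 {Q Γ : Type*} (M : UPDA Q Γ) (hdet : M.Deterministic)
    (hnf : M.NormalForm) [Fintype Q] [Fintype Γ] (n m : ℕ)
    (hn : Fintype.card Q = n) (hm : Fintype.card Γ = m) :
    ∃ (V : Type) (_ : Fintype V) (P : V → List (V ⊕ Unit) → Prop) (S : V),
      Fintype.card V ≤ 2 * n * m ∧
      (∀ N rhs, P N rhs → rhs.length ≤ 2) ∧
      ∀ k : ℕ,
        (CFDerives P [Sum.inl S] (List.replicate k (Sum.inr ())) ↔
          M.Accepts k) := by
  classical
  have e : Q ≃ Fin n := Fintype.equivFinOfCardEq hn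
  have f : Γ ≃ Fin m := Fintype.equivFinOfCardEq hm
  refine ⟨Fin n × Fin m × Bool, inferInstance, Stmt17.Prods M e f,
    (e M.start, f M.Z0, true), ?_, fun N rhs h => Stmt17.prods_len h, fun k => ⟨?_, ?_⟩⟩
  · have : Fintype.card (Fin n × Fin m × Bool) = 2 * n * m := by
      simp [Fintype.card_prod]
      ring
    omega
  · intro hder
    have hsem := Stmt17.derives_sound hdet hder (Stmt17.semL_replicate k)
    have hS := Stmt17.semL_singleton.1 hsem
    simp only [Stmt17.semS, Stmt17.semV, Equiv.symm_apply_apply] at hS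
    exact hS
  · rintro ⟨p, γ, hreach, hfin⟩
    obtain ⟨t, ht⟩ := hreach.toRN
    obtain ⟨τ', hτ⟩ := ht.bottom hnf (q := M.start) (n := 0) (σ := []) rfl rfl
    have hγ : γ ≠ [] := by rw [hτ]; simp
    exact Stmt17.claim2 hdet t M.start M.Z0 p k γ ht hγ hfin
end

section
/- For every unary pda M in normal form with n states accepting by final states, there exists an equivalent pda M' in normal form with 2n + 1 states and the same stack alphabet such that every input word w is accepted by M' if and only if the state of M' reached immediately after reading the last symbol of w is final; moreover, if M is deterministic then M' is deterministic. -/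
----------------------------------------------------------------
-- auxiliary development
----------------------------------------------------------------
namespace Stmt18

open PMove

variable {Q Γ : Type*}

/-- Stacks reachable from a stack with `Z0` at the bottom keep `Z0` at the
bottom (normal form: `Z0` never popped). -/
lemma stack_bottom (N : UPDA Q Γ) (hN : N.NormalForm) {c c' : Q × ℕ × List Γ}
    (h : N.Reaches c c') {δ₀ : List Γ} (h0 : c.2.2 = δ₀ ++ [N.Z0]) :
    ∃ δ, c'.2.2 = δ ++ [N.Z0] := by
  induction h with
  | refl => exact ⟨δ₀, h0⟩
  | tail hr hs ih =>
    obtain ⟨δ, hδ⟩ := ih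
    cases hs with
    | readA hm => exact ⟨δ, hδ⟩
    | readE hm => exact ⟨δ, hδ⟩
    | @push q n A γ p B hm =>
      refine ⟨B :: δ, ?_⟩
      simp only at hδ ⊢
      rw [hδ]
      simp
    | @pop q n A γ p hm =>
      simp only at hδ
      cases δ with
      | nil =>
        simp at hδ
        exact absurd (hδ.1 ▸ hm) (hN.2 q p)
      | cons B δ' =>
        simp at hδ
        exact ⟨δ', hδ.2⟩

section Relabel

variable {Q₁ Q₂ : Type*}

def pmap (f : Q₁ → Q₂) : PMove Q₁ Γ → PMove Q₂ Γ
  | .readA p => .readA (f p)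
  | .readE p => .readE (f p)
  | .pop p => .pop (f p)
  | .push p B => .push (f p) B

def relabel (e : Q₁ ≃ Q₂) (M : UPDA Q₁ Γ) : UPDA Q₂ Γ where
  start := e M.start
  Z0 := M.Z0
  final := e '' M.final
  δ := fun q A => pmap e '' M.δ (e.symm q) A

lemma relabel_step_fwd (e : Q₁ ≃ Q₂) (M : UPDA Q₁ Γ) {c c' : Q₁ × ℕ × List Γ}
    (h : M.Step c c') :
    (relabel e M).Step (e c.1, c.2) (e c'.1, c'.2) := by
  cases h with
  | @readA q n A γ p hm =>
    exact UPDA.Step.readA (by exact ⟨.readA p, by simpa [relabel] using hm, rfl⟩)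
  | @readE q n A γ p hm =>
    exact UPDA.Step.readE (by exact ⟨.readE p, by simpa [relabel] using hm, rfl⟩)
  | @pop q n A γ p hm =>
    exact UPDA.Step.pop (by exact ⟨.pop p, by simpa [relabel] using hm, rfl⟩)
  | @push q n A γ p B hm =>
    exact UPDA.Step.push (by exact ⟨.push p B, by simpa [relabel] using hm, rfl⟩)

lemma relabel_step_bwd (e : Q₁ ≃ Q₂) (M : UPDA Q₁ Γ) {c c' : Q₂ × ℕ × List Γ}
    (h : (relabel e M).Step c c') :
    M.Step (e.symm c.1, c.2) (e.symm c'.1, c'.2) := by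
  cases h with
  | @readA q n A γ p hm =>
    obtain ⟨u, hu, hequ⟩ := hm
    cases u <;> simp [pmap] at hequ
    subst hequ
    rw [Equiv.symm_apply_apply]
    exact UPDA.Step.readA hu
  | @readE q n A γ p hm =>
    obtain ⟨u, hu, hequ⟩ := hm
    cases u <;> simp [pmap] at hequ
    subst hequ
    rw [Equiv.symm_apply_apply]
    exact UPDA.Step.readE hu
  | @pop q n A γ p hm =>
    obtain ⟨u, hu, hequ⟩ := hm
    cases u <;> simp [pmap] at hequ
    subst hequ
    rw [Equiv.symm_apply_apply]
    exact UPDA.Step.pop hu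
  | @push q n A γ p B hm =>
    obtain ⟨u, hu, hequ⟩ := hm
    cases u <;> simp [pmap] at hequ
    obtain ⟨h1, rfl⟩ := hequ
    subst h1
    rw [Equiv.symm_apply_apply]
    exact UPDA.Step.push hu

lemma relabel_reaches_fwd (e : Q₁ ≃ Q₂) (M : UPDA Q₁ Γ) {c c' : Q₁ × ℕ × List Γ}
    (h : M.Reaches c c') :
    (relabel e M).Reaches (e c.1, c.2) (e c'.1, c'.2) := by
  induction h with
  | refl => exact Relation.ReflTransGen.refl
  | tail hr hs ih => exact ih.tail (relabel_step_fwd e M hs)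

lemma relabel_reaches_bwd (e : Q₁ ≃ Q₂) (M : UPDA Q₁ Γ) {c c' : Q₂ × ℕ × List Γ}
    (h : (relabel e M).Reaches c c') :
    M.Reaches (e.symm c.1, c.2) (e.symm c'.1, c'.2) := by
  induction h with
  | refl => exact Relation.ReflTransGen.refl
  | tail hr hs ih => exact ih.tail (relabel_step_bwd e M hs)

end Relabel

end Stmt18

namespace Stmt18

open PMove

variable {Q Γ : Type*}

/-- `none` = fresh start state; `some (inl q)` = simulate `q`, no pending read;
`some (inr q)` = simulate `q` with one delayed (pending) input symbol. -/
abbrev St (Q : Type*) := Option (Q ⊕ Q)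

def mapSync (m : PMove Q Γ) : PMove (St Q) Γ :=
  match m with
  | .readA p => .readE (some (.inr p))
  | .readE p => .readE (some (.inl p))
  | .pop p => .pop (some (.inl p))
  | .push p B => .push (some (.inl p)) B

def mapDebt (m : PMove Q Γ) : PMove (St Q) Γ :=
  match m with
  | .readA p => .readA (some (.inr p))
  | .readE p => .readE (some (.inr p))
  | .pop p => .pop (some (.inr p))
  | .push p B => .push (some (.inr p)) B

def auxM (M : UPDA Q Γ) : UPDA (St Q) Γ where
  start := none
  Z0 := M.Z0
  final := {x | (∃ q ∈ M.final, x = some (Sum.inl q)) ∨ (x = none ∧ M.Accepts 0)}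
  δ := fun s A =>
    match s with
    | none => mapSync '' M.δ M.start A
    | some (.inl q) => mapSync '' M.δ q A
    | some (.inr q) =>
        {m | (q ∈ M.final ∧ m = .readA (some (.inl q))) ∨
             (q ∉ M.final ∧ m ∈ mapDebt '' M.δ q A)}

lemma auxM_normal (M : UPDA Q Γ) (hnf : M.NormalForm) : (auxM M).NormalForm := by
  constructor
  · rintro s A p hm
    match s with
    | none | some (.inl _) =>
      obtain ⟨u, hu, hequ⟩ := hm
      cases u <;> simp [mapSync] at hequ
      obtain ⟨-, rfl⟩ := hequ
      exact hnf.1 _ _ _ hu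
    | some (.inr q) =>
      rcases hm with ⟨-, h⟩ | ⟨-, u, hu, hequ⟩
      · exact absurd h (by simp)
      · cases u <;> simp [mapDebt] at hequ
        obtain ⟨-, rfl⟩ := hequ
        exact hnf.1 _ _ _ hu
  · rintro s p hm
    match s with
    | none | some (.inl _) =>
      obtain ⟨u, hu, hequ⟩ := hm
      cases u <;> simp [mapSync] at hequ
      exact hnf.2 _ _ hu
    | some (.inr q) =>
      rcases hm with ⟨-, h⟩ | ⟨-, u, hu, hequ⟩
      · exact absurd h (by simp)
      · cases u <;> simp [mapDebt] at hequ
        exact hnf.2 _ _ hu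

lemma auxM_det (M : UPDA Q Γ) (hd : M.Deterministic) : (auxM M).Deterministic := by
  rintro s A m₁ m₂ h₁ h₂
  match s with
  | none =>
    obtain ⟨u₁, hu₁, rfl⟩ := h₁
    obtain ⟨u₂, hu₂, rfl⟩ := h₂
    rw [hd _ _ _ _ hu₁ hu₂]
  | some (.inl q) =>
    obtain ⟨u₁, hu₁, rfl⟩ := h₁
    obtain ⟨u₂, hu₂, rfl⟩ := h₂
    rw [hd _ _ _ _ hu₁ hu₂]
  | some (.inr q) =>
    rcases h₁ with ⟨hq, rfl⟩ | ⟨hq, u₁, hu₁, rfl⟩ <;>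
      rcases h₂ with ⟨hq', rfl⟩ | ⟨hq', u₂, hu₂, rfl⟩
    · rfl
    · exact absurd hq hq'
    · exact absurd hq' hq
    · rw [hd _ _ _ _ hu₁ hu₂]

/-- Projection of an `auxM`-configuration back to an `M`-configuration. -/
def proj (M : UPDA Q Γ) : St Q × ℕ × List Γ → Q × ℕ × List Γ
  | (none, k, γ) => (M.start, k, γ)
  | (some (.inl q), k, γ) => (q, k, γ)
  | (some (.inr q), k, γ) => (q, k + 1, γ)

lemma bwd_step (M : UPDA Q Γ) {c c' : St Q × ℕ × List Γ}
    (h : (auxM M).Step c c') : M.Reaches (proj M c) (proj M c') := by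
  cases h with
  | @readA s n A γ p hm =>
    match s with
    | none | some (.inl _) =>
      obtain ⟨u, hu, hequ⟩ := hm
      cases u <;> simp [mapSync] at hequ
    | some (.inr q) =>
      rcases hm with ⟨hq, hequ⟩ | ⟨hq, u, hu, hequ⟩
      · cases hequ
        exact Relation.ReflTransGen.refl
      · cases u <;> simp [mapDebt] at hequ
        subst hequ
        exact Relation.ReflTransGen.single (UPDA.Step.readA hu)
  | @readE s n A γ p hm =>
    match s with
    | none | some (.inl _) =>
      obtain ⟨u, hu, hequ⟩ := hm
      cases u <;> simp [mapSync] at hequ <;> subst hequ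
      · exact Relation.ReflTransGen.single (UPDA.Step.readA hu)
      · exact Relation.ReflTransGen.single (UPDA.Step.readE hu)
    | some (.inr q) =>
      rcases hm with ⟨hq, hequ⟩ | ⟨hq, u, hu, hequ⟩
      · cases hequ
      · cases u <;> simp [mapDebt] at hequ
        subst hequ
        exact Relation.ReflTransGen.single (UPDA.Step.readE hu)
  | @pop s n A γ p hm =>
    match s with
    | none | some (.inl _) =>
      obtain ⟨u, hu, hequ⟩ := hm
      cases u <;> simp [mapSync] at hequ
      subst hequ
      exact Relation.ReflTransGen.single (UPDA.Step.pop hu)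
    | some (.inr q) =>
      rcases hm with ⟨hq, hequ⟩ | ⟨hq, u, hu, hequ⟩
      · cases hequ
      · cases u <;> simp [mapDebt] at hequ
        subst hequ
        exact Relation.ReflTransGen.single (UPDA.Step.pop hu)
  | @push s n A γ p B hm =>
    match s with
    | none | some (.inl _) =>
      obtain ⟨u, hu, hequ⟩ := hm
      cases u <;> simp [mapSync] at hequ
      obtain ⟨rfl, rfl⟩ := hequ
      exact Relation.ReflTransGen.single (UPDA.Step.push hu)
    | some (.inr q) =>
      rcases hm with ⟨hq, hequ⟩ | ⟨hq, u, hu, hequ⟩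
      · cases hequ
      · cases u <;> simp [mapDebt] at hequ
        obtain ⟨rfl, rfl⟩ := hequ
        exact Relation.ReflTransGen.single (UPDA.Step.push hu)

lemma bwd_reaches (M : UPDA Q Γ) {c c' : St Q × ℕ × List Γ}
    (h : (auxM M).Reaches c c') : M.Reaches (proj M c) (proj M c') := by
  induction h with
  | refl => exact Relation.ReflTransGen.refl
  | tail hr hs ih => exact ih.trans (bwd_step M hs)

/-- The fresh start state is never re-entered. -/
lemma none_eq (M : UPDA Q Γ) {c c' : St Q × ℕ × List Γ}
    (h : (auxM M).Reaches c c') (hc : c'.1 = none) : c' = c := by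
  induction h with
  | refl => rfl
  | tail hr hs ih =>
    exfalso
    cases hs with
    | @readA s n A γ p hm =>
      simp at hc; subst hc
      match s with
      | none | some (.inl _) =>
        obtain ⟨u, hu, hequ⟩ := hm
        cases u <;> simp [mapSync] at hequ
      | some (.inr q) =>
        rcases hm with ⟨hq, hequ⟩ | ⟨hq, u, hu, hequ⟩
        · cases hequ
        · cases u <;> simp [mapDebt] at hequ
    | @readE s n A γ p hm =>
      simp at hc; subst hc
      match s with
      | none | some (.inl _) =>
        obtain ⟨u, hu, hequ⟩ := hm
        cases u <;> simp [mapSync] at hequ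
      | some (.inr q) =>
        rcases hm with ⟨hq, hequ⟩ | ⟨hq, u, hu, hequ⟩
        · cases hequ
        · cases u <;> simp [mapDebt] at hequ
    | @pop s n A γ p hm =>
      simp at hc; subst hc
      match s with
      | none | some (.inl _) =>
        obtain ⟨u, hu, hequ⟩ := hm
        cases u <;> simp [mapSync] at hequ
      | some (.inr q) =>
        rcases hm with ⟨hq, hequ⟩ | ⟨hq, u, hu, hequ⟩
        · cases hequ
        · cases u <;> simp [mapDebt] at hequ
    | @push s n A γ p B hm =>
      simp at hc; subst hc
      match s with
      | none | some (.inl _) =>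
        obtain ⟨u, hu, hequ⟩ := hm
        cases u <;> simp [mapSync] at hequ
      | some (.inr q) =>
        rcases hm with ⟨hq, hequ⟩ | ⟨hq, u, hu, hequ⟩
        · cases hequ
        · cases u <;> simp [mapDebt] at hequ

end Stmt18

namespace Stmt18

open PMove

variable {Q Γ : Type*}

lemma sync_mem (M : UPDA Q Γ) {q A u} (hu : u ∈ M.δ q A) :
    mapSync u ∈ (auxM M).δ (some (Sum.inl q)) A := ⟨u, hu, rfl⟩

lemma none_mem (M : UPDA Q Γ) {A u} (hu : u ∈ M.δ M.start A) :
    mapSync u ∈ (auxM M).δ none A := ⟨u, hu, rfl⟩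

lemma debt_mem (M : UPDA Q Γ) {q A u} (hq : q ∉ M.final) (hu : u ∈ M.δ q A) :
    mapDebt u ∈ (auxM M).δ (some (Sum.inr q)) A := Or.inr ⟨hq, u, hu, rfl⟩

lemma pay_mem (M : UPDA Q Γ) {q : Q} {A : Γ} (hq : q ∈ M.final) :
    PMove.readA (some (Sum.inl q)) ∈ (auxM M).δ (some (Sum.inr q)) A := Or.inl ⟨hq, rfl⟩

/-- Correspondence between `M`-configurations and `auxM M`-configurations. -/
def Rep (M : UPDA Q Γ) (q : Q) (k : ℕ) (γ : List Γ) (c : St Q × ℕ × List Γ) : Prop :=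
  c = (some (Sum.inl q), k, γ) ∨
  (q = M.start ∧ k = 0 ∧ γ = [M.Z0] ∧ c = (none, 0, [M.Z0])) ∨
  (∃ k0, k = k0 + 1 ∧ c = (some (Sum.inr q), k0, γ))

lemma fwd_step (M : UPDA Q Γ) {q k γ p k' γ'} (h : M.Step (q, k, γ) (p, k', γ'))
    {c} (hc : Rep M q k γ c) :
    ∃ c', Rep M p k' γ' c' ∧ (auxM M).Reaches c c' := by
  classical
  rcases hc with rfl | ⟨rfl, rfl, rfl, rfl⟩ | ⟨k0, rfl, rfl⟩
  · cases h with
    | readA hm =>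
      exact ⟨_, Or.inr (Or.inr ⟨k, rfl, rfl⟩),
        Relation.ReflTransGen.single (UPDA.Step.readE (sync_mem M hm))⟩
    | readE hm =>
      exact ⟨_, Or.inl rfl,
        Relation.ReflTransGen.single (UPDA.Step.readE (sync_mem M hm))⟩
    | pop hm =>
      exact ⟨_, Or.inl rfl,
        Relation.ReflTransGen.single (UPDA.Step.pop (sync_mem M hm))⟩
    | push hm =>
      exact ⟨_, Or.inl rfl,
        Relation.ReflTransGen.single (UPDA.Step.push (sync_mem M hm))⟩
  · cases h with
    | readA hm =>
      exact ⟨_, Or.inr (Or.inr ⟨0, rfl, rfl⟩),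
        Relation.ReflTransGen.single (UPDA.Step.readE (none_mem M hm))⟩
    | readE hm =>
      exact ⟨_, Or.inl rfl,
        Relation.ReflTransGen.single (UPDA.Step.readE (none_mem M hm))⟩
    | pop hm =>
      exact ⟨_, Or.inl rfl,
        Relation.ReflTransGen.single (UPDA.Step.pop (none_mem M hm))⟩
    | push hm =>
      exact ⟨_, Or.inl rfl,
        Relation.ReflTransGen.single (UPDA.Step.push (none_mem M hm))⟩
  · by_cases hq : q ∈ M.final
    · cases h with
      | readA hm =>
        exact ⟨_, Or.inr (Or.inr ⟨k0 + 1, rfl, rfl⟩),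
          Relation.ReflTransGen.head (UPDA.Step.readA (pay_mem M hq))
            (Relation.ReflTransGen.single (UPDA.Step.readE (sync_mem M hm)))⟩
      | readE hm =>
        exact ⟨_, Or.inl rfl,
          Relation.ReflTransGen.head (UPDA.Step.readA (pay_mem M hq))
            (Relation.ReflTransGen.single (UPDA.Step.readE (sync_mem M hm)))⟩
      | pop hm =>
        exact ⟨_, Or.inl rfl,
          Relation.ReflTransGen.head (UPDA.Step.readA (pay_mem M hq))
            (Relation.ReflTransGen.single (UPDA.Step.pop (sync_mem M hm)))⟩
      | push hm =>
        exact ⟨_, Or.inl rfl,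
          Relation.ReflTransGen.head (UPDA.Step.readA (pay_mem M hq))
            (Relation.ReflTransGen.single (UPDA.Step.push (sync_mem M hm)))⟩
    · cases h with
      | readA hm =>
        exact ⟨_, Or.inr (Or.inr ⟨k0 + 1, rfl, rfl⟩),
          Relation.ReflTransGen.single (UPDA.Step.readA (debt_mem M hq hm))⟩
      | readE hm =>
        exact ⟨_, Or.inr (Or.inr ⟨k0, rfl, rfl⟩),
          Relation.ReflTransGen.single (UPDA.Step.readE (debt_mem M hq hm))⟩
      | pop hm =>
        exact ⟨_, Or.inr (Or.inr ⟨k0, rfl, rfl⟩),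
          Relation.ReflTransGen.single (UPDA.Step.pop (debt_mem M hq hm))⟩
      | push hm =>
        exact ⟨_, Or.inr (Or.inr ⟨k0, rfl, rfl⟩),
          Relation.ReflTransGen.single (UPDA.Step.push (debt_mem M hq hm))⟩

lemma fwd_reaches (M : UPDA Q Γ) {cM cM'} (h : M.Reaches cM cM')
    {c} (hc : Rep M cM.1 cM.2.1 cM.2.2 c) :
    ∃ c', Rep M cM'.1 cM'.2.1 cM'.2.2 c' ∧ (auxM M).Reaches c c' := by
  induction h with
  | refl => exact ⟨c, hc, Relation.ReflTransGen.refl⟩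
  | @tail b c₂ hr hs ih =>
    obtain ⟨q1, k1, γ1⟩ := b
    obtain ⟨q2, k2, γ2⟩ := c₂
    obtain ⟨d, hd, hreach⟩ := ih
    obtain ⟨d', hd', hstep⟩ := fwd_step M hs hd
    exact ⟨d', hd', hreach.trans hstep⟩

/-- Any reachable no-debt configuration with at least one symbol read was,
at the time of its last read, entered by a read into a final state. -/
lemma inl_witness (M : UPDA Q Γ) {c}
    (h : (auxM M).Reaches (none, 0, [M.Z0]) c) :
    ∀ q k γ, c = (some (Sum.inl q), k, γ) → 1 ≤ k →
    ∃ (q' : St Q) (A : Γ) (γ' : List Γ) (p : St Q),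
      (auxM M).Reaches (none, 0, [M.Z0]) (q', k - 1, A :: γ') ∧
      PMove.readA p ∈ (auxM M).δ q' A ∧ p ∈ (auxM M).final := by
  induction h with
  | refl => intro q k γ hc hk; cases hc
  | @tail b c hr hs ih =>
    intro q k γ hc hk
    subst hc
    obtain ⟨s, nb, γb⟩ := b
    cases hs with
    | readA hm =>
      match s, hm, hr, ih with
      | none, hm, hr, ih =>
        obtain ⟨u, hu, hequ⟩ := hm
        cases u <;> simp [mapSync] at hequ
      | some (.inl q₂), hm, hr, ih =>
        obtain ⟨u, hu, hequ⟩ := hm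
        cases u <;> simp [mapSync] at hequ
      | some (.inr q₂), hm, hr, ih =>
        rcases hm with ⟨hq, hequ⟩ | ⟨hq, u, hu, hequ⟩
        · simp at hequ
          subst hequ
          exact ⟨some (.inr q), _, _, some (.inl q),
            by simpa [UPDA.Reaches] using hr, Or.inl ⟨hq, rfl⟩, Or.inl ⟨q, hq, rfl⟩⟩
        · cases u <;> simp [mapDebt] at hequ
    | readE hm =>
      match s, hm, hr, ih with
      | none, hm, hr, ih =>
        have hn0 := congrArg (fun c => c.2.1) (none_eq M hr rfl)
        simp at hn0
        omega
      | some (.inl q₂), hm, hr, ih =>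
        obtain ⟨u, hu, hequ⟩ := hm
        cases u <;> simp [mapSync] at hequ
        exact ih _ _ _ rfl hk
      | some (.inr q₂), hm, hr, ih =>
        rcases hm with ⟨hq, hequ⟩ | ⟨hq, u, hu, hequ⟩
        · cases hequ
        · cases u <;> simp [mapDebt] at hequ
    | pop hm =>
      match s, hm, hr, ih with
      | none, hm, hr, ih =>
        have hn0 := congrArg (fun c => c.2.1) (none_eq M hr rfl)
        simp at hn0
        omega
      | some (.inl q₂), hm, hr, ih =>
        obtain ⟨u, hu, hequ⟩ := hm
        cases u <;> simp [mapSync] at hequ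
        exact ih _ _ _ rfl hk
      | some (.inr q₂), hm, hr, ih =>
        rcases hm with ⟨hq, hequ⟩ | ⟨hq, u, hu, hequ⟩
        · cases hequ
        · cases u <;> simp [mapDebt] at hequ
    | push hm =>
      match s, hm, hr, ih with
      | none, hm, hr, ih =>
        have hn0 := congrArg (fun c => c.2.1) (none_eq M hr rfl)
        simp at hn0
        omega
      | some (.inl q₂), hm, hr, ih =>
        obtain ⟨u, hu, hequ⟩ := hm
        cases u <;> simp [mapSync] at hequ
        exact ih _ _ _ rfl hk
      | some (.inr q₂), hm, hr, ih =>
        rcases hm with ⟨hq, hequ⟩ | ⟨hq, u, hu, hequ⟩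
        · cases hequ
        · cases u <;> simp [mapDebt] at hequ

lemma auxM_accepts (M : UPDA Q Γ) (hnf : M.NormalForm) (k : ℕ) :
    (auxM M).Accepts k ↔ M.Accepts k := by
  constructor
  · rintro ⟨f, γ, hr, hf⟩
    rcases hf with ⟨q, hq, rfl⟩ | ⟨rfl, h0⟩
    · exact ⟨q, γ, bwd_reaches M hr, hq⟩
    · have hk0 : k = 0 := congrArg (fun c => c.2.1) (none_eq M hr rfl)
      rw [hk0]
      exact h0
  · rintro ⟨p, γ, hr, hp⟩
    have hrep : Rep M M.start 0 [M.Z0] ((none : St Q), 0, [M.Z0]) :=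
      Or.inr (Or.inl ⟨rfl, rfl, rfl, rfl⟩)
    obtain ⟨d, hd, hreach⟩ := fwd_reaches M hr hrep
    rcases hd with rfl | ⟨-, rfl, rfl, rfl⟩ | ⟨k0, rfl, rfl⟩
    · exact ⟨some (.inl p), γ, hreach, Or.inl ⟨p, hp, rfl⟩⟩
    · exact ⟨none, [M.Z0], hreach, Or.inr ⟨rfl, ⟨p, [M.Z0], hr, hp⟩⟩⟩
    · obtain ⟨δ1, hδ1⟩ := stack_bottom M hnf hr (δ₀ := []) rfl
      simp only at hδ1
      obtain ⟨A, γ₁, rfl⟩ : ∃ A γ₁, γ = A :: γ₁ := by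
        cases δ1 with
        | nil => exact ⟨M.Z0, [], by simpa using hδ1⟩
        | cons B l => exact ⟨B, l ++ [M.Z0], by simpa using hδ1⟩
      exact ⟨some (.inl p), A :: γ₁, hreach.tail (UPDA.Step.readA (pay_mem M hp)),
        Or.inl ⟨p, hp, rfl⟩⟩

lemma auxM_immediate (M : UPDA Q Γ) (k : ℕ) :
    (auxM M).Accepts k ↔
      ((k = 0 ∧ (auxM M).start ∈ (auxM M).final) ∨
        (1 ≤ k ∧ ∃ (q : St Q) (A : Γ) (γ : List Γ) (p : St Q),
          (auxM M).Reaches ((auxM M).start, 0, [(auxM M).Z0]) (q, k - 1, A :: γ) ∧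
          PMove.readA p ∈ (auxM M).δ q A ∧ p ∈ (auxM M).final)) := by
  constructor
  · rintro ⟨f, γ, hr, hf⟩
    rcases hf with ⟨q, hq, rfl⟩ | ⟨rfl, h0⟩
    · rcases Nat.eq_zero_or_pos k with rfl | hk
      · exact Or.inl ⟨rfl, Or.inr ⟨rfl, ⟨q, γ, bwd_reaches M hr, hq⟩⟩⟩
      · exact Or.inr ⟨hk, inl_witness M hr q k γ rfl hk⟩
    · have hk0 : k = 0 := congrArg (fun c => c.2.1) (none_eq M hr rfl)
      exact Or.inl ⟨hk0, Or.inr ⟨rfl, h0⟩⟩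
  · rintro (⟨rfl, hf⟩ | ⟨hk, q, A, γ, p, hr, hm, hp⟩)
    · exact ⟨(auxM M).start, [(auxM M).Z0], Relation.ReflTransGen.refl, hf⟩
    · refine ⟨p, A :: γ, ?_, hp⟩
      have h2 := hr.tail (UPDA.Step.readA hm)
      have hk1 : k - 1 + 1 = k := by omega
      rwa [hk1] at h2

end Stmt18

namespace Stmt18

open PMove

variable {Q Γ Q₁ Q₂ : Type*}

lemma relabel_normal (e : Q₁ ≃ Q₂) (M : UPDA Q₁ Γ) (h : M.NormalForm) :
    (relabel e M).NormalForm := by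
  constructor
  · rintro q A p ⟨u, hu, hequ⟩
    cases u <;> simp [pmap] at hequ
    obtain ⟨-, rfl⟩ := hequ
    exact h.1 _ _ _ hu
  · rintro q p ⟨u, hu, hequ⟩
    cases u <;> simp [pmap] at hequ
    exact h.2 _ _ hu

lemma relabel_det (e : Q₁ ≃ Q₂) (M : UPDA Q₁ Γ) (h : M.Deterministic) :
    (relabel e M).Deterministic := by
  rintro q A m₁ m₂ ⟨u₁, hu₁, rfl⟩ ⟨u₂, hu₂, rfl⟩
  rw [h _ _ _ _ hu₁ hu₂]

lemma relabel_accepts (e : Q₁ ≃ Q₂) (M : UPDA Q₁ Γ) (k : ℕ) :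
    (relabel e M).Accepts k ↔ M.Accepts k := by
  constructor
  · rintro ⟨p, γ, hr, hp⟩
    have h2 := relabel_reaches_bwd e M hr
    simp only [relabel, Equiv.symm_apply_apply] at h2
    obtain ⟨p₀, hp₀, rfl⟩ := hp
    rw [Equiv.symm_apply_apply] at h2
    exact ⟨p₀, γ, h2, hp₀⟩
  · rintro ⟨p, γ, hr, hp⟩
    exact ⟨e p, γ, relabel_reaches_fwd e M (c := (M.start, 0, [M.Z0])) (c' := (p, k, γ)) hr,
      ⟨p, hp, rfl⟩⟩

theorem stmt18_main {Q Γ : Type*} [Fintype Q] (M : UPDA Q Γ) (hnf : M.NormalForm)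
    (n : ℕ) (hn : Fintype.card Q = n) :
    ∃ (Q' : Type) (_ : Fintype Q') (M' : UPDA Q' Γ),
      Nat.card Q' = 2 * n + 1 ∧
      M'.NormalForm ∧
      (∀ k : ℕ, M'.Accepts k ↔ M.Accepts k) ∧
      (∀ k : ℕ, M'.Accepts k ↔
        ((k = 0 ∧ M'.start ∈ M'.final) ∨
          (1 ≤ k ∧ ∃ (q : Q') (A : Γ) (γ : List Γ) (p : Q'),
            M'.Reaches (M'.start, 0, [M'.Z0]) (q, k - 1, A :: γ) ∧
            PMove.readA p ∈ M'.δ q A ∧ p ∈ M'.final))) ∧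
      (M.Deterministic → M'.Deterministic) := by
  classical
  have hcard : Fintype.card (St Q) = 2 * n + 1 := by
    simp [St, Fintype.card_option, Fintype.card_sum, hn]
    omega
  let e : St Q ≃ Fin (2 * n + 1) := Fintype.equivFinOfCardEq hcard
  refine ⟨Fin (2 * n + 1), inferInstance, relabel e (auxM M), by simp, ?_, ?_, ?_, ?_⟩
  · exact relabel_normal e (auxM M) (auxM_normal M hnf)
  · intro k
    exact (relabel_accepts e (auxM M) k).trans (auxM_accepts M hnf k)
  · intro k
    rw [relabel_accepts e (auxM M) k, auxM_immediate M k]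
    constructor
    · rintro (⟨rfl, hf⟩ | ⟨hk, q, A, γ, p, hr, hm, hp⟩)
      · exact Or.inl ⟨rfl, ⟨(auxM M).start, hf, rfl⟩⟩
      · refine Or.inr ⟨hk, e q, A, γ, e p, ?_, ?_, ⟨p, hp, rfl⟩⟩
        · exact relabel_reaches_fwd e (auxM M)
            (c := ((auxM M).start, 0, [(auxM M).Z0])) (c' := (q, k - 1, A :: γ)) hr
        · exact ⟨.readA p, by rw [Equiv.symm_apply_apply]; exact hm, rfl⟩
    · rintro (⟨rfl, hf⟩ | ⟨hk, q, A, γ, p, hr, hm, hp⟩)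
      · refine Or.inl ⟨rfl, ?_⟩
        obtain ⟨p₀, hp₀, hep⟩ := hf
        rwa [← e.injective hep]
      · refine Or.inr ⟨hk, e.symm q, A, γ, e.symm p, ?_, ?_, ?_⟩
        · have h2 := relabel_reaches_bwd e (auxM M) hr
          simp only [relabel, Equiv.symm_apply_apply] at h2
          exact h2
        · obtain ⟨u, hu, hequ⟩ := hm
          cases u <;> simp [pmap] at hequ
          subst hequ
          rwa [Equiv.symm_apply_apply]
        · obtain ⟨p₀, hp₀, rfl⟩ := hp
          rwa [Equiv.symm_apply_apply]
  · intro hd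
    exact relabel_det e (auxM M) (auxM_det M hd)

end Stmt18

/-- for every unary pda `M` in normal form with `n` states,
accepting by final states, there is an equivalent pda `M'` in normal form with
`2n + 1` states and the same stack alphabet that accepts or rejects every input
immediately after reading its last symbol: `a^k` is accepted by `M'` iff either
`k = 0` and the start state of `M'` is final, or the state of `M'` entered by
the move reading the `k`-th (last) input symbol is final. Moreover, if `M` is
deterministic then so is `M'`. -/
theorem stmt_18 {Q Γ : Type*} [Fintype Q] (M : UPDA Q Γ) (hnf : M.NormalForm)
    (n : ℕ) (hn : Fintype.card Q = n) :
    ∃ (Q' : Type) (_ : Fintype Q') (M' : UPDA Q' Γ),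
      Nat.card Q' = 2 * n + 1 ∧
      M'.NormalForm ∧
      (∀ k : ℕ, M'.Accepts k ↔ M.Accepts k) ∧
      (∀ k : ℕ, M'.Accepts k ↔
        ((k = 0 ∧ M'.start ∈ M'.final) ∨
          (1 ≤ k ∧ ∃ (q : Q') (A : Γ) (γ : List Γ) (p : Q'),
            M'.Reaches (M'.start, 0, [M'.Z0]) (q, k - 1, A :: γ) ∧
            PMove.readA p ∈ M'.δ q A ∧ p ∈ M'.final))) ∧
      (M.Deterministic → M'.Deterministic) :=
  Stmt18.stmt18_main M hnf n hn
end
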